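/- arXiv:1210.0859 — 8 statements merged into one kernel-verified Lean document; each statement's English description precedes it below -/
import Mathlib

section
/- For all natural numbers d, l, m with d > 0 and 0 < l ≤ m, there exists a natural number n ≥ m such that for every coloring with d colors of the l-element subsets of {1,...,n}, there exists an m-element subset z of {1,...,n} such that all l-element subsets of z receive the same color. -/
/-- Every function to a finite type is ultrafilter-almost-everywhere constant. -/
lemma ramsey_ufiber {d : ℕ} (U : Ultrafilter ℕ) (f : ℕ → Fin d) :
    ∃ c : Fin d, {k | f k = c} ∈ U := by
  by_contra h
  push_neg at h
  have h1 : ∀ c : Fin d, {k | f k = c}ᶜ ∈ U := fun c =>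
    Ultrafilter.compl_mem_iff_notMem.mpr (h c)
  have h2 : (⋂ c : Fin d, {k | f k = c}ᶜ) ∈ U := Filter.iInter_mem.mpr h1
  have h3 : (⋂ c : Fin d, {k | f k = c}ᶜ) = ∅ := by
    ext k
    simp only [Set.mem_iInter, Set.mem_compl_iff, Set.mem_setOf_eq,
      Set.mem_empty_iff_false, iff_false, not_forall, not_not]
    exact ⟨f k, rfl⟩
  rw [h3] at h2
  exact (Filter.empty_notMem _) h2

/-- Infinite Ramsey theorem over ℕ. -/
theorem ramsey_infinite (d : ℕ) : ∀ (l : ℕ) (C : Finset ℕ → Fin d) (S : Set ℕ), S.Infinite →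
    ∃ T : Set ℕ, T ⊆ S ∧ T.Infinite ∧
      ∃ c : Fin d, ∀ s : Finset ℕ, ↑s ⊆ T → s.card = l → C s = c := by
  intro l
  induction l with
  | zero =>
    intro C S hS
    refine ⟨S, subset_rfl, hS, C ∅, fun s _ h0 => ?_⟩
    rw [Finset.card_eq_zero] at h0
    rw [h0]
  | succ l ih =>
    intro C S hS
    have key : ∀ S' : Set ℕ, S'.Infinite → ∃ T : Set ℕ,
        T ⊆ S' \ {sInf S'} ∧ T.Infinite ∧ ∃ c : Fin d,
          ∀ s : Finset ℕ, ↑s ⊆ T → s.card = l → C (insert (sInf S') s) = c := by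
      intro S' hS'
      exact ih (fun s => C (insert (sInf S') s)) (S' \ {sInf S'})
        (hS'.diff (Set.finite_singleton _))
    choose! F hF1 hF2 c hc using key
    set g : ℕ → Set ℕ := fun i => F^[i] S with hg
    have hgsucc : ∀ i, g (i + 1) = F (g i) := fun i => Function.iterate_succ_apply' F i S
    have hginf : ∀ i, (g i).Infinite := by
      intro i
      induction i with
      | zero => exact hS
      | succ i ih2 => rw [hgsucc]; exact hF2 _ ih2
    have hstep : ∀ i, g (i + 1) ⊆ g i \ {sInf (g i)} := fun i => by
      rw [hgsucc]; exact hF1 _ (hginf i)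
    have hchain : ∀ i j, i ≤ j → g j ⊆ g i := by
      intro i j hij
      induction hij with
      | refl => exact subset_rfl
      | step _ ih2 => exact (((hstep _).trans Set.diff_subset)).trans ih2
    set a : ℕ → ℕ := fun i => sInf (g i) with ha
    have hmem : ∀ i, a i ∈ g i := fun i => Nat.sInf_mem (hginf i).nonempty
    have hamono : StrictMono a := by
      intro i j hij
      have h2 : a j ∈ g i \ {a i} := hstep i (hchain (i + 1) j hij (hmem j))
      exact lt_of_le_of_ne (Nat.sInf_le h2.1) (Ne.symm h2.2)
    set cc : ℕ → Fin d := fun i => c (g i) (hginf i) with hcc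
    obtain ⟨c0, hc0⟩ := @Finite.exists_infinite_fiber ℕ (Fin d) _ (Finite.of_fintype _) cc
    have hI : {i : ℕ | cc i = c0}.Infinite := by
      rw [← Set.infinite_coe_iff]
      exact hc0
    refine ⟨a '' {i | cc i = c0}, ?_, ?_, c0, ?_⟩
    · rintro _ ⟨i, _, rfl⟩
      exact hchain 0 i (Nat.zero_le _) (hmem i)
    · exact hI.image hamono.injective.injOn
    · intro s hs hcard
      have hne : s.Nonempty := by
        rw [← Finset.card_pos, hcard]; exact Nat.succ_pos l
      set x := s.min' hne with hxdef
      have hx : x ∈ s := s.min'_mem hne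
      obtain ⟨i, hiI, hxa⟩ := hs hx
      have herase : ↑(s.erase x) ⊆ F (g i) := by
        rw [← hgsucc]
        intro y hy
        have hy' : y ∈ s.erase x := hy
        obtain ⟨j, _, hya⟩ := hs (Finset.mem_of_mem_erase hy')
        have hxy : x < y :=
          lt_of_le_of_ne (s.min'_le y (Finset.mem_of_mem_erase hy'))
            (Ne.symm (Finset.ne_of_mem_erase hy'))
        have hij : i < j := by
          rw [← hxa, ← hya] at hxy
          exact hamono.lt_iff_lt.mp hxy
        rw [← hya]
        exact hchain (i + 1) j hij (hmem j)
      have hcard' : (s.erase x).card = l := by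
        rw [Finset.card_erase_of_mem hx, hcard]
        rfl
      have hC := hc (g i) (hginf i) (s.erase x) herase hcard'
      have h5 : insert (a i) (s.erase x) = s := by
        rw [hxa]; exact Finset.insert_erase hx
      calc C s = C (insert (a i) (s.erase x)) := by rw [h5]
        _ = cc i := hC
        _ = c0 := hiI

/-- Classical finite Ramsey theorem: for `d > 0` and `0 < l ≤ m` there is `n ≥ m`
such that every `d`-coloring of the `l`-element subsets of an `n`-element set admits
an `m`-element subset all of whose `l`-element subsets get the same color. -/
theorem classical_ramsey (d l m : ℕ) (hd : 0 < d) (hl : 0 < l) (hlm : l ≤ m) :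
    ∃ n : ℕ, m ≤ n ∧ ∀ C : Finset (Fin n) → Fin d,
      ∃ z : Finset (Fin n), z.card = m ∧
        ∃ c : Fin d, ∀ s : Finset (Fin n), s ⊆ z → s.card = l → C s = c := by
  by_contra h
  push_neg at h
  have hbad : ∀ k : ℕ, ∃ C : Finset (Fin (m + k)) → Fin d,
      ∀ z : Finset (Fin (m + k)), z.card = m → ∀ c : Fin d,
        ∃ s : Finset (Fin (m + k)), s ⊆ z ∧ s.card = l ∧ C s ≠ c := by
    intro k
    obtain ⟨C, hC⟩ := h (m + k) (Nat.le_add_right m k)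
    exact ⟨C, hC⟩
  choose Cb hCb using hbad
  have hmk : ∀ k : ℕ, 0 < m + k := fun k =>
    lt_of_lt_of_le (lt_of_lt_of_le hl hlm) (Nat.le_add_right m k)
  set e : (k : ℕ) → ℕ → Fin (m + k) := fun k x => ⟨x % (m + k), Nat.mod_lt x (hmk k)⟩ with he
  set B : ℕ → Finset ℕ → Fin d := fun k s => Cb k (s.image (e k)) with hB
  set U : Ultrafilter ℕ := Filter.hyperfilter ℕ with hU
  choose Cc hCc using fun s : Finset ℕ => ramsey_ufiber U (fun k => B k s)
  obtain ⟨T, _, hTinf, c, hmono⟩ := ramsey_infinite d l Cc Set.univ Set.infinite_univ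
  obtain ⟨z0, hz0T, hz0card⟩ := hTinf.exists_subset_card_eq m
  have hbig : {k : ℕ | ∀ x ∈ z0, x < m + k} ∈ U := by
    apply Filter.hyperfilter_le_cofinite
    rw [Filter.mem_cofinite]
    apply Set.Finite.subset (Set.finite_le_nat (z0.sup id))
    intro k hk
    simp only [Set.mem_compl_iff, Set.mem_setOf_eq, not_forall, not_lt] at hk
    obtain ⟨x, hx1, hx2⟩ := hk
    have : x ≤ z0.sup id := Finset.le_sup (f := id) hx1
    show k ≤ z0.sup id
    omega
  have hker : (⋂ s ∈ z0.powersetCard l, {k : ℕ | B k s = c}) ∈ U := by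
    apply (Filter.biInter_finset_mem _).mpr
    intro s hs
    rw [Finset.mem_powersetCard] at hs
    have hCs : Cc s = c := hmono s (fun x hx => hz0T (hs.1 hx)) hs.2
    have := hCc s
    rw [hCs] at this
    exact this
  obtain ⟨k, hk⟩ := Filter.nonempty_of_mem (Filter.inter_mem hbig hker)
  obtain ⟨hk1, hk2⟩ := hk
  have hk2' : ∀ s ∈ z0.powersetCard l, B k s = c := by
    intro s hs
    exact Set.mem_iInter₂.mp hk2 s hs
  have hk1' : ∀ x ∈ z0, x < m + k := hk1
  have hinj : Set.InjOn (e k) ↑z0 := by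
    intro x hx y hy hxy
    have hv : x % (m + k) = y % (m + k) := congrArg Fin.val hxy
    rwa [Nat.mod_eq_of_lt (hk1' x hx), Nat.mod_eq_of_lt (hk1' y hy)] at hv
  have hz'card : (z0.image (e k)).card = m := by
    rw [Finset.card_image_of_injOn hinj, hz0card]
  obtain ⟨s', hs'z, hs'card, hs'ne⟩ := hCb k (z0.image (e k)) hz'card c
  obtain ⟨s0, hs0z, hs0img⟩ := Finset.subset_image_iff.mp hs'z
  have hs0card : s0.card = l := by
    have h6 := Finset.card_image_of_injOn (hinj.mono (Finset.coe_subset.mpr hs0z))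
    rw [hs0img, hs'card] at h6
    exact h6.symm
  have h7 : B k s0 = c := hk2' s0 (Finset.mem_powersetCard.mpr ⟨hs0z, hs0card⟩)
  apply hs'ne
  rw [← hs0img]
  exact h7
end

section
/- For all natural numbers d, l, m with d > 0 and 0 < l ≤ m, there exists n such that for every d-coloring of the set of strictly increasing injections from [l] to [n], there exists a strictly increasing injection a : [m] → [n] such that the set {a ∘ x : x a strictly increasing injection from [l] to [m]} is monochromatic. -/
/-- Key finite Ramsey lemma over `ℕ`: for every `d`-coloring of `l`-tuples of naturals,
any sufficiently large finite set contains a subset of size `k` on which the coloring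
of strictly increasing `l`-tuples is constant. -/
theorem ramsey_key (l : ℕ) : ∀ d k : ℕ, ∃ n : ℕ,
    ∀ (S : Finset ℕ) (C : (Fin l → ℕ) → Fin d), n ≤ S.card →
      ∃ T ⊆ S, k ≤ T.card ∧ ∃ c : Fin d,
        ∀ x : Fin l → ℕ, StrictMono x → (∀ i, x i ∈ T) → C x = c := by
  induction l with
  | zero =>
    intro d k
    refine ⟨k, fun S C hS => ⟨S, le_refl _, hS, C (fun i => i.elim0), ?_⟩⟩
    intro x _ _
    have : x = fun i => i.elim0 := funext fun i => i.elim0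
    rw [this]
  | succ l ih =>
    intro d k
    obtain ⟨R, hR⟩ := Classical.axiomOfChoice (ih d)
    -- N t : needed size to extract a pre-homogeneous sequence of length t
    set N : ℕ → ℕ := fun t => Nat.rec 0 (fun _ prev => R prev + 1) t with hN
    have main : ∀ (t : ℕ) (S : Finset ℕ) (C : (Fin (l+1) → ℕ) → Fin d), N t ≤ S.card →
        ∃ (xs : Fin t → ℕ) (cs : Fin t → Fin d), StrictMono xs ∧ (∀ i, xs i ∈ S) ∧
          ∀ (i : Fin t) (y : Fin (l+1) → ℕ), StrictMono y →
            (∀ j, ∃ i', xs i' = y j) → y 0 = xs i → C y = cs i := by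
      intro t
      induction t with
      | zero =>
        intro S C _
        exact ⟨Fin.elim0, Fin.elim0, fun a => a.elim0, fun i => i.elim0, fun i => i.elim0⟩
      | succ t iht =>
        intro S C hS
        have hSne : S.Nonempty := by
          rw [← Finset.card_pos]
          have : 0 < N (t+1) := Nat.succ_pos _
          omega
        set x0 := S.min' hSne with hx0
        have hx0S : x0 ∈ S := S.min'_mem hSne
        set S' := S.erase x0 with hS'
        have hS'card : R (N t) ≤ S'.card := by
          have := Finset.card_erase_of_mem hx0S
          have : S'.card = S.card - 1 := this
          have hsucc : N (t+1) = R (N t) + 1 := rfl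
          omega
        obtain ⟨T', hT'sub, hT'card, c0, hc0⟩ :=
          hR (N t) S' (fun z => C (Fin.cons x0 z)) hS'card
        obtain ⟨xs', cs', hxs'mono, hxs'mem, hpre'⟩ := iht T' C hT'card
        have hx0lt : ∀ i, x0 < xs' i := by
          intro i
          have h1 : xs' i ∈ S' := hT'sub (hxs'mem i)
          have h2 : xs' i ∈ S := Finset.mem_of_mem_erase h1
          have h3 : xs' i ≠ x0 := Finset.ne_of_mem_erase h1
          exact lt_of_le_of_ne (S.min'_le _ h2) (Ne.symm h3)
        refine ⟨Fin.cons x0 xs', Fin.cons c0 cs', ?_, ?_, ?_⟩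
        · intro a b hab
          rcases Fin.eq_zero_or_eq_succ b with rfl | ⟨b', rfl⟩
          · exact absurd hab (Fin.not_lt_zero a)
          rcases Fin.eq_zero_or_eq_succ a with rfl | ⟨a', rfl⟩
          · simpa using hx0lt b'
          · simpa using hxs'mono (by exact_mod_cast Fin.succ_lt_succ_iff.mp hab)
        · intro i
          rcases Fin.eq_zero_or_eq_succ i with rfl | ⟨i', rfl⟩
          · simpa using hx0S
          · simpa using Finset.mem_of_mem_erase (hT'sub (hxs'mem i'))
        · intro i y hy hrange hy0
          rcases Fin.eq_zero_or_eq_succ i with rfl | ⟨i', rfl⟩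
          · -- minimum is x0; use homogeneity of the induced coloring
            have hy0' : y 0 = x0 := by simpa using hy0
            have htail : ∀ j : Fin l, y j.succ ∈ T' := by
              intro j
              have hlt : x0 < y j.succ := by
                rw [← hy0']; exact hy (Fin.succ_pos j)
              obtain ⟨i', hi'⟩ := hrange j.succ
              rcases Fin.eq_zero_or_eq_succ i' with rfl | ⟨i'', rfl⟩
              · simp at hi'; omega
              · rw [← hi']; simpa using hxs'mem i''
            have hcons : Fin.cons x0 (Fin.tail y) = y := by
              rw [← hy0']; exact Fin.cons_self_tail y
            have := hc0 (Fin.tail y) (hy.comp Fin.strictMono_succ) htail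
            rw [hcons] at this
            simpa using this
          · -- minimum is in the tail sequence; use induction hypothesis
            have hy0' : y 0 = xs' i' := by simpa using hy0
            have hrange' : ∀ j, ∃ i'', xs' i'' = y j := by
              intro j
              have hle : y 0 ≤ y j := hy.monotone (Fin.zero_le j)
              have hgt : x0 < y j := lt_of_lt_of_le (hy0' ▸ hx0lt i') hle
              obtain ⟨i2, hi2⟩ := hrange j
              rcases Fin.eq_zero_or_eq_succ i2 with rfl | ⟨i3, rfl⟩
              · simp at hi2; omega
              · exact ⟨i3, by simpa using hi2⟩
            have := hpre' i' y hy hrange' hy0'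
            simpa using this
    refine ⟨N (d * (k - 1) + 1), fun S C hS => ?_⟩
    obtain ⟨xs, cs, hxsmono, hxsmem, hpre⟩ := main (d * (k - 1) + 1) S C hS
    have hpig : ∃ c ∈ (Finset.univ : Finset (Fin d)), (k - 1) <
        (Finset.univ.filter fun i => cs i = c).card := by
      apply Finset.exists_lt_card_fiber_of_mul_lt_card_of_maps_to
      · intro a _; exact Finset.mem_univ _
      · simp
    obtain ⟨c, -, hc⟩ := hpig
    refine ⟨(Finset.univ.filter fun i => cs i = c).image xs, ?_, ?_, c, ?_⟩
    · intro y hy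
      obtain ⟨i, -, rfl⟩ := Finset.mem_image.mp hy
      exact hxsmem i
    · rw [Finset.card_image_of_injective _ hxsmono.injective]; omega
    · intro x hx hmem
      obtain ⟨i, hi, hxi⟩ := Finset.mem_image.mp (hmem 0)
      have hrange : ∀ j, ∃ i', xs i' = x j := by
        intro j
        obtain ⟨i', -, hi'⟩ := Finset.mem_image.mp (hmem j)
        exact ⟨i', hi'⟩
      rw [hpre i x hx hrange hxi.symm]
      exact (Finset.mem_filter.mp hi).2

/-- The classical Ramsey theorem restated for strictly increasing injections:
for `d > 0` and `0 < l ≤ m` there is `n` such that every `d`-coloring of the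
strictly increasing injections `[l] → [n]` admits a strictly increasing injection
`a : [m] → [n]` with `{a ∘ x : x : [l] → [m] increasing}` monochromatic. -/
theorem ramsey_increasing_injections (d l m : ℕ) (hd : 0 < d) (hl : 0 < l) (hlm : l ≤ m) :
    ∃ n : ℕ, ∀ C : (Fin l → Fin n) → Fin d,
      ∃ a : Fin m → Fin n, StrictMono a ∧
        ∃ c : Fin d, ∀ x : Fin l → Fin m, StrictMono x → C (a ∘ x) = c := by
  obtain ⟨N, hN⟩ := ramsey_key l d m
  refine ⟨N + 1, fun C => ?_⟩
  have hpos : 0 < N + 1 := Nat.succ_pos N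
  obtain ⟨T, hTsub, hTcard, c, hc⟩ := hN (Finset.range (N + 1))
    (fun z => C (fun i => if h : z i < N + 1 then ⟨z i, h⟩ else ⟨0, hpos⟩))
    (by rw [Finset.card_range]; omega)
  obtain ⟨U, hUsub, hUcard⟩ := Finset.exists_subset_card_eq hTcard
  set e := U.orderEmbOfFin hUcard with he
  have hemem : ∀ i, (e i : ℕ) ∈ T := fun i => hUsub (U.orderEmbOfFin_mem hUcard i)
  have helt : ∀ i, (e i : ℕ) < N + 1 := fun i => Finset.mem_range.mp (hTsub (hemem i))
  refine ⟨fun i => ⟨e i, helt i⟩, fun a b hab => e.strictMono hab, c, fun x hx => ?_⟩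
  have key := hc (fun i => (e (x i) : ℕ))
    (fun a b hab => e.strictMono (hx hab)) (fun i => hemem (x i))
  have harr : (fun i => (⟨e (x i), helt (x i)⟩ : Fin (N + 1))) =
      (fun i => if h : (e (x i) : ℕ) < N + 1 then (⟨e (x i), h⟩ : Fin (N + 1))
        else ⟨0, hpos⟩) := funext fun i => by simp [helt (x i)]
  show C (fun i => (⟨e (x i), helt (x i)⟩ : Fin (N + 1))) = c
  rw [harr]
  exact key
end

section
/- Abstract Ramsey theorem: Let (A, X) be a normed background (with multiplication ·, action ., truncation ∂, and norm |·|), and let (𝓕, 𝓟, •, ∙) be a pair of families over (A, X) satisfying conditions (A), (B), and (*). Assume each P ∈ 𝓟 is finite and for each P ∈ 𝓟 there is t ∈ ℕ with ∂^t P a singleton. If (𝓕, 𝓟) satisfies the pigeonhole condition (P), then it satisfies the Ramsey condition (R). -/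
/-- A normed background `(A, X)`: a partial multiplication on `A` (given by a domain
predicate `mulDef` and a total function `mul`), a partial action of `A` on `X`
(given by `actDef` and `act`), a truncation `trunc : X → X` and a norm into a linear
order `D`, satisfying: associativity whenever both sides are defined; the action
commutes with truncation; and the norm monotonicity/domain condition. -/
structure NormedBackground (A X D : Type*) [LinearOrder D] where
  mulDef : A → A → Prop
  mul : A → A → A
  actDef : A → X → Prop
  act : A → X → X
  trunc : X → X
  norm : X → D
  act_assoc : ∀ a b x, actDef b x → actDef a (act b x) → mulDef a b → actDef (mul a b) x →
    act a (act b x) = act (mul a b) x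
  actDef_trunc : ∀ a x, actDef a x → actDef a (trunc x)
  act_trunc : ∀ a x, actDef a x → trunc (act a x) = act a (trunc x)
  norm_dom : ∀ a x y, norm x ≤ norm y → actDef a y → actDef a x
  norm_mono : ∀ a x y, norm x ≤ norm y → actDef a y → norm (act a x) ≤ norm (act a y)

namespace NormedBackground

variable {A X D : Type*} [LinearOrder D] (NB : NormedBackground A X D)

/-- `b` extends `a`: whenever `a.x` is defined, so is `b.x` and they agree. -/
def Ext (b a : A) : Prop := ∀ x, NB.actDef a x → NB.actDef b x ∧ NB.act b x = NB.act a x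

/-- The pointwise action `F . P` of a set on a set. -/
def actSet (F : Set A) (P : Set X) : Set X := {z | ∃ a ∈ F, ∃ x ∈ P, z = NB.act a x}

/-- `F . P` is defined: `a.x` is defined for all `a ∈ F`, `x ∈ P`. -/
def actSetDef (F : Set A) (P : Set X) : Prop := ∀ a ∈ F, ∀ x ∈ P, NB.actDef a x

/-- The pointwise product `F · G` of two sets. -/
def mulSet (F G : Set A) : Set A := {c | ∃ a ∈ F, ∃ b ∈ G, c = NB.mul a b}

/-- `F · G` is defined: `a · b` is defined for all `a ∈ F`, `b ∈ G`. -/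
def mulSetDef (F G : Set A) : Prop := ∀ a ∈ F, ∀ b ∈ G, NB.mulDef a b

end NormedBackground

/-- A pair of families `(𝓕, 𝓟, •, ∙)` over a normed background: families `Fam`, `Pam`
of non-empty subsets of `A`, `X` with partial operations `•` (encoded by the domain
predicate `bulDef`) and `∙` (encoded by `bullDef`) which, when defined, are given
pointwise by the action and multiplication and take values in `Pam`, `Fam`. -/
structure PairFam {A X D : Type*} [LinearOrder D] (NB : NormedBackground A X D) where
  Fam : Set (Set A)
  Pam : Set (Set X)
  fam_nonempty : ∀ F ∈ Fam, F.Nonempty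
  pam_nonempty : ∀ P ∈ Pam, P.Nonempty
  bulDef : Set A → Set X → Prop
  bullDef : Set A → Set A → Prop
  bulDef_mem : ∀ F P, bulDef F P → F ∈ Fam ∧ P ∈ Pam
  bul_pointwise : ∀ F P, bulDef F P → NB.actSetDef F P ∧ NB.actSet F P ∈ Pam
  bullDef_mem : ∀ F G, bullDef F G → F ∈ Fam ∧ G ∈ Fam
  bull_pointwise : ∀ F G, bullDef F G → NB.mulSetDef F G ∧ NB.mulSet F G ∈ Fam

namespace PairFam

variable {A X D : Type*} [LinearOrder D] {NB : NormedBackground A X D}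

/-- Condition (A): `𝓟` is closed under truncation. -/
def CondA (PF : PairFam NB) : Prop := ∀ P ∈ PF.Pam, NB.trunc '' P ∈ PF.Pam

/-- Condition (B): if `F • ∂P` is defined, then there is `G ∈ 𝓕` with `G • P` defined
and every element of `F` extended by an element of `G`. -/
def CondB (PF : PairFam NB) : Prop :=
  ∀ F P, F ∈ PF.Fam → P ∈ PF.Pam → PF.bulDef F (NB.trunc '' P) →
    ∃ G ∈ PF.Fam, PF.bulDef G P ∧ ∀ f ∈ F, ∃ g ∈ G, NB.Ext g f

/-- Condition (*): if `F • (G • P)` is defined, then `(F ∙ G) • P` is defined. -/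
def CondStar (PF : PairFam NB) : Prop :=
  ∀ F G P, PF.bulDef G P → PF.bulDef F (NB.actSet G P) →
    PF.bullDef F G ∧ PF.bulDef (NB.mulSet F G) P

/-- The pigeonhole condition (P). -/
def CondP (PF : PairFam NB) : Prop :=
  ∀ d : ℕ, 0 < d → ∀ P ∈ PF.Pam, ∀ y ∈ NB.trunc '' P,
    ∃ F ∈ PF.Fam, ∃ a : A, PF.bulDef F P ∧ NB.actDef a y ∧
      ∀ C : X → Fin d, ∃ f ∈ F, NB.Ext f a ∧
        ∃ c : Fin d, ∀ x ∈ P, NB.trunc x = y → C (NB.act f x) = c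

/-- The strengthened pigeonhole condition (P+). -/
def CondPplus (PF : PairFam NB) : Prop :=
  ∀ d : ℕ, 0 < d → ∀ t : ℕ, ∀ P ∈ PF.Pam, ∀ x ∈ NB.trunc^[t + 1] '' P,
    ∃ F ∈ PF.Fam, ∃ a : A, PF.bulDef F P ∧ NB.actDef a x ∧
      ∀ C : X → Fin d, ∃ f ∈ F, NB.Ext f a ∧
        ∃ c : Fin d, ∀ z ∈ NB.trunc^[t] '' P, NB.trunc z = x → C (NB.act f z) = c

/-- The Ramsey condition (R). -/
def CondR (PF : PairFam NB) : Prop :=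
  ∀ d : ℕ, 0 < d → ∀ P ∈ PF.Pam,
    ∃ F ∈ PF.Fam, PF.bulDef F P ∧
      ∀ C : X → Fin d, ∃ f ∈ F,
        ∃ c : Fin d, ∀ x ∈ P, C (NB.act f x) = c

end PairFam

section AuxRamsey

open PairFam

variable {A X D : Type*} [LinearOrder D] {NB : NormedBackground A X D}

/-- From condition (P) alone one gets, for each `R ∈ 𝓟`, some family acting on `R`. -/
lemma exists_bulDef_aux (PF : PairFam NB) (hP : CondP PF) (d : ℕ) (hd : 0 < d)
    (R : Set X) (hR : R ∈ PF.Pam) : ∃ F ∈ PF.Fam, PF.bulDef F R := by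
  obtain ⟨r, hr⟩ := PF.pam_nonempty R hR
  obtain ⟨F, hF, a, hbul, -, -⟩ := hP d hd R hR (NB.trunc r) ⟨r, hr, rfl⟩
  exact ⟨F, hF, hbul⟩

/-- The chain lemma: iterating the pigeonhole condition (and composing via `(*)`),
one finds a single family merging, for any coloring, the color within every
truncation fiber of `R` over a finite set `S` of base points. -/
lemma chain_aux (PF : PairFam NB) (hStar : CondStar PF) (hP : CondP PF)
    (d : ℕ) (hd : 0 < d) :
    ∀ m : ℕ, ∀ R ∈ PF.Pam, ∀ S : Set X, S ⊆ NB.trunc '' R → S.Finite → S.ncard ≤ m →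
      ∃ F ∈ PF.Fam, PF.bulDef F R ∧
        ∀ C : X → Fin d, ∃ φ ∈ F, ∀ y ∈ S, ∃ c : Fin d,
          ∀ z ∈ R, NB.trunc z = y → C (NB.act φ z) = c := by
  have empty_case : ∀ R ∈ PF.Pam, ∀ S : Set X, S = ∅ →
      ∃ F ∈ PF.Fam, PF.bulDef F R ∧
        ∀ C : X → Fin d, ∃ φ ∈ F, ∀ y ∈ S, ∃ c : Fin d,
          ∀ z ∈ R, NB.trunc z = y → C (NB.act φ z) = c := by
    intro R hR S hS
    obtain ⟨F, hF, hbul⟩ := exists_bulDef_aux PF hP d hd R hR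
    obtain ⟨φ, hφ⟩ := PF.fam_nonempty F hF
    exact ⟨F, hF, hbul, fun C => ⟨φ, hφ, fun y hy => by simp [hS] at hy⟩⟩
  intro m
  induction m with
  | zero =>
      intro R hR S hS hfinS hcard
      exact empty_case R hR S ((Set.ncard_eq_zero hfinS).mp (Nat.le_zero.mp hcard))
  | succ m ih =>
      intro R hR S hS hfinS hcard
      rcases S.eq_empty_or_nonempty with hSe | hSne
      · exact empty_case R hR S hSe
      -- pick a point of maximal norm
      obtain ⟨x, hxS, hxmax'⟩ := Set.Finite.exists_maximalFor NB.norm S hfinS hSne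
      have hxmax : ∀ y ∈ S, NB.norm y ≤ NB.norm x := by
        intro y hy
        rcases le_total (NB.norm y) (NB.norm x) with h | h
        · exact h
        · exact hxmax' hy h
      obtain ⟨H, hHfam, a, hHbul, haDef, hHcol⟩ := hP d hd R hR x (hS hxS)
      have hHact : NB.actSetDef H R := (PF.bul_pointwise H R hHbul).1
      have hadefS : ∀ y ∈ S, NB.actDef a y := fun y hy =>
        NB.norm_dom a y x (hxmax y hy) haDef
      -- an element of H extending a
      obtain ⟨h₀, hh₀H, hh₀ext, -⟩ := hHcol (fun _ => ⟨0, hd⟩)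
      set R' := NB.actSet H R with hR'def
      have hR' : R' ∈ PF.Pam := (PF.bul_pointwise H R hHbul).2
      set S' := NB.act a '' (S \ {x}) with hS'def
      have hS' : S' ⊆ NB.trunc '' R' := by
        rintro - ⟨y, ⟨hyS, -⟩, rfl⟩
        obtain ⟨r, hr, hry⟩ := hS hyS
        refine ⟨NB.act h₀ r, ⟨h₀, hh₀H, r, hr, rfl⟩, ?_⟩
        rw [NB.act_trunc h₀ r (hHact h₀ hh₀H r hr), hry,
          (hh₀ext y (hadefS y hyS)).2]
      have hfinS' : S'.Finite := (hfinS.diff (t := {x})).image _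
      have hcard' : S'.ncard ≤ m := by
        have h1 : S'.ncard ≤ (S \ {x}).ncard := Set.ncard_image_le (hfinS.diff (t := {x}))
        have h2 : (S \ {x}).ncard + 1 = S.ncard :=
          Set.ncard_diff_singleton_add_one hxS hfinS
        omega
      obtain ⟨F', hF'fam, hF'bul, hF'col⟩ := ih R' hR' S' hS' hfinS' hcard'
      obtain ⟨hbull, hFbul⟩ := hStar F' H R hHbul hF'bul
      have hmulD := (PF.bull_pointwise F' H hbull).1
      have hFfam := (PF.bull_pointwise F' H hbull).2
      have hF'act : NB.actSetDef F' R' := (PF.bul_pointwise F' R' hF'bul).1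
      have hFact : NB.actSetDef (NB.mulSet F' H) R :=
        (PF.bul_pointwise _ R hFbul).1
      refine ⟨NB.mulSet F' H, hFfam, hFbul, ?_⟩
      intro C
      obtain ⟨φ', hφ'F', hφ'col⟩ := hF'col C
      obtain ⟨h, hhH, hhext, c₀, hc₀⟩ := hHcol (fun v => C (NB.act φ' v))
      have hφmem : NB.mul φ' h ∈ NB.mulSet F' H := ⟨φ', hφ'F', h, hhH, rfl⟩
      have keyeq : ∀ z ∈ R, NB.act (NB.mul φ' h) z = NB.act φ' (NB.act h z) := by
        intro z hz
        exact (NB.act_assoc φ' h z (hHact h hhH z hz)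
          (hF'act φ' hφ'F' _ ⟨h, hhH, z, hz, rfl⟩)
          (hmulD φ' hφ'F' h hhH) (hFact _ hφmem z hz)).symm
      refine ⟨NB.mul φ' h, hφmem, ?_⟩
      intro y hyS
      by_cases hyx : y = x
      · refine ⟨c₀, fun z hz hzy => ?_⟩
        rw [keyeq z hz]
        exact hc₀ z hz (hzy.trans hyx)
      · have hy'S' : NB.act a y ∈ S' := ⟨y, ⟨hyS, hyx⟩, rfl⟩
        obtain ⟨c, hc⟩ := hφ'col (NB.act a y) hy'S'
        refine ⟨c, fun z hz hzy => ?_⟩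
        rw [keyeq z hz]
        refine hc (NB.act h z) ⟨h, hhH, z, hz, rfl⟩ ?_
        rw [NB.act_trunc h z (hHact h hhH z hz), hzy,
          (hhext y (hadefS y hyS)).2]

end AuxRamsey

open PairFam in
/-- Abstract Ramsey theorem: for a pair of families over a normed background
satisfying (A), (B) and (*), with every `P ∈ 𝓟` finite and some iterated truncation
of each `P ∈ 𝓟` a singleton, the pigeonhole condition (P) implies the Ramsey
condition (R). -/
theorem abstract_ramsey {A X D : Type*} [LinearOrder D] {NB : NormedBackground A X D}
    (PF : PairFam NB) (hA : CondA PF) (hB : CondB PF) (hStar : CondStar PF)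
    (hfin : ∀ P ∈ PF.Pam, P.Finite)
    (hsing : ∀ P ∈ PF.Pam, ∃ t : ℕ, ∃ z : X, NB.trunc^[t] '' P = {z})
    (hP : CondP PF) : CondR PF := by
  classical
  intro d hd P hPmem
  obtain ⟨t, z, htz⟩ := hsing P hPmem
  clear htz  -- we re-obtain it inside the induction via the generalized statement
  suffices H : ∀ n : ℕ, ∀ t ≤ n, ∀ P ∈ PF.Pam, (∃ z : X, NB.trunc^[t] '' P = {z}) →
      ∃ F ∈ PF.Fam, PF.bulDef F P ∧
        ∀ C : X → Fin d, ∃ f ∈ F, ∃ c : Fin d, ∀ x ∈ P, C (NB.act f x) = c by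
    obtain ⟨t, z, htz⟩ := hsing P hPmem
    exact H t t le_rfl P hPmem ⟨z, htz⟩
  have singleton_case : ∀ P ∈ PF.Pam, (∃ z : X, P = {z}) →
      ∃ F ∈ PF.Fam, PF.bulDef F P ∧
        ∀ C : X → Fin d, ∃ f ∈ F, ∃ c : Fin d, ∀ x ∈ P, C (NB.act f x) = c := by
    rintro P hPm ⟨z, rfl⟩
    obtain ⟨F, hF, hbul⟩ := exists_bulDef_aux PF hP d hd {z} hPm
    obtain ⟨f, hf⟩ := PF.fam_nonempty F hF
    refine ⟨F, hF, hbul, fun C => ⟨f, hf, C (NB.act f z), ?_⟩⟩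
    rintro x rfl
    rfl
  intro n
  induction n with
  | zero =>
      intro t ht P hPm hz
      obtain rfl : t = 0 := Nat.le_zero.mp ht
      simp only [Function.iterate_zero, Set.image_id] at hz
      exact singleton_case P hPm hz
  | succ n ih =>
      intro t ht P hPm hz
      match t, ht with
      | 0, _ =>
          simp only [Function.iterate_zero, Set.image_id] at hz
          exact singleton_case P hPm hz
      | (t' + 1), ht =>
          obtain ⟨z, hz⟩ := hz
          rw [Function.iterate_succ, Set.image_comp] at hz
          have hQ : NB.trunc '' P ∈ PF.Pam := hA P hPm
          obtain ⟨G₀, hG₀fam, hG₀bul, hG₀col⟩ :=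
            ih t' (Nat.succ_le_succ_iff.mp ht) (NB.trunc '' P) hQ ⟨z, hz⟩
          obtain ⟨G, hGfam, hGbul, hGext⟩ := hB G₀ P hG₀fam hPm hG₀bul
          have hGact : NB.actSetDef G P := (PF.bul_pointwise G P hGbul).1
          have hP₀mem : NB.actSet G P ∈ PF.Pam := (PF.bul_pointwise G P hGbul).2
          set P₀ := NB.actSet G P with hP₀def
          obtain ⟨Fc, hFcfam, hFcbul, hFccol⟩ :=
            chain_aux PF hStar hP d hd (NB.trunc '' P₀).ncard P₀ hP₀mem
              (NB.trunc '' P₀) subset_rfl ((hfin P₀ hP₀mem).image _) le_rfl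
          obtain ⟨hbull, hFbul⟩ := hStar Fc G P hGbul hFcbul
          have hmulD := (PF.bull_pointwise Fc G hbull).1
          have hFfam := (PF.bull_pointwise Fc G hbull).2
          have hFcact : NB.actSetDef Fc P₀ := (PF.bul_pointwise Fc P₀ hFcbul).1
          have hFact : NB.actSetDef (NB.mulSet Fc G) P := (PF.bul_pointwise _ P hFbul).1
          have hG₀act : NB.actSetDef G₀ (NB.trunc '' P) :=
            (PF.bul_pointwise G₀ _ hG₀bul).1
          refine ⟨NB.mulSet Fc G, hFfam, hFbul, ?_⟩
          intro C
          obtain ⟨φ, hφF, hφcol⟩ := hFccol C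
          -- the induced coloring on truncations
          set Chat : X → Fin d := fun y =>
            if h : ∃ u, u ∈ P₀ ∧ NB.trunc u = y then C (NB.act φ h.choose) else C y
            with hChat
          have hChatspec : ∀ u ∈ P₀, C (NB.act φ u) = Chat (NB.trunc u) := by
            intro u hu
            have hex : ∃ v, v ∈ P₀ ∧ NB.trunc v = NB.trunc u := ⟨u, hu, rfl⟩
            obtain ⟨c, hc⟩ := hφcol (NB.trunc u) ⟨u, hu, rfl⟩
            rw [hChat]
            simp only [dif_pos hex]
            rw [hc u hu rfl, hc hex.choose hex.choose_spec.1 hex.choose_spec.2]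
          obtain ⟨g₀, hg₀, c₁, hc₁⟩ := hG₀col Chat
          obtain ⟨g, hgG, hgext⟩ := hGext g₀ hg₀
          have hfmem : NB.mul φ g ∈ NB.mulSet Fc G := ⟨φ, hφF, g, hgG, rfl⟩
          refine ⟨NB.mul φ g, hfmem, c₁, ?_⟩
          intro x hx
          have hgx : NB.actDef g x := hGact g hgG x hx
          have hu : NB.act g x ∈ P₀ := ⟨g, hgG, x, hx, rfl⟩
          have heq : NB.act (NB.mul φ g) x = NB.act φ (NB.act g x) :=
            (NB.act_assoc φ g x hgx (hFcact φ hφF _ hu)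
              (hmulD φ hφF g hgG) (hFact _ hfmem x hx)).symm
          rw [heq, hChatspec _ hu]
          have htr : NB.trunc (NB.act g x) = NB.act g₀ (NB.trunc x) := by
            rw [NB.act_trunc g x hgx,
              (hgext (NB.trunc x) (hG₀act g₀ hg₀ _ ⟨x, hx, rfl⟩)).2]
          rw [htr]
          exact hc₁ (NB.trunc x) ⟨x, hx, rfl⟩
end

section
/- Abstract Ramsey theorem without conditions (A) and (B): Let (A, X) be a normed background and (𝓕, 𝓟, •, ∙) a pair of families over it satisfying condition (*). Assume each P ∈ 𝓟 is finite and for each P there is t with ∂^t P a singleton. If (𝓕, 𝓟) satisfies condition (P+), then it satisfies (R). -/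
section Aux
open PairFam

variable {A X D : Type*} [LinearOrder D] {NB : NormedBackground A X D}

lemma NB_actDef_trunc_iter (f : A) (y : X) (h : NB.actDef f y) (n : ℕ) :
    NB.actDef f (NB.trunc^[n] y) := by
  induction n with
  | zero => simpa using h
  | succ n ih => rw [Function.iterate_succ_apply']; exact NB.actDef_trunc _ _ ih

lemma NB_act_trunc_iter (f : A) (y : X) (h : NB.actDef f y) (n : ℕ) :
    NB.trunc^[n] (NB.act f y) = NB.act f (NB.trunc^[n] y) := by
  induction n with
  | zero => simp
  | succ n ih =>
      rw [Function.iterate_succ_apply', Function.iterate_succ_apply', ih,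
        NB.act_trunc f _ (NB_actDef_trunc_iter f y h n)]

lemma NB_exists_sorted_list (S : Finset X) :
    ∃ l : List X, (∀ x ∈ S, x ∈ l) ∧ (∀ x ∈ l, x ∈ S) ∧
      l.Pairwise (fun u v => NB.norm v ≤ NB.norm u) := by
  classical
  induction S using Finset.strongInduction with
  | _ S ih =>
    rcases S.eq_empty_or_nonempty with rfl | hS
    · exact ⟨[], by simp, by simp, List.Pairwise.nil⟩
    · obtain ⟨b, hb, hmax⟩ := S.exists_max_image NB.norm hS
      obtain ⟨l, h1, h2, h3⟩ := ih (S.erase b) (Finset.erase_ssubset hb)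
      refine ⟨b :: l, ?_, ?_, ?_⟩
      · intro x hx
        by_cases hxb : x = b
        · simp [hxb]
        · exact List.mem_cons_of_mem _ (h1 x (Finset.mem_erase.mpr ⟨hxb, hx⟩))
      · intro x hx
        rcases List.mem_cons.mp hx with rfl | hx
        · exact hb
        · exact Finset.mem_of_mem_erase (h2 x hx)
      · exact List.Pairwise.cons (fun v hv => hmax v (Finset.mem_of_mem_erase (h2 v hv))) h3

end Aux


section Main
open PairFam

variable {A X D : Type*} [LinearOrder D] {NB : NormedBackground A X D}

lemma PF_steps (PF : PairFam NB) (hStar : CondStar PF) (hPplus : CondPplus PF)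
    (d : ℕ) (hd : 0 < d) (s : ℕ) :
    ∀ l : List X, ∀ Q ∈ PF.Pam, (∀ z ∈ l, z ∈ NB.trunc^[s + 1] '' Q) →
      l.Pairwise (fun u v => NB.norm v ≤ NB.norm u) →
      ∃ B ∈ PF.Fam, PF.bulDef B Q ∧ ∀ C : X → Fin d, ∃ β ∈ B,
        ∀ z ∈ l, ∃ c : Fin d, ∀ u ∈ NB.trunc^[s] '' Q, NB.trunc u = z →
          C (NB.act β u) = c := by
  suffices h : ∀ n : ℕ, ∀ l : List X, l.length ≤ n → ∀ Q ∈ PF.Pam,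
      (∀ z ∈ l, z ∈ NB.trunc^[s + 1] '' Q) →
      l.Pairwise (fun u v => NB.norm v ≤ NB.norm u) →
      ∃ B ∈ PF.Fam, PF.bulDef B Q ∧ ∀ C : X → Fin d, ∃ β ∈ B,
        ∀ z ∈ l, ∃ c : Fin d, ∀ u ∈ NB.trunc^[s] '' Q, NB.trunc u = z →
          C (NB.act β u) = c by
    exact fun l => h l.length l le_rfl
  intro n
  induction n with
  | zero =>
      intro l hl Q hQ _ _
      have hlnil : l = [] := List.eq_nil_of_length_eq_zero (Nat.le_zero.mp hl)
      subst hlnil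
      obtain ⟨y, hy⟩ := PF.pam_nonempty Q hQ
      obtain ⟨F, hF, a, hbul, -, -⟩ :=
        hPplus d hd 0 Q hQ (NB.trunc^[0 + 1] y) ⟨y, hy, rfl⟩
      refine ⟨F, hF, hbul, fun C => ?_⟩
      obtain ⟨f, hf⟩ := PF.fam_nonempty F hF
      exact ⟨f, hf, by simp⟩
  | succ n ih =>
      intro l hl Q hQ hmem hsorted
      match l, hmem, hsorted, hl with
      | [], _, _, _ =>
        obtain ⟨y, hy⟩ := PF.pam_nonempty Q hQ
        obtain ⟨F, hF, a, hbul, -, -⟩ :=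
          hPplus d hd 0 Q hQ (NB.trunc^[0 + 1] y) ⟨y, hy, rfl⟩
        refine ⟨F, hF, hbul, fun C => ?_⟩
        obtain ⟨f, hf⟩ := PF.fam_nonempty F hF
        exact ⟨f, hf, by simp⟩
      | z :: l', hmem, hsorted, hl => ?_
      have hz : z ∈ NB.trunc^[s + 1] '' Q := hmem z List.mem_cons_self
      obtain ⟨F, hF, a, hbulF, haz, hpropF⟩ := hPplus d hd s Q hQ z hz
      have hFQdef : NB.actSetDef F Q := (PF.bul_pointwise F Q hbulF).1
      have hQ'Pam : NB.actSet F Q ∈ PF.Pam := (PF.bul_pointwise F Q hbulF).2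
      obtain ⟨fstar, hfstar, hext_fstar, -⟩ := hpropF (fun _ => ⟨0, hd⟩)
      have hnorm_le : ∀ z' ∈ l', NB.norm z' ≤ NB.norm z :=
        fun z' hz' => (List.pairwise_cons.mp hsorted).1 z' hz'
      have hadef : ∀ z' ∈ l', NB.actDef a z' :=
        fun z' hz' => NB.norm_dom a z' z (hnorm_le z' hz') haz
      have hmem' : ∀ w ∈ l'.map (NB.act a), w ∈ NB.trunc^[s + 1] '' NB.actSet F Q := by
        intro w hw
        obtain ⟨z', hz', rfl⟩ := List.mem_map.mp hw
        obtain ⟨y, hyQ, hyz⟩ := hmem z' (List.mem_cons_of_mem _ hz')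
        have hfy : NB.actDef fstar y := hFQdef fstar hfstar y hyQ
        refine ⟨NB.act fstar y, ⟨fstar, hfstar, y, hyQ, rfl⟩, ?_⟩
        rw [NB_act_trunc_iter fstar y hfy, hyz, (hext_fstar z' (hadef z' hz')).2]
      have hsorted' : (l'.map (NB.act a)).Pairwise (fun u v => NB.norm v ≤ NB.norm u) := by
        rw [List.pairwise_map]
        exact List.Pairwise.imp_of_mem
          (fun {u} {v} hu hv h => NB.norm_mono a v u h (hadef u hu))
          (List.pairwise_cons.mp hsorted).2
      obtain ⟨B', hB', hbulB', hpropB'⟩ := ih (l'.map (NB.act a))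
        (by simpa using hl) (NB.actSet F Q) hQ'Pam hmem' hsorted'
      have hcomp := hStar B' F Q hbulF hbulB'
      refine ⟨NB.mulSet B' F, (PF.bulDef_mem _ Q hcomp.2).1, hcomp.2, ?_⟩
      intro C
      obtain ⟨β', hβ', hpropβ'⟩ := hpropB' C
      obtain ⟨f, hf, hext, c0, hc0⟩ := hpropF (fun x => C (NB.act β' x))
      have hB'Q'def : NB.actSetDef B' (NB.actSet F Q) :=
        (PF.bul_pointwise B' _ hbulB').1
      have hmulDef : NB.mulSetDef B' F := (PF.bull_pointwise B' F hcomp.1).1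
      have hBQdef : NB.actSetDef (NB.mulSet B' F) Q := (PF.bul_pointwise _ Q hcomp.2).1
      have hact : ∀ u ∈ NB.trunc^[s] '' Q,
          NB.act (NB.mul β' f) u = NB.act β' (NB.act f u) := by
        rintro u ⟨y, hyQ, rfl⟩
        have hfy : NB.actDef f y := hFQdef f hf y hyQ
        have h1 : NB.actDef f (NB.trunc^[s] y) := NB_actDef_trunc_iter f y hfy s
        have h2 : NB.actDef β' (NB.act f (NB.trunc^[s] y)) := by
          rw [← NB_act_trunc_iter f y hfy s]
          exact NB_actDef_trunc_iter β' _ (hB'Q'def β' hβ' _ ⟨f, hf, y, hyQ, rfl⟩) s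
        exact (NB.act_assoc β' f _ h1 h2 (hmulDef β' hβ' f hf)
          (NB_actDef_trunc_iter _ _ (hBQdef _ ⟨β', hβ', f, hf, rfl⟩ y hyQ) s)).symm
      refine ⟨NB.mul β' f, ⟨β', hβ', f, hf, rfl⟩, ?_⟩
      intro w hw
      rcases List.mem_cons.mp hw with rfl | hw'
      · refine ⟨c0, fun u hu hu2 => ?_⟩
        rw [hact u hu]; exact hc0 u hu hu2
      · obtain ⟨c, hc⟩ := hpropβ' (NB.act a w) (List.mem_map_of_mem hw')
        refine ⟨c, fun u hu hu2 => ?_⟩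
        obtain ⟨y, hyQ, rfl⟩ := hu
        have hfy : NB.actDef f y := hFQdef f hf y hyQ
        have hfu_mem : NB.act f (NB.trunc^[s] y) ∈ NB.trunc^[s] '' NB.actSet F Q := by
          rw [← NB_act_trunc_iter f y hfy s]
          exact ⟨NB.act f y, ⟨f, hf, y, hyQ, rfl⟩, rfl⟩
        have htr : NB.trunc (NB.act f (NB.trunc^[s] y)) = NB.act a w := by
          rw [NB.act_trunc f _ (NB_actDef_trunc_iter f y hfy s), hu2,
            (hext w (hadef w hw')).2]
        rw [hact _ ⟨y, hyQ, rfl⟩]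
        exact hc _ hfu_mem htr

end Main

section Main2
open PairFam

variable {A X D : Type*} [LinearOrder D] {NB : NormedBackground A X D}

lemma PF_mono (PF : PairFam NB) (hStar : CondStar PF)
    (hfin : ∀ P ∈ PF.Pam, P.Finite) (hPplus : CondPplus PF)
    (d : ℕ) (hd : 0 < d) :
    ∀ k s : ℕ, ∀ P ∈ PF.Pam, (∃ z : X, NB.trunc^[s + k] '' P = {z}) →
      ∃ F ∈ PF.Fam, PF.bulDef F P ∧ ∀ C : X → Fin d, ∃ f ∈ F, ∃ c : Fin d,
        ∀ u ∈ NB.trunc^[s] '' P, C (NB.act f u) = c := by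
  intro k
  induction k with
  | zero =>
      intro s P hP hsg
      obtain ⟨z, hz⟩ := hsg
      obtain ⟨y, hy⟩ := PF.pam_nonempty P hP
      obtain ⟨F, hF, a, hbul, -, -⟩ :=
        hPplus d hd 0 P hP (NB.trunc^[0 + 1] y) ⟨y, hy, rfl⟩
      refine ⟨F, hF, hbul, fun C => ?_⟩
      obtain ⟨f, hf⟩ := PF.fam_nonempty F hF
      refine ⟨f, hf, C (NB.act f z), fun u hu => ?_⟩
      have : u ∈ NB.trunc^[s] '' P := hu
      rw [Nat.add_zero] at hz
      rw [hz] at this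
      rw [Set.mem_singleton_iff.mp this]
  | succ k ih =>
      intro s P hP hsg
      obtain ⟨z0, hz0⟩ := hsg
      have hIH : ∃ H ∈ PF.Fam, PF.bulDef H P ∧ ∀ C : X → Fin d, ∃ h ∈ H, ∃ c : Fin d,
          ∀ w ∈ NB.trunc^[s + 1] '' P, C (NB.act h w) = c := by
        refine ih (s + 1) P hP ⟨z0, ?_⟩
        rw [show s + 1 + k = s + (k + 1) by omega]
        exact hz0
      obtain ⟨H, hH, hbulH, hpropH⟩ := hIH
      have hHPdef : NB.actSetDef H P := (PF.bul_pointwise H P hbulH).1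
      have hQPam : NB.actSet H P ∈ PF.Pam := (PF.bul_pointwise H P hbulH).2
      have hZfin : (NB.trunc^[s + 1] '' NB.actSet H P).Finite :=
        (hfin _ hQPam).image _
      obtain ⟨l, hl1, hl2, hl3⟩ := NB_exists_sorted_list (NB := NB) hZfin.toFinset
      have hlmem : ∀ z ∈ l, z ∈ NB.trunc^[s + 1] '' NB.actSet H P :=
        fun z hz => hZfin.mem_toFinset.mp (hl2 z hz)
      obtain ⟨B, hB, hbulB, hpropB⟩ :=
        PF_steps PF hStar hPplus d hd s l (NB.actSet H P) hQPam hlmem hl3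
      have hcomp := hStar B H P hbulH hbulB
      have hBQdef : NB.actSetDef B (NB.actSet H P) := (PF.bul_pointwise B _ hbulB).1
      refine ⟨NB.mulSet B H, (PF.bulDef_mem _ P hcomp.2).1, hcomp.2, ?_⟩
      intro C
      classical
      obtain ⟨β, hβ, hpropβ⟩ := hpropB C
      set ψ : X → Fin d := fun v =>
        if hv : ∃ c : Fin d, ∀ u ∈ NB.trunc^[s] '' NB.actSet H P,
            NB.trunc u = v → C (NB.act β u) = c
        then hv.choose else ⟨0, hd⟩ with hψdef
      obtain ⟨h, hh, chat, hpropc⟩ := hpropH ψ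
      refine ⟨NB.mul β h, ⟨β, hβ, h, hh, rfl⟩, chat, ?_⟩
      rintro u ⟨y, hyP, rfl⟩
      have hhy : NB.actDef h y := hHPdef h hh y hyP
      have hhu : NB.actDef h (NB.trunc^[s] y) := NB_actDef_trunc_iter h y hhy s
      have hβdef : NB.actDef β (NB.act h y) := hBQdef β hβ _ ⟨h, hh, y, hyP, rfl⟩
      have hact : NB.act (NB.mul β h) (NB.trunc^[s] y)
          = NB.act β (NB.act h (NB.trunc^[s] y)) := by
        refine (NB.act_assoc β h _ hhu ?_ ((PF.bull_pointwise B H hcomp.1).1 β hβ h hh)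
          (NB_actDef_trunc_iter _ _
            ((PF.bul_pointwise _ P hcomp.2).1 _ ⟨β, hβ, h, hh, rfl⟩ y hyP) s)).symm
        rw [← NB_act_trunc_iter h y hhy s]
        exact NB_actDef_trunc_iter β _ hβdef s
      rw [hact]
      have humem : NB.act h (NB.trunc^[s] y) ∈ NB.trunc^[s] '' NB.actSet H P := by
        rw [← NB_act_trunc_iter h y hhy s]
        exact ⟨NB.act h y, ⟨h, hh, y, hyP, rfl⟩, rfl⟩
      have hzQ : NB.trunc (NB.act h (NB.trunc^[s] y))
          ∈ NB.trunc^[s + 1] '' NB.actSet H P := by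
        refine ⟨NB.act h y, ⟨h, hh, y, hyP, rfl⟩, ?_⟩
        rw [Function.iterate_succ_apply', NB_act_trunc_iter h y hhy s]
      have hzl : NB.trunc (NB.act h (NB.trunc^[s] y)) ∈ l :=
        hl1 _ (hZfin.mem_toFinset.mpr hzQ)
      obtain ⟨c, hc⟩ := hpropβ _ hzl
      have hex : ∃ c : Fin d, ∀ u ∈ NB.trunc^[s] '' NB.actSet H P,
          NB.trunc u = NB.trunc (NB.act h (NB.trunc^[s] y)) → C (NB.act β u) = c :=
        ⟨c, hc⟩
      have hψval : ψ (NB.trunc (NB.act h (NB.trunc^[s] y))) = hex.choose := dif_pos hex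
      have step1 : C (NB.act β (NB.act h (NB.trunc^[s] y)))
          = ψ (NB.trunc (NB.act h (NB.trunc^[s] y))) := by
        rw [hψval]
        exact hex.choose_spec _ humem rfl
      have step2 : NB.trunc (NB.act h (NB.trunc^[s] y))
          = NB.act h (NB.trunc^[s + 1] y) := by
        rw [NB.act_trunc h _ hhu, Function.iterate_succ_apply']
      rw [step1, step2]
      exact hpropc _ ⟨y, hyP, rfl⟩

end Main2

open PairFam in
/-- Abstract Ramsey theorem without conditions (A) and (B): for a pair of families over
a normed background satisfying (*), with every `P ∈ 𝓟` finite and some iterated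
truncation of each `P ∈ 𝓟` a singleton, condition (P+) implies the Ramsey
condition (R). -/
theorem abstract_ramsey_plus {A X D : Type*} [LinearOrder D] {NB : NormedBackground A X D}
    (PF : PairFam NB) (hStar : CondStar PF)
    (hfin : ∀ P ∈ PF.Pam, P.Finite)
    (hsing : ∀ P ∈ PF.Pam, ∃ t : ℕ, ∃ z : X, NB.trunc^[t] '' P = {z})
    (hPplus : CondPplus PF) : CondR PF := by
  intro d hd P hP
  obtain ⟨t, z, hz⟩ := hsing P hP
  obtain ⟨F, hF, hbul, hprop⟩ := PF_mono PF hStar hfin hPplus d hd t 0 P hP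
    ⟨z, by rw [Nat.zero_add]; exact hz⟩
  refine ⟨F, hF, hbul, fun C => ?_⟩
  obtain ⟨f, hf, c, hc⟩ := hprop C
  exact ⟨f, hf, c, fun x hx => hc x ⟨x, hx, rfl⟩⟩
end

section
/- In a pair of families (𝓕, 𝓟, •, ∙) over a normed background, conditions (A) and (B) together with condition (P) imply condition (P+). (Proved by induction on t: (P+) for t = 0 is (P); the inductive step applies (P+) for t to ∂P using (A), then uses (B) to replace F by G with G • P defined and each element of F_a extended by an element of G_a.) -/
lemma NormedBackground.actDef_iterate {A X D : Type*} [LinearOrder D]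
    (NB : NormedBackground A X D) (a : A) (x : X) (h : NB.actDef a x) :
    ∀ n : ℕ, NB.actDef a (NB.trunc^[n] x) := by
  intro n
  induction n with
  | zero => simpa using h
  | succ n ih =>
    rw [Function.iterate_succ_apply']
    exact NB.actDef_trunc _ _ ih

open PairFam in
/-- In a pair of families over a normed background, conditions (A) and (B) together
with the pigeonhole condition (P) imply the strengthened condition (P+). -/
theorem condP_implies_condPplus {A X D : Type*} [LinearOrder D]
    {NB : NormedBackground A X D} (PF : PairFam NB)
    (hA : CondA PF) (hB : CondB PF) (hP : CondP PF) : CondPplus PF := by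
  intro d hd t
  induction t with
  | zero =>
    intro P hPm x hx
    simp only [zero_add, Function.iterate_one] at hx
    obtain ⟨F, hF, a, hbul, hax, hcol⟩ := hP d hd P hPm x hx
    refine ⟨F, hF, a, hbul, hax, ?_⟩
    intro C
    obtain ⟨f, hf, hext, c, hc⟩ := hcol C
    refine ⟨f, hf, hext, c, ?_⟩
    intro z hz hzx
    simp only [Function.iterate_zero, Set.image_id] at hz
    exact hc z hz hzx
  | succ t ih =>
    intro P hPm x hx
    have hP' : NB.trunc '' P ∈ PF.Pam := hA P hPm
    have hx' : x ∈ NB.trunc^[t + 1] '' (NB.trunc '' P) := by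
      obtain ⟨p, hp, rfl⟩ := hx
      exact ⟨NB.trunc p, ⟨p, hp, rfl⟩, (Function.iterate_succ_apply NB.trunc (t+1) p).symm⟩
    obtain ⟨F, hF, a, hbul, hax, hcol⟩ := ih (NB.trunc '' P) hP' x hx'
    obtain ⟨G, hG, hGbul, hGext⟩ := hB F P hF hPm hbul
    refine ⟨G, hG, a, hGbul, hax, ?_⟩
    intro C
    obtain ⟨f, hf, hext, c, hc⟩ := hcol C
    obtain ⟨g, hg, hgf⟩ := hGext f hf
    have hdefF : NB.actSetDef F (NB.trunc '' P) := (PF.bul_pointwise F _ hbul).1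
    refine ⟨g, hg, fun y hy => ⟨(hgf y (hext y hy).1).1,
      (hgf y (hext y hy).1).2.trans (hext y hy).2⟩, c, ?_⟩
    intro z hz hzx
    obtain ⟨p, hp, rfl⟩ := hz
    have hz' : NB.trunc^[t + 1] p ∈ NB.trunc^[t] '' (NB.trunc '' P) := by
      exact ⟨NB.trunc p, ⟨p, hp, rfl⟩, (Function.iterate_succ_apply NB.trunc t p).symm⟩
    have hdef : NB.actDef f (NB.trunc^[t + 1] p) := by
      have := hdefF f hf (NB.trunc p) ⟨p, hp, rfl⟩
      have := NB.actDef_iterate f (NB.trunc p) this t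
      rwa [← Function.iterate_succ_apply] at this
    rw [(hgf _ hdef).2]
    exact hc _ hz' hzx
end

section
/- Halpern–Läuchli theorem for strong subtrees (product version for leaves): Fix k ≥ 1 and let T^n denote the regular ordered tree of height n with branching number k. Given d > 0, t ≥ 1, and m, there exists n such that for every d-coloring of the t-fold product leaves(T^n) × ⋯ × leaves(T^n), there exists a strong sequence of leaf preserving embeddings g₁, ..., g_t : T^m → T^n such that g₁(leaves(T^m)) × ⋯ × g_t(leaves(T^m)) is monochromatic. -/
noncomputable section
open scoped Classical

/-- A finite ordered tree: carrier `Fin card`, a tree partial order `le`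
(any two elements have a meet, predecessors of any element are linearly
ordered), together with the induced lexicographic linear order `lex`
(a linear extension of `le` which does not interleave incomparable subtrees). -/
structure OTree where
  card : ℕ
  le : Fin card → Fin card → Prop
  le_refl : ∀ v, le v v
  le_antisymm : ∀ v w, le v w → le w v → v = w
  le_trans : ∀ u v w, le u v → le v w → le u w
  pred_linear : ∀ v u w, le u v → le w v → le u w ∨ le w u
  meet_exists : ∀ v w, ∃ u, le u v ∧ le u w ∧ ∀ z, le z v → le z w → le z u
  lex : Fin card → Fin card → Prop
  lex_total : ∀ v w, lex v w ∨ lex w v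
  lex_antisymm : ∀ v w, lex v w → lex w v → v = w
  lex_trans : ∀ u v w, lex u v → lex v w → lex u w
  le_lex : ∀ v w, le v w → lex v w
  lex_compat : ∀ v w v' w', ¬ le v w → ¬ le w v → lex v w → le v v' → le w w' → lex v' w'

namespace OTree

variable (T : OTree)

/-- The meet (infimum, largest common predecessor) of two nodes. -/
def meet (v w : Fin T.card) : Fin T.card := Classical.choose (T.meet_exists v w)

/-- A leaf is a maximal node. -/
def Leaf (v : Fin T.card) : Prop := ∀ w, T.le v w → w = v

/-- `w` is an immediate successor of `v`. -/
def ImSucc (v w : Fin T.card) : Prop :=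
  T.le v w ∧ v ≠ w ∧ ∀ u, T.le v u → T.le u w → u = v ∨ u = w

/-- The number of immediate successors of a node. -/
def imCard (v : Fin T.card) : ℕ := (Finset.univ.filter (fun w => T.ImSucc v w)).card

/-- The branching number `br(T)`: maximal number of immediate successors of a node. -/
def br : ℕ := Finset.univ.sup (fun v => T.imCard v)

/-- The height of a node: the number of its predecessors (itself included). -/
def ht (v : Fin T.card) : ℕ := (Finset.univ.filter (fun u => T.le u v)).card

/-- The height of the tree. -/
def height : ℕ := Finset.univ.sup (fun v => T.ht v)

end OTree

/-- `f` is an embedding of ordered trees: an injective meet-morphism preserving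
the lexicographic order, such that for every `v`, those immediate successors of `f v`
lying below an image of an immediate successor of `v` form a lex-initial segment
of the immediate successors of `f v`. -/
def IsEmb (S T : OTree) (f : Fin S.card → Fin T.card) : Prop :=
  Function.Injective f ∧
  (∀ v w, f (S.meet v w) = T.meet (f v) (f w)) ∧
  (∀ v w, S.lex v w → T.lex (f v) (f w)) ∧
  (∀ v w₁ w₂, T.ImSucc (f v) w₁ → T.ImSucc (f v) w₂ → T.lex w₁ w₂ →
    (∃ v', S.ImSucc v v' ∧ T.le w₂ (f v')) → ∃ v', S.ImSucc v v' ∧ T.le w₁ (f v'))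

/-- `f` maps leaves to leaves. -/
def LeafPres (S T : OTree) (f : Fin S.card → Fin T.card) : Prop :=
  ∀ v, S.Leaf v → T.Leaf (f v)

/-- `f` is strong: it maps nodes of equal height to nodes of equal height. -/
def Strong (S T : OTree) (f : Fin S.card → Fin T.card) : Prop :=
  ∀ v w, S.ht v = S.ht w → T.ht (f v) = T.ht (f w)

/-- The linear (chain) ordered tree with `s` nodes, i.e. `[s] = {1,…,s}`. -/
def chainTree (s : ℕ) : OTree where
  card := s
  le := (· ≤ ·)
  le_refl := fun v => le_refl v
  le_antisymm := fun v w h1 h2 => le_antisymm h1 h2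
  le_trans := fun u v w h1 h2 => le_trans h1 h2
  pred_linear := fun _ u w _ _ => le_total u w
  meet_exists := fun v w =>
    ⟨min v w, min_le_left v w, min_le_right v w, fun z h1 h2 => le_min h1 h2⟩
  lex := (· ≤ ·)
  lex_total := fun v w => le_total v w
  lex_antisymm := fun v w h1 h2 => le_antisymm h1 h2
  lex_trans := fun u v w h1 h2 => le_trans h1 h2
  le_lex := fun _ _ h => h
  lex_compat := fun v w _ _ h1 h2 _ _ _ => absurd (le_total v w) (by tauto)

/-- `T` is the regular tree with branching number `k` and height `n`: every non-leaf
node has exactly `k` immediate successors and every leaf has height `n`. -/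
def Regular (T : OTree) (k n : ℕ) : Prop :=
  (∀ v, ¬ T.Leaf v → T.imCard v = k) ∧ (∀ v, T.Leaf v → T.ht v = n) ∧ (T.card = 0 ↔ n = 0)

end

noncomputable section
open scoped Classical

namespace HLP

variable {T : OTree}

lemma meet_spec (T : OTree) (v w : Fin T.card) :
    T.le (T.meet v w) v ∧ T.le (T.meet v w) w ∧
      ∀ z, T.le z v → T.le z w → T.le z (T.meet v w) :=
  Classical.choose_spec (T.meet_exists v w)

lemma ht_mono {u v : Fin T.card} (h : T.le u v) : T.ht u ≤ T.ht v := by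
  refine Finset.card_le_card fun x hx => ?_
  simp only [Finset.mem_filter, Finset.mem_univ, true_and] at hx ⊢
  exact T.le_trans _ _ _ hx h

lemma ht_strict {u v : Fin T.card} (h : T.le u v) (hne : u ≠ v) : T.ht u < T.ht v := by
  have hsub : (Finset.univ.filter (fun x => T.le x u)) ⊆ (Finset.univ.filter (fun x => T.le x v)) := by
    intro x hx
    simp only [Finset.mem_filter, Finset.mem_univ, true_and] at hx ⊢
    exact T.le_trans _ _ _ hx h
  refine Finset.card_lt_card (Finset.ssubset_iff_of_subset hsub |>.2 ⟨v, ?_, ?_⟩)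
  · simp [T.le_refl]
  · simp only [Finset.mem_filter, Finset.mem_univ, true_and]
    intro hvu
    exact hne (T.le_antisymm _ _ h hvu)

lemma one_le_ht (v : Fin T.card) : 1 ≤ T.ht v := by
  have : v ∈ Finset.univ.filter (fun x => T.le x v) := by simp [T.le_refl]
  exact Finset.card_pos.2 ⟨v, this⟩

lemma eq_of_le_of_ht_le {u v : Fin T.card} (h : T.le u v) (hht : T.ht v ≤ T.ht u) : u = v := by
  by_contra hne
  exact absurd (ht_strict h hne) (not_lt.2 hht)

lemma exists_leaf_above (v : Fin T.card) : ∃ w, T.le v w ∧ T.Leaf w := by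
  obtain ⟨w, hw, hmax⟩ := Finset.exists_max_image (Finset.univ.filter (fun x => T.le v x))
    (fun x => T.ht x) ⟨v, by simp [T.le_refl]⟩
  simp only [Finset.mem_filter, Finset.mem_univ, true_and] at hw
  refine ⟨w, hw, fun w' hw' => ?_⟩
  have hw'mem : w' ∈ Finset.univ.filter (fun x => T.le v x) := by
    simp only [Finset.mem_filter, Finset.mem_univ, true_and]
    exact T.le_trans _ _ _ hw hw'
  exact (eq_of_le_of_ht_le hw' (hmax w' hw'mem)).symm

lemma exists_root (h0 : 0 < T.card) : ∃ r : Fin T.card, ∀ v, T.le r v := by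
  obtain ⟨r, _, hmin⟩ := Finset.exists_min_image (Finset.univ : Finset (Fin T.card))
    (fun x => T.ht x) ⟨⟨0, h0⟩, Finset.mem_univ _⟩
  refine ⟨r, fun v => ?_⟩
  have h1 : T.le (T.meet r v) r := (meet_spec T r v).1
  have h2 : T.ht r ≤ T.ht (T.meet r v) := hmin _ (Finset.mem_univ _)
  have := eq_of_le_of_ht_le h1 h2
  rw [← this]
  exact (meet_spec T r v).2.1

lemma exists_imSucc_le {v w : Fin T.card} (hvw : T.le v w) (hne : v ≠ w) :
    ∃ c, T.ImSucc v c ∧ T.le c w := by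
  obtain ⟨c, hc, hmin⟩ := Finset.exists_min_image
    (Finset.univ.filter (fun u => T.le v u ∧ T.le u w ∧ u ≠ v)) (fun x => T.ht x)
    ⟨w, by simp [hvw, T.le_refl, Ne.symm hne]⟩
  simp only [Finset.mem_filter, Finset.mem_univ, true_and] at hc
  obtain ⟨hvc, hcw, hcv⟩ := hc
  refine ⟨c, ⟨hvc, Ne.symm hcv, fun u hvu huc => ?_⟩, hcw⟩
  by_cases huv : u = v
  · exact Or.inl huv
  · refine Or.inr ?_
    have humem : u ∈ Finset.univ.filter (fun u => T.le v u ∧ T.le u w ∧ u ≠ v) := by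
      simp only [Finset.mem_filter, Finset.mem_univ, true_and]
      exact ⟨hvu, T.le_trans _ _ _ huc hcw, huv⟩
    exact eq_of_le_of_ht_le huc (hmin u humem)

lemma imSucc_unique {v c c' w : Fin T.card} (h1 : T.ImSucc v c) (h2 : T.ImSucc v c')
    (hcw : T.le c w) (hc'w : T.le c' w) : c = c' := by
  rcases T.pred_linear w c c' hcw hc'w with h | h
  · rcases h2.2.2 c h1.1 h with rfl | h'
    · exact absurd rfl h1.2.1
    · exact h'
  · rcases h1.2.2 c' h2.1 h with rfl | h'
    · exact absurd rfl h2.2.1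
    · exact h'.symm

lemma ht_imSucc {v c : Fin T.card} (h : T.ImSucc v c) : T.ht c = T.ht v + 1 := by
  have hset : Finset.univ.filter (fun u => T.le u c)
      = insert c (Finset.univ.filter (fun u => T.le u v)) := by
    ext u
    simp only [Finset.mem_filter, Finset.mem_univ, true_and, Finset.mem_insert]
    constructor
    · intro huc
      rcases T.pred_linear c u v huc h.1 with huv | hvu
      · exact Or.inr huv
      · rcases h.2.2 u hvu huc with rfl | rfl
        · exact Or.inr (T.le_refl _)
        · exact Or.inl rfl
    · rintro (rfl | huv)
      · exact T.le_refl _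
      · exact T.le_trans _ _ _ huv h.1
  have hnot : c ∉ Finset.univ.filter (fun u => T.le u v) := by
    simp only [Finset.mem_filter, Finset.mem_univ, true_and]
    intro hcv
    exact h.2.1 (T.le_antisymm _ _ h.1 hcv)
  rw [OTree.ht, OTree.ht, hset, Finset.card_insert_of_notMem hnot]

lemma not_leaf_of_lt {v w : Fin T.card} (h : T.le v w) (hne : v ≠ w) : ¬ T.Leaf v :=
  fun hl => hne (hl w h).symm

section Reg

variable {k h : ℕ} (hreg : Regular T k h)
include hreg

lemma ht_le_h (v : Fin T.card) : T.ht v ≤ h := by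
  obtain ⟨w, hvw, hw⟩ := exists_leaf_above v
  calc T.ht v ≤ T.ht w := ht_mono hvw
    _ = h := hreg.2.1 w hw

lemma leaf_iff_ht {v : Fin T.card} : T.Leaf v ↔ T.ht v = h := by
  constructor
  · exact hreg.2.1 v
  · intro hht
    obtain ⟨w, hvw, hw⟩ := exists_leaf_above v
    have : v = w := eq_of_le_of_ht_le hvw (by rw [hht, hreg.2.1 w hw])
    rwa [this]

lemma not_leaf_iff_ht {v : Fin T.card} : ¬ T.Leaf v ↔ T.ht v < h := by
  rw [leaf_iff_ht hreg]
  have := ht_le_h hreg v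
  omega

end Reg

end HLP
namespace HLP

/-! ### List lemmas -/

variable {β : Type*} [DecidableEq β]

def lcp : List β → List β → List β
  | a :: s, b :: t => if a = b then a :: lcp s t else []
  | _, _ => []

lemma lcp_prefix_left : ∀ s t : List β, lcp s t <+: s
  | [], _ => by simp [lcp]
  | a :: s, [] => by simp [lcp]
  | a :: s, b :: t => by
    by_cases hab : a = b
    · subst hab
      simpa [lcp] using lcp_prefix_left s t
    · simp [lcp, hab]

lemma lcp_prefix_right : ∀ s t : List β, lcp s t <+: t
  | [], _ => by simp [lcp]
  | a :: s, [] => by simp [lcp]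
  | a :: s, b :: t => by
    by_cases hab : a = b
    · subst hab
      simpa [lcp] using lcp_prefix_right s t
    · simp [lcp, hab]

lemma prefix_lcp : ∀ {q s t : List β}, q <+: s → q <+: t → q <+: lcp s t
  | [], _, _, _, _ => by simp
  | c :: q, s, t, hs, ht => by
    obtain ⟨u, rfl⟩ := hs
    obtain ⟨u', hu'⟩ := ht
    rw [List.cons_append] at hu'
    subst hu'
    rw [List.cons_append, lcp, if_pos rfl, List.cons_prefix_cons]
    exact ⟨rfl, prefix_lcp (List.prefix_append q u) (List.prefix_append q u')⟩

lemma lcp_eq_left {s t : List β} (h : s <+: t) : lcp s t = s :=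
  (lcp_prefix_left s t).eq_of_length_le (prefix_lcp (List.prefix_refl s) h).length_le

lemma lcp_eq_right {s t : List β} (h : t <+: s) : lcp s t = t :=
  (lcp_prefix_right s t).eq_of_length_le (prefix_lcp h (List.prefix_refl t)).length_le

lemma lcp_diff {a b : β} (hab : a ≠ b) : ∀ (q : List β) (s t : List β),
    lcp (q ++ a :: s) (q ++ b :: t) = q
  | [], s, t => by simp [lcp, hab]
  | c :: q, s, t => by simp [lcp, lcp_diff hab q s t]

lemma list_tricho : ∀ s t : List β, s <+: t ∨ t <+: s ∨
    ∃ (q : List β) (a b : β) (s1 t1 : List β), a ≠ b ∧ s = q ++ a :: s1 ∧ t = q ++ b :: t1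
  | [], t => Or.inl (by simp)
  | s, [] => Or.inr (Or.inl (by simp))
  | a :: s, b :: t => by
    by_cases hab : a = b
    · subst hab
      rcases list_tricho s t with hc | hc | ⟨q, x, y, s1, t1, hxy, rfl, rfl⟩
      · exact Or.inl (by rw [List.cons_prefix_cons]; exact ⟨rfl, hc⟩)
      · exact Or.inr (Or.inl (by rw [List.cons_prefix_cons]; exact ⟨rfl, hc⟩))
      · exact Or.inr (Or.inr ⟨a :: q, x, y, s1, t1, hxy, rfl, rfl⟩)
    · exact Or.inr (Or.inr ⟨[], a, b, s, t, hab, rfl, rfl⟩)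

lemma prefix_ext {s t : List β} (h : s <+: t) (hl : s.length < t.length) :
    ∃ u : List β, t = s ++ t[s.length] :: u := by
  obtain ⟨u, rfl⟩ := h
  cases u with
  | nil => simp at hl
  | cons a u =>
    refine ⟨u, ?_⟩
    congr 1
    rw [List.getElem_append_right (le_refl _)]
    simp

lemma getElem_append_cons {s u : List β} {a : β} :
    (s ++ a :: u)[s.length]'(by simp) = a := by
  rw [List.getElem_append_right (le_refl _)]
  simp

lemma snoc_prefix_of_getElem {s t : List β} (h : s <+: t) (hl : s.length < t.length) {a : β}
    (ha : t[s.length]'hl = a) : s ++ [a] <+: t := by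
  obtain ⟨u, hu⟩ := prefix_ext h hl
  rw [hu, ← ha]
  exact ⟨u, by simp⟩

end HLP
namespace HLP

/-! ### Children enumerated in lex order -/

def lexLO (T : OTree) : LinearOrder (Fin T.card) where
  le := T.lex
  lt := fun a b => T.lex a b ∧ ¬ T.lex b a
  le_refl := fun v => (T.lex_total v v).elim id id
  le_trans := T.lex_trans
  lt_iff_le_not_ge := fun _ _ => Iff.rfl
  le_antisymm := T.lex_antisymm
  le_total := T.lex_total
  toDecidableLE := fun _ _ => Classical.propDecidable _
  min := fun a b => if T.lex a b then a else b
  max := fun a b => if T.lex a b then b else a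
  min_def := by intros; rfl
  max_def := by intros; rfl
  toDecidableEq := fun _ _ => Classical.propDecidable _
  toDecidableLT := fun _ _ => Classical.propDecidable _
  compare := fun a b => @compareOfLessAndEq _ a b ⟨fun a b => T.lex a b ∧ ¬ T.lex b a⟩
    (Classical.propDecidable _) (fun _ _ => Classical.propDecidable _)
  compare_eq_compareOfLessAndEq := by
    intros a b
    unfold compareOfLessAndEq
    rcases Classical.propDecidable _ with h | h <;> congr

def chs (T : OTree) (v : Fin T.card) : Finset (Fin T.card) :=
  Finset.univ.filter (fun w => T.ImSucc v w)

lemma chs_card {T : OTree} {k h : ℕ} (hreg : Regular T k h) {v : Fin T.card}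
    (hv : ¬ T.Leaf v) : (chs T v).card = k := hreg.1 v hv

def child (T : OTree) (k : ℕ) (v : Fin T.card) (a : Fin k) : Fin T.card :=
  if hc : (chs T v).card = k then
    letI := lexLO T
    (chs T v).orderEmbOfFin hc a
  else v

lemma child_imSucc {T : OTree} {k : ℕ} {v : Fin T.card} (hc : (chs T v).card = k) (a : Fin k) :
    T.ImSucc v (child T k v a) := by
  rw [child, dif_pos hc]
  letI := lexLO T
  have h2 := (chs T v).orderEmbOfFin_mem hc a
  exact (Finset.mem_filter.1 h2).2

lemma le_child {T : OTree} {k : ℕ} (v : Fin T.card) (a : Fin k) : T.le v (child T k v a) := by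
  by_cases hc : (chs T v).card = k
  · exact (child_imSucc hc a).1
  · rw [child, dif_neg hc]
    exact T.le_refl v

lemma child_inj {T : OTree} {k : ℕ} {v : Fin T.card} (hc : (chs T v).card = k) {a b : Fin k}
    (hab : child T k v a = child T k v b) : a = b := by
  rw [child, dif_pos hc, child, dif_pos hc] at hab
  letI := lexLO T
  exact ((chs T v).orderEmbOfFin hc).injective hab

lemma child_lex {T : OTree} {k : ℕ} {v : Fin T.card} (hc : (chs T v).card = k) {a b : Fin k}
    (hab : a < b) : T.lex (child T k v a) (child T k v b) ∧ child T k v a ≠ child T k v b := by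
  rw [child, dif_pos hc, child, dif_pos hc]
  letI := lexLO T
  have hle := ((chs T v).orderEmbOfFin hc).map_rel_iff.2 hab.le
  have hne := ((chs T v).orderEmbOfFin hc).injective.ne (ne_of_lt hab)
  exact ⟨hle, hne⟩

lemma child_surj {T : OTree} {k : ℕ} {v c : Fin T.card} (hc : (chs T v).card = k)
    (hcs : T.ImSucc v c) : ∃ a : Fin k, child T k v a = c := by
  letI := lexLO T
  have hmem : c ∈ chs T v := Finset.mem_filter.2 ⟨Finset.mem_univ _, hcs⟩
  have : c ∈ Set.range ((chs T v).orderEmbOfFin hc) := by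
    rw [Finset.range_orderEmbOfFin]
    exact hmem
  obtain ⟨a, ha⟩ := this
  refine ⟨a, ?_⟩
  rw [child, dif_pos hc, ha]

end HLP
namespace HLP

/-! ### Coordinatization of regular trees by strings -/

def nd (T : OTree) (k : ℕ) (r : Fin T.card) (s : List (Fin k)) : Fin T.card :=
  s.foldl (child T k) r

lemma nd_append (T : OTree) (k : ℕ) (r : Fin T.card) (s u : List (Fin k)) :
    nd T k r (s ++ u) = nd T k (nd T k r s) u := by
  simp [nd]

lemma nd_snoc (T : OTree) (k : ℕ) (r : Fin T.card) (s : List (Fin k)) (a : Fin k) :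
    nd T k r (s ++ [a]) = child T k (nd T k r s) a := by
  rw [nd_append]; rfl

section Tree

variable {T : OTree} {k h : ℕ} {r : Fin T.card}
variable (hreg : Regular T k h) (hr : ∀ v, T.le r v)

lemma ht_root (hr : ∀ v, T.le r v) : T.ht r = 1 := by
  rw [OTree.ht]
  have : Finset.univ.filter (fun u => T.le u r) = {r} := by
    ext u
    simp only [Finset.mem_filter, Finset.mem_univ, true_and, Finset.mem_singleton]
    exact ⟨fun hu => T.le_antisymm _ _ hu (hr u), fun he => he ▸ T.le_refl u⟩
  rw [this, Finset.card_singleton]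

include hreg hr

lemma ht_nd : ∀ s : List (Fin k), s.length < h → T.ht (nd T k r s) = s.length + 1 := by
  intro s
  induction s using List.reverseRecOn with
  | nil => intro _; exact ht_root hr
  | append_singleton s a ih =>
    intro hlen
    rw [List.length_append, List.length_singleton] at hlen
    have hlen' : s.length < h := by omega
    have hnl : ¬ T.Leaf (nd T k r s) := by
      rw [not_leaf_iff_ht hreg, ih hlen']
      omega
    rw [nd_snoc, ht_imSucc (child_imSucc (chs_card hreg hnl) a), ih hlen',
      List.length_append, List.length_singleton]

omit hreg hr in
lemma nd_prefix_le {s t : List (Fin k)} (hst : s <+: t) : T.le (nd T k r s) (nd T k r t) := by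
  obtain ⟨u, rfl⟩ := hst
  induction u using List.reverseRecOn with
  | nil => rw [List.append_nil]; exact T.le_refl _
  | append_singleton u a ih =>
    rw [← List.append_assoc, nd_snoc]
    exact T.le_trans _ _ _ ih (le_child _ a)

lemma reach : ∀ (D : ℕ) (s : List (Fin k)) (w : Fin T.card), T.ht w = s.length + 1 + D →
    T.le (nd T k r s) w → ∃ u : List (Fin k), u.length = D ∧ nd T k r (s ++ u) = w := by
  intro D
  induction D with
  | zero =>
    intro s w hht hle
    have hlen : s.length < h := by have := ht_le_h hreg w; omega
    have : nd T k r s = w := eq_of_le_of_ht_le hle (by rw [hht, ht_nd hreg hr s hlen])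
    exact ⟨[], rfl, by rw [List.append_nil]; exact this⟩
  | succ D ih =>
    intro s w hht hle
    have hlen : s.length < h := by have := ht_le_h hreg w; omega
    have hhts : T.ht (nd T k r s) = s.length + 1 := ht_nd hreg hr s hlen
    have hne : nd T k r s ≠ w := by intro he; rw [he, hht] at hhts; omega
    have hnl : ¬ T.Leaf (nd T k r s) := not_leaf_of_lt hle hne
    obtain ⟨c, hc, hcw⟩ := exists_imSucc_le hle hne
    obtain ⟨a, ha⟩ := child_surj (chs_card hreg hnl) hc
    have hnd : nd T k r (s ++ [a]) = c := by rw [nd_snoc, ha]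
    obtain ⟨u, hu, hnu⟩ := ih (s ++ [a]) w
      (by rw [hht, List.length_append, List.length_singleton]; ring) (hnd ▸ hcw)
    exact ⟨a :: u, by simp [hu], by rw [← hnu, List.append_assoc]; rfl⟩

lemma nd_surj (w : Fin T.card) : ∃ s : List (Fin k), s.length + 1 = T.ht w ∧ nd T k r s = w := by
  obtain ⟨u, hu, hnu⟩ := reach hreg hr (T.ht w - 1) [] w
    (by have := one_le_ht (T := T) w; simp; omega) (hr w)
  refine ⟨u, by have := one_le_ht (T := T) w; omega, by rw [← hnu]; rfl⟩

lemma nd_inj : ∀ s t : List (Fin k), s.length < h → t.length < h →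
    nd T k r s = nd T k r t → s = t := by
  intro s
  induction s using List.reverseRecOn with
  | nil =>
    intro t hs ht hst
    cases t using List.reverseRecOn with
    | nil => rfl
    | append_singleton t b =>
      exfalso
      have h1 := ht_nd hreg hr [] hs
      have h2 := ht_nd hreg hr (t ++ [b]) ht
      rw [hst, h2] at h1
      simp at h1
  | append_singleton s a ih =>
    intro t hs ht hst
    cases t using List.reverseRecOn with
    | nil =>
      exfalso
      have h1 := ht_nd hreg hr (s ++ [a]) hs
      have h2 := ht_nd hreg hr [] ht
      rw [hst, h2] at h1
      simp at h1
    | append_singleton t b =>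
      have hlens : (s ++ [a]).length = (t ++ [b]).length := by
        have h1 := ht_nd hreg hr (s ++ [a]) hs
        have h2 := ht_nd hreg hr (t ++ [b]) ht
        rw [hst, h2] at h1
        omega
      simp only [List.length_append, List.length_singleton] at hlens
      have hs' : s.length < h := by simp at hs; omega
      have ht' : t.length < h := by simp at ht; omega
      have hnls : ¬ T.Leaf (nd T k r s) := by
        rw [not_leaf_iff_ht hreg, ht_nd hreg hr s hs']
        simp at hs; omega
      have hnlt : ¬ T.Leaf (nd T k r t) := by
        rw [not_leaf_iff_ht hreg, ht_nd hreg hr t ht']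
        simp at ht; omega
      have hcs := child_imSucc (chs_card hreg hnls) a
      have hct := child_imSucc (chs_card hreg hnlt) b
      rw [← nd_snoc] at hcs hct
      rw [hst] at hcs
      -- both parents are ≤ the same node, with equal heights
      have hpar : nd T k r s = nd T k r t := by
        rcases T.pred_linear (nd T k r (t ++ [b])) _ _ hcs.1 hct.1 with hle | hle
        · exact eq_of_le_of_ht_le hle (by rw [ht_nd hreg hr s hs', ht_nd hreg hr t ht']; omega)
        · exact (eq_of_le_of_ht_le hle
            (by rw [ht_nd hreg hr s hs', ht_nd hreg hr t ht']; omega)).symm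
      have hs_eq_t : s = t := ih t hs' ht' hpar
      subst hs_eq_t
      have hab : a = b := by
        apply child_inj (chs_card hreg hnls)
        rw [← nd_snoc, ← nd_snoc]
        exact hst
      rw [hab]

lemma nd_le_nd_iff {s t : List (Fin k)} (hs : s.length < h) (ht : t.length < h) :
    T.le (nd T k r s) (nd T k r t) ↔ s <+: t := by
  constructor
  · intro hle
    have hlen : s.length ≤ t.length := by
      have := ht_mono hle
      rw [ht_nd hreg hr s hs, ht_nd hreg hr t ht] at this
      omega
    obtain ⟨u, hu, hnu⟩ := reach hreg hr (t.length - s.length) s (nd T k r t)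
      (by rw [ht_nd hreg hr t ht]; omega) hle
    have : s ++ u = t := nd_inj hreg hr (s ++ u) t (by simp; omega) ht hnu
    exact ⟨u, this⟩
  · exact nd_prefix_le

lemma meet_nd {s t : List (Fin k)} (hs : s.length < h) (ht : t.length < h) :
    T.meet (nd T k r s) (nd T k r t) = nd T k r (lcp s t) := by
  have hlcp_s : lcp s t <+: s := lcp_prefix_left s t
  have hlcp_len : (lcp s t).length < h := lt_of_le_of_lt hlcp_s.length_le hs
  apply T.le_antisymm
  · -- meet ≤ nd lcp
    obtain ⟨q, hq, hnq⟩ := nd_surj hreg hr (T.meet (nd T k r s) (nd T k r t))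
    have hqs : q.length < h := by
      have h1 := ht_mono (meet_spec T (nd T k r s) (nd T k r t)).1
      have h2 := ht_nd hreg hr s hs
      omega
    have hq_s : q <+: s := (nd_le_nd_iff hreg hr hqs hs).1
      (hnq ▸ (meet_spec T (nd T k r s) (nd T k r t)).1)
    have hq_t : q <+: t := (nd_le_nd_iff hreg hr hqs ht).1
      (hnq ▸ (meet_spec T (nd T k r s) (nd T k r t)).2.1)
    rw [← hnq]
    exact nd_prefix_le (prefix_lcp hq_s hq_t)
  · exact (meet_spec T _ _).2.2 _ (nd_prefix_le (lcp_prefix_left s t))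
      (nd_prefix_le (lcp_prefix_right s t))

lemma leaf_nd_iff {s : List (Fin k)} (hs : s.length < h) :
    T.Leaf (nd T k r s) ↔ s.length = h - 1 := by
  rw [leaf_iff_ht hreg, ht_nd hreg hr s hs]
  omega

lemma lex_nd_of_lt {q s t : List (Fin k)} {a b : Fin k} (hab : a < b)
    (hs : (q ++ a :: s).length < h) (ht : (q ++ b :: t).length < h) :
    T.lex (nd T k r (q ++ a :: s)) (nd T k r (q ++ b :: t)) := by
  have hq1 : (q ++ [a]).length < h := by simp at hs ⊢; omega
  have hq2 : (q ++ [b]).length < h := by simp at ht ⊢; omega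
  have hq : q.length < h := by simp at hs; omega
  have hnl : ¬ T.Leaf (nd T k r q) := by
    rw [not_leaf_iff_ht hreg, ht_nd hreg hr q hq]
    simp at hs; omega
  have hcl := child_lex (chs_card hreg hnl) hab
  rw [← nd_snoc, ← nd_snoc] at hcl
  have hnle1 : ¬ T.le (nd T k r (q ++ [a])) (nd T k r (q ++ [b])) := by
    intro hle
    have hpre := (nd_le_nd_iff hreg hr hq1 hq2).1 hle
    have := hpre.eq_of_length_le (by simp)
    simp at this
    exact absurd this (ne_of_lt hab)
  have hnle2 : ¬ T.le (nd T k r (q ++ [b])) (nd T k r (q ++ [a])) := by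
    intro hle
    have hpre := (nd_le_nd_iff hreg hr hq2 hq1).1 hle
    have := hpre.eq_of_length_le (by simp)
    simp at this
    exact absurd this.symm (ne_of_lt hab)
  refine T.lex_compat _ _ _ _ hnle1 hnle2 hcl.1 ?_ ?_
  · exact nd_prefix_le ⟨s, by simp⟩
  · exact nd_prefix_le ⟨t, by simp⟩

lemma imSucc_nd {s : List (Fin k)} (hs : s.length + 1 < h) (a : Fin k) :
    T.ImSucc (nd T k r s) (nd T k r (s ++ [a])) := by
  have hnl : ¬ T.Leaf (nd T k r s) := by
    rw [not_leaf_iff_ht hreg, ht_nd hreg hr s (by omega)]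
    omega
  rw [nd_snoc]
  exact child_imSucc (chs_card hreg hnl) a

end Tree

end HLP
namespace HLP

/-! ### Images of strings under the substitution defined by a combinatorial line -/

section Img

variable {k M N : ℕ}

def blockStr (k M N : ℕ) (hM : 0 < M) (w : Fin N → Fin M → Fin k) : List (Fin k) :=
  (List.finRange (M * N)).map fun q =>
    w ⟨q.1 / M, by
        have hq := q.isLt
        have hcomm : M * N = N * M := Nat.mul_comm M N
        rw [Nat.div_lt_iff_lt_mul hM]
        omega⟩
      ⟨q.1 % M, Nat.mod_lt _ hM⟩

lemma length_blockStr (hM : 0 < M) (w : Fin N → Fin M → Fin k) :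
    (blockStr k M N hM w).length = M * N := by
  rw [blockStr, List.length_map, List.length_finRange]

lemma getElem_blockStr (hM : 0 < M) (w : Fin N → Fin M → Fin k) (q : ℕ)
    (hq : q < (blockStr k M N hM w).length) :
    (blockStr k M N hM w)[q] =
      w ⟨q / M, by
          rw [length_blockStr] at hq
          have hcomm : M * N = N * M := Nat.mul_comm M N
          rw [Nat.div_lt_iff_lt_mul hM]
          omega⟩
        ⟨q % M, Nat.mod_lt _ hM⟩ := by
  simp only [blockStr, List.getElem_map, List.getElem_finRange]
  rfl

lemma lenIm_le {p0 : ℕ} (hp0 : p0 < N) {j : ℕ} (hj : j ≤ M) :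
    (if j = M then M * N else p0 * M + j) ≤ M * N := by
  split
  · exact le_refl _
  · next hne =>
    have h2 : (p0 + 1) * M ≤ N * M := Nat.mul_le_mul_right _ (by omega)
    rw [Nat.succ_mul] at h2
    have hcomm : M * N = N * M := Nat.mul_comm M N
    omega

def pat (hk0 : 0 < k) (F : Fin N → Option (Fin M → Fin k)) (u : List (Fin k))
    (p : Fin N) (j : Fin M) : Fin k :=
  match F p with
  | some a => a j
  | none => u.getD j ⟨0, hk0⟩

def img (hk0 : 0 < k) (hM : 0 < M) (F : Fin N → Option (Fin M → Fin k)) (p0 : ℕ)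
    (u : List (Fin k)) : List (Fin k) :=
  (blockStr k M N hM (pat hk0 F u)).take (if u.length = M then M * N else p0 * M + u.length)

variable (hk0 : 0 < k) (hM : 0 < M) (F : Fin N → Option (Fin M → Fin k)) {p0 : ℕ}
  (hp0 : p0 < N) (hFp0 : F ⟨p0, hp0⟩ = none) (hmin : ∀ p : Fin N, F p = none → p0 ≤ (p : ℕ))

set_option linter.unusedSectionVars false

include hp0 hFp0 hmin

lemma length_img (u : List (Fin k)) (hu : u.length ≤ M) :
    (img hk0 hM F p0 u).length = if u.length = M then M * N else p0 * M + u.length := by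
  rw [img, List.length_take, length_blockStr]
  exact Nat.min_eq_left (lenIm_le hp0 hu)

lemma length_img_le (u : List (Fin k)) (hu : u.length ≤ M) :
    (img hk0 hM F p0 u).length ≤ M * N := by
  rw [length_img hk0 hM F hp0 hFp0 hmin u hu]
  exact lenIm_le hp0 hu

lemma length_img_mono {u u' : List (Fin k)} (h : u.length < u'.length) (hu' : u'.length ≤ M) :
    (img hk0 hM F p0 u).length < (img hk0 hM F p0 u').length := by
  rw [length_img hk0 hM F hp0 hFp0 hmin u (by omega),
    length_img hk0 hM F hp0 hFp0 hmin u' hu']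
  have hune : u.length ≠ M := by omega
  rw [if_neg hune]
  split
  · next =>
    have h2 : (p0 + 1) * M ≤ N * M := Nat.mul_le_mul_right _ (by omega)
    rw [Nat.succ_mul] at h2
    have hcomm : N * M = M * N := Nat.mul_comm _ _
    omega
  · omega

lemma getElem_img (u : List (Fin k)) (hu : u.length ≤ M) {q : ℕ}
    (hq : q < (img hk0 hM F p0 u).length) :
    (img hk0 hM F p0 u)[q] =
      pat hk0 F u
        ⟨q / M, by
          rw [Nat.div_lt_iff_lt_mul hM]
          have h1 := lt_of_lt_of_le hq (length_img_le hk0 hM F hp0 hFp0 hmin u hu)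
          have hcomm : M * N = N * M := Nat.mul_comm M N
          omega⟩
        ⟨q % M, Nat.mod_lt _ hM⟩ := by
  have hq' : q < (blockStr k M N hM (pat hk0 F u)).length := by
    rw [length_blockStr]
    exact lt_of_lt_of_le hq (length_img_le hk0 hM F hp0 hFp0 hmin u hu)
  simp only [img, List.getElem_take]
  rw [getElem_blockStr]

lemma wild_pos {u : List (Fin k)} (hu : u.length ≤ M) {q : ℕ}
    (hq : q < (img hk0 hM F p0 u).length) {pq : Fin N} (hpq : (pq : ℕ) = q / M)
    (hw : F pq = none) :
    q % M < u.length := by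
  by_cases hM' : u.length = M
  · rw [hM']; exact Nat.mod_lt _ hM
  · have hlen : (img hk0 hM F p0 u).length = p0 * M + u.length := by
      rw [length_img hk0 hM F hp0 hFp0 hmin u hu, if_neg hM']
    have hple : p0 ≤ q / M := hpq ▸ hmin _ hw
    have hdm := Nat.div_add_mod q M
    have hc2 : M * (q / M) = (q / M) * M := Nat.mul_comm _ _
    have hc3 : M * p0 = p0 * M := Nat.mul_comm _ _
    rcases Nat.lt_or_ge p0 (q / M) with hlt | hge
    · exfalso
      have h1 : (p0 + 1) * M ≤ (q / M) * M := Nat.mul_le_mul_right _ (by omega)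
      rw [Nat.succ_mul] at h1
      have h2 : (q / M) * M ≤ q := by omega
      omega
    · have heq : q / M = p0 := le_antisymm hge hple
      rw [heq] at hdm
      omega

lemma img_prefix {u u' : List (Fin k)} (hpre : u <+: u') (hu' : u'.length ≤ M) :
    img hk0 hM F p0 u <+: img hk0 hM F p0 u' := by
  have hu : u.length ≤ M := le_trans hpre.length_le hu'
  have hlen : (img hk0 hM F p0 u).length ≤ (img hk0 hM F p0 u').length := by
    rcases lt_or_eq_of_le hpre.length_le with h | h
    · exact le_of_lt (length_img_mono hk0 hM F hp0 hFp0 hmin h hu')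
    · rw [length_img hk0 hM F hp0 hFp0 hmin u hu,
        length_img hk0 hM F hp0 hFp0 hmin u' hu', h]
  rw [List.prefix_iff_eq_take]
  apply List.ext_getElem
  · rw [List.length_take]
    omega
  · intro q hq1 hq2
    rw [List.getElem_take]
    have hq1' : q < (img hk0 hM F p0 u).length := hq1
    have hq2' : q < (img hk0 hM F p0 u').length := by omega
    rw [getElem_img hk0 hM F hp0 hFp0 hmin u hu hq1',
      getElem_img hk0 hM F hp0 hFp0 hmin u' hu' hq2']
    rcases hF : F ⟨q / M, _⟩ with _ | a
    · have hlt : q % M < u.length :=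
        wild_pos hk0 hM F hp0 hFp0 hmin hu hq1' (pq := ⟨q / M, _⟩) rfl hF
      have hlt' : q % M < u'.length := lt_of_lt_of_le hlt hpre.length_le
      rw [pat, pat, hF]
      simp only []
      rw [List.getD_eq_getElem _ _ hlt, List.getD_eq_getElem _ _ hlt']
      exact hpre.getElem hlt
    · rw [pat, pat, hF]

lemma img_snoc (q0 : List (Fin k)) (a : Fin k) (s : List (Fin k))
    (hlen : (q0 ++ a :: s).length ≤ M) :
    ∃ S1 : List (Fin k), img hk0 hM F p0 (q0 ++ a :: s) = img hk0 hM F p0 q0 ++ a :: S1 := by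
  have hq0M : q0.length < M := by simp at hlen ⊢; omega
  have hpre : img hk0 hM F p0 q0 <+: img hk0 hM F p0 (q0 ++ a :: s) :=
    img_prefix hk0 hM F hp0 hFp0 hmin ⟨a :: s, rfl⟩ hlen
  have hlt : (img hk0 hM F p0 q0).length < (img hk0 hM F p0 (q0 ++ a :: s)).length :=
    length_img_mono hk0 hM F hp0 hFp0 hmin (by simp) hlen
  have hP : (img hk0 hM F p0 q0).length = p0 * M + q0.length := by
    rw [length_img hk0 hM F hp0 hFp0 hmin q0 (by omega), if_neg (by omega)]
  have hdiv : (p0 * M + q0.length) / M = p0 := by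
    rw [Nat.mul_comm p0 M, Nat.mul_add_div hM, Nat.div_eq_of_lt hq0M, Nat.add_zero]
  have hmod : (p0 * M + q0.length) % M = q0.length := by
    rw [Nat.mul_comm p0 M, Nat.mul_add_mod, Nat.mod_eq_of_lt hq0M]
  have hlt2 : q0.length < (q0 ++ a :: s).length := by simp
  have hentry : (img hk0 hM F p0 (q0 ++ a :: s))[(img hk0 hM F p0 q0).length]'hlt = a := by
    rw [getElem_img hk0 hM F hp0 hFp0 hmin _ hlen hlt]
    simp only [pat, hP, hdiv, hmod, hFp0]
    rw [List.getD_eq_getElem _ _ hlt2]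
    exact getElem_append_cons
  obtain ⟨S1, hS1⟩ := prefix_ext hpre hlt
  exact ⟨S1, by rw [hS1, hentry]⟩

lemma img_lcp {u u' : List (Fin k)} (hu : u.length ≤ M) (hu' : u'.length ≤ M) :
    lcp (img hk0 hM F p0 u) (img hk0 hM F p0 u') = img hk0 hM F p0 (lcp u u') := by
  rcases list_tricho u u' with hc | hc | ⟨q0, a, b, s1, t1, hab, rfl, rfl⟩
  · rw [lcp_eq_left (img_prefix hk0 hM F hp0 hFp0 hmin hc hu'), lcp_eq_left hc]
  · rw [lcp_eq_right (img_prefix hk0 hM F hp0 hFp0 hmin hc hu), lcp_eq_right hc]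
  · obtain ⟨S1, hS1⟩ := img_snoc hk0 hM F hp0 hFp0 hmin q0 a s1 hu
    obtain ⟨T1, hT1⟩ := img_snoc hk0 hM F hp0 hFp0 hmin q0 b t1 hu'
    rw [hS1, hT1, lcp_diff hab, lcp_diff hab]

lemma img_inj {u u' : List (Fin k)} (hu : u.length ≤ M) (hu' : u'.length ≤ M)
    (he : img hk0 hM F p0 u = img hk0 hM F p0 u') : u = u' := by
  rcases list_tricho u u' with hc | hc | ⟨q0, a, b, s1, t1, hab, rfl, rfl⟩
  · rcases lt_or_eq_of_le hc.length_le with h | h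
    · exact absurd (he ▸ length_img_mono hk0 hM F hp0 hFp0 hmin h hu') (lt_irrefl _)
    · exact hc.eq_of_length_le (le_of_eq h.symm)
  · rcases lt_or_eq_of_le hc.length_le with h | h
    · exact absurd (he ▸ length_img_mono hk0 hM F hp0 hFp0 hmin h hu) (lt_irrefl _)
    · exact (hc.eq_of_length_le (le_of_eq h.symm)).symm
  · exfalso
    obtain ⟨S1, hS1⟩ := img_snoc hk0 hM F hp0 hFp0 hmin q0 a s1 hu
    obtain ⟨T1, hT1⟩ := img_snoc hk0 hM F hp0 hFp0 hmin q0 b t1 hu'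
    rw [hS1, hT1] at he
    have hcc := List.append_cancel_left he
    simp only [List.cons.injEq] at hcc
    exact hab hcc.1

end Img

end HLP
namespace HLP

lemma subsingleton_of_height_one {T : OTree} {k : ℕ} (hreg : Regular T k 1)
    (v w : Fin T.card) : v = w := by
  have h0 : 0 < T.card := Nat.pos_of_ne_zero fun h0 => Nat.one_ne_zero (hreg.2.2.mp h0)
  obtain ⟨r, hr⟩ := exists_root h0
  have hv : r = v := eq_of_le_of_ht_le (hr v) (by rw [ht_root hr]; exact ht_le_h hreg v)
  have hw : r = w := eq_of_le_of_ht_le (hr w) (by rw [ht_root hr]; exact ht_le_h hreg w)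
  rw [← hv, ← hw]

end HLP

open HLP

/-- Halpern–Läuchli theorem for strong subtrees (product version for leaves): for
`k ≥ 1`, `d > 0`, `t ≥ 1` and `m`, there is `n` such that for any regular ordered trees
`Tm`, `Tn` with branching `k` and heights `m`, `n`, every `d`-coloring of the `t`-fold
product of `leaves(Tn)` admits a strong sequence of leaf preserving embeddings
`g₁, …, g_t : Tm → Tn` with `g₁(leaves Tm) × ⋯ × g_t(leaves Tm)` monochromatic. -/
theorem halpern_laeuchli_leaves (k d t m : ℕ) (hk : 1 ≤ k) (hd : 0 < d) (ht : 1 ≤ t) :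
    ∃ n : ℕ, ∀ Tm Tn : OTree, Regular Tm k m → Regular Tn k n →
      ∀ C : (Fin t → Fin Tn.card) → Fin d,
        ∃ g : Fin t → (Fin Tm.card → Fin Tn.card),
          (∀ i, IsEmb Tm Tn (g i) ∧ Strong Tm Tn (g i) ∧ LeafPres Tm Tn (g i)) ∧
          (∀ i j x y, Tm.Leaf x → Tm.Leaf y →
            Tn.ht (Tn.meet (g i x) (g i y)) = Tn.ht (Tn.meet (g j x) (g j y))) ∧
          ∃ c : Fin d, ∀ p : Fin t → Fin Tm.card, (∀ i, Tm.Leaf (p i)) →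
            C (fun i => g i (p i)) = c := by
  rcases Nat.lt_or_ge m 2 with hm2 | hm2
  · -- degenerate cases m = 0 and m = 1
    refine ⟨1, ?_⟩
    intro Tm Tn hTm hTn C
    have hm01 : m = 0 ∨ m = 1 := by omega
    rcases hm01 with rfl | rfl
    · -- m = 0 : Tm is empty
      have hcard : Tm.card = 0 := hTm.2.2.mpr rfl
      refine ⟨fun _ v => (Fin.cast hcard v).elim0, ?_, ?_, ?_⟩
      · intro i
        refine ⟨⟨?_, ?_, ?_, ?_⟩, ?_, ?_⟩
        · intro v w _; exact (Fin.cast hcard v).elim0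
        · intro v w; exact (Fin.cast hcard v).elim0
        · intro v w _; exact (Fin.cast hcard v).elim0
        · intro v w₁ w₂ _ _ _ _; exact (Fin.cast hcard v).elim0
        · intro v w _; exact (Fin.cast hcard v).elim0
        · intro v _; exact (Fin.cast hcard v).elim0
      · intro i j x y _ _; exact (Fin.cast hcard x).elim0
      · exact ⟨⟨0, hd⟩, fun p _ => (Fin.cast hcard (p ⟨0, ht⟩)).elim0⟩
    · -- m = 1 : both trees are single points
      have hsm := subsingleton_of_height_one hTm
      have hsn := subsingleton_of_height_one hTn
      have h0n : 0 < Tn.card := Nat.pos_of_ne_zero fun h0 => Nat.one_ne_zero (hTn.2.2.mp h0)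
      obtain ⟨rn, hrn⟩ := exists_root h0n
      refine ⟨fun _ _ => rn, ?_, ?_, ?_⟩
      · intro i
        refine ⟨⟨?_, ?_, ?_, ?_⟩, ?_, ?_⟩
        · intro v w _; exact hsm v w
        · intro v w; exact hsn _ _
        · intro v w _; exact (Tn.lex_total rn rn).elim id id
        · intro v w₁ w₂ _ _ _ hex
          obtain ⟨v', hv', _⟩ := hex
          exact absurd (hsm v v') hv'.2.1
        · intro v w _; rfl
        · intro v _ w hw; exact hsn w rn
      · intro i j x y _ _; rfl
      · exact ⟨C fun _ => rn, fun p _ => rfl⟩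
  · -- main case m ≥ 2
    have hM : 0 < m - 1 := by omega
    obtain ⟨ι, hι, hHJ⟩ := Combinatorics.Line.exists_mono_in_high_dimension
      (Fin t → Fin (m - 1) → Fin k) (Fin d)
    letI : Fintype ι := hι
    refine ⟨(m - 1) * Fintype.card ι + 1, ?_⟩
    intro Tm Tn hTm hTn C
    set M := m - 1 with hM_def
    set N := Fintype.card ι with hN_def
    have hk0 : 0 < k := hk
    have h0m : 0 < Tm.card := Nat.pos_of_ne_zero fun h0 => by
      have := hTm.2.2.mp h0; omega
    have h0n : 0 < Tn.card := Nat.pos_of_ne_zero fun h0 => by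
      have := hTn.2.2.mp h0; omega
    obtain ⟨rm, hrm⟩ := exists_root h0m
    obtain ⟨rn, hrn⟩ := exists_root h0n
    choose str hstr1 hstr2 using nd_surj hTm hrm
    have hstrlt : ∀ v : Fin Tm.card, (str v).length < m := by
      intro v
      have h1 := hstr1 v
      have h2 := ht_le_h hTm v
      omega
    have hstrlen : ∀ v : Fin Tm.card, (str v).length ≤ M := by
      intro v
      have := hstrlt v
      omega
    have hstrnd : ∀ s : List (Fin k), s.length < m → str (nd Tm k rm s) = s := by
      intro s hs
      exact nd_inj hTm hrm _ _ (hstrlt _) hs (hstr2 _)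
    obtain ⟨e⟩ : Nonempty (ι ≃ Fin N) := ⟨Fintype.equivFin ι⟩
    -- the auxiliary coloring of words
    obtain ⟨C', hC'⟩ : ∃ C' : (ι → (Fin t → Fin M → Fin k)) → Fin d,
        ∀ w, C' w = C fun i => nd Tn k rn (blockStr k M N hM fun p j => w (e.symm p) i j) :=
      ⟨_, fun _ => rfl⟩
    obtain ⟨ℓ, c, hmono⟩ := hHJ C'
    -- minimal wildcard coordinate
    have hWne : (Finset.univ.filter fun p : Fin N => ℓ.idxFun (e.symm p) = none).Nonempty := by
      obtain ⟨i0, hi0⟩ := ℓ.proper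
      exact ⟨e i0, by simp [hi0]⟩
    obtain ⟨p0f, hp0fmem, hp0fmin⟩ : ∃ p0f : Fin N, ℓ.idxFun (e.symm p0f) = none ∧
        ∀ p : Fin N, ℓ.idxFun (e.symm p) = none → p0f ≤ p := by
      refine ⟨Finset.min' _ hWne, ?_, ?_⟩
      · have := Finset.min'_mem _ hWne
        simpa using this
      · intro p hp
        exact Finset.min'_le _ p (by simp [hp])
    set p0 : ℕ := (p0f : ℕ) with hp0_def
    have hp0 : p0 < N := p0f.isLt
    -- substitution patterns
    obtain ⟨F, hF⟩ : ∃ F : Fin t → Fin N → Option (Fin M → Fin k),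
        ∀ i p, F i p = (ℓ.idxFun (e.symm p)).map fun a => a i := ⟨_, fun _ _ => rfl⟩
    have hFp0 : ∀ i : Fin t, F i ⟨p0, hp0⟩ = none := by
      intro i
      rw [hF, Fin.eta, hp0fmem, Option.map_none]
    have hFmin : ∀ (i : Fin t) (p : Fin N), F i p = none → p0 ≤ (p : ℕ) := by
      intro i p hp
      rw [hF, Option.map_eq_none_iff] at hp
      exact hp0fmin p hp
    -- the embeddings
    obtain ⟨G, hG⟩ : ∃ G : Fin t → Fin Tm.card → Fin Tn.card,
        ∀ i v, G i v = nd Tn k rn (img hk0 hM (F i) p0 (str v)) := ⟨_, fun _ _ => rfl⟩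
    have hlen_img : ∀ (i : Fin t) (v : Fin Tm.card),
        (img hk0 hM (F i) p0 (str v)).length < M * N + 1 := fun i v =>
      Nat.lt_succ_of_le (length_img_le hk0 hM (F i) hp0 (hFp0 i) (hFmin i) _ (hstrlen v))
    -- meet morphism
    have hmeetg : ∀ (i : Fin t) (v w : Fin Tm.card),
        Tn.meet (G i v) (G i w) = G i (Tm.meet v w) := by
      intro i v w
      have h1 : Tm.meet v w = nd Tm k rm (lcp (str v) (str w)) := by
        conv_lhs => rw [← hstr2 v, ← hstr2 w]
        exact meet_nd hTm hrm (hstrlt v) (hstrlt w)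
      have hlcp_len : (lcp (str v) (str w)).length < m :=
        lt_of_le_of_lt (lcp_prefix_left _ _).length_le (hstrlt v)
      simp only [h1, hG]
      rw [hstrnd _ hlcp_len,
        meet_nd hTn hrn (hlen_img i v) (hlen_img i w),
        img_lcp hk0 hM (F i) hp0 (hFp0 i) (hFmin i) (hstrlen v) (hstrlen w)]
    refine ⟨G, ?_, ?_, ?_⟩
    · -- embedding properties
      intro i
      refine ⟨⟨?_, ?_, ?_, ?_⟩, ?_, ?_⟩
      · -- injective
        intro v w hvw
        simp only [hG] at hvw
        have him := nd_inj hTn hrn _ _ (hlen_img i v) (hlen_img i w) hvw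
        have hst := img_inj hk0 hM (F i) hp0 (hFp0 i) (hFmin i) (hstrlen v) (hstrlen w) him
        rw [← hstr2 v, ← hstr2 w, hst]
      · -- meet morphism
        intro v w
        exact (hmeetg i v w).symm
      · -- lex preservation
        intro v w hlex
        by_cases hvw : v = w
        · subst hvw
          exact (Tn.lex_total _ _).elim id id
        rcases list_tricho (str v) (str w) with hc | hc | ⟨q0, a, b, s1, t1, hab, hsv, hsw⟩
        · simp only [hG]
          exact Tn.le_lex _ _ (nd_prefix_le
            (img_prefix hk0 hM (F i) hp0 (hFp0 i) (hFmin i) hc (hstrlen w)))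
        · exfalso
          have hle : Tm.le w v := by
            rw [← hstr2 v, ← hstr2 w]
            exact nd_prefix_le hc
          exact hvw (Tm.lex_antisymm _ _ hlex (Tm.le_lex _ _ hle))
        · rcases lt_trichotomy a b with hab' | rfl | hab'
          · obtain ⟨S1, hS1⟩ := img_snoc hk0 hM (F i) hp0 (hFp0 i) (hFmin i) q0 a s1
              (hsv ▸ hstrlen v)
            obtain ⟨T1, hT1⟩ := img_snoc hk0 hM (F i) hp0 (hFp0 i) (hFmin i) q0 b t1
              (hsw ▸ hstrlen w)
            have hlen1 : (img hk0 hM (F i) p0 q0 ++ a :: S1).length < M * N + 1 := by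
              rw [← hS1]
              exact hsv ▸ hlen_img i v
            have hlen2 : (img hk0 hM (F i) p0 q0 ++ b :: T1).length < M * N + 1 := by
              rw [← hT1]
              exact hsw ▸ hlen_img i w
            simp only [hG, hsv, hsw, hS1, hT1]
            exact lex_nd_of_lt hTn hrn hab' hlen1 hlen2
          · exact absurd rfl hab
          · exfalso
            have hlexwv : Tm.lex w v := by
              rw [← hstr2 v, ← hstr2 w, hsv, hsw]
              exact lex_nd_of_lt hTm hrm hab' (hsw ▸ hstrlt w) (hsv ▸ hstrlt v)
            exact hvw (Tm.lex_antisymm _ _ hlex hlexwv)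
      · -- immediate-successor condition
        intro v w₁ w₂ hw1 hw2 hlex12 hex
        obtain ⟨v', hv', _⟩ := hex
        have hnlv : ¬ Tm.Leaf v := not_leaf_of_lt hv'.1 hv'.2.1
        have hlenv : (str v).length < M := by
          have h1 := (not_leaf_iff_ht hTm).1 hnlv
          have h2 := hstr1 v
          omega
        have hivlen : (img hk0 hM (F i) p0 (str v)).length = p0 * M + (str v).length := by
          rw [length_img hk0 hM (F i) hp0 (hFp0 i) (hFmin i) _ (hstrlen v), if_neg (by omega)]
        have hb2 : (p0 + 1) * M ≤ N * M := Nat.mul_le_mul_right _ (by omega)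
        rw [Nat.succ_mul] at hb2
        have hcomm : N * M = M * N := Nat.mul_comm _ _
        obtain ⟨τ, hτ1, hτ2⟩ := nd_surj hTn hrn w₁
        have hhtw1 : Tn.ht w₁ = Tn.ht (G i v) + 1 := ht_imSucc hw1
        have hhtG : Tn.ht (G i v) = (img hk0 hM (F i) p0 (str v)).length + 1 := by
          rw [hG]
          exact ht_nd hTn hrn _ (hlen_img i v)
        have hτlen : τ.length = (img hk0 hM (F i) p0 (str v)).length + 1 := by omega
        have hτlen' : τ.length < M * N + 1 := by omega
        have hpre : img hk0 hM (F i) p0 (str v) <+: τ := by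
          refine (nd_le_nd_iff hTn hrn (hlen_img i v) hτlen').1 ?_
          rw [hτ2, ← hG]
          exact hw1.1
        have hplt : (img hk0 hM (F i) p0 (str v)).length < τ.length := by omega
        obtain ⟨u1, hu1⟩ := prefix_ext hpre hplt
        have hu1nil : u1 = [] := by
          have hlen := congrArg List.length hu1
          simp only [List.length_append, List.length_cons] at hlen
          have : u1.length = 0 := by omega
          exact List.length_eq_zero_iff.1 this
        subst hu1nil
        set aτ := τ[(img hk0 hM (F i) p0 (str v)).length]'hplt with haτ
        have hslen : (str v ++ [aτ]).length < m := by simp; omega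
        refine ⟨nd Tm k rm (str v ++ [aτ]), ?_, ?_⟩
        · have him := imSucc_nd hTm hrm (s := str v) (by omega) aτ
          rwa [hstr2 v] at him
        · rw [hG, hstrnd _ hslen]
          obtain ⟨S1, hS1⟩ := img_snoc hk0 hM (F i) hp0 (hFp0 i) (hFmin i) (str v) aτ []
            (by simp; omega)
          rw [← hτ2, hu1]
          apply nd_prefix_le
          rw [hS1]
          exact ⟨S1, by simp⟩
      · -- strong
        intro v w hvw
        simp only [hG]
        rw [ht_nd hTn hrn _ (hlen_img i v), ht_nd hTn hrn _ (hlen_img i w)]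
        have hlen : (str v).length = (str w).length := by
          have h1 := hstr1 v
          have h2 := hstr1 w
          omega
        rw [length_img hk0 hM (F i) hp0 (hFp0 i) (hFmin i) _ (hstrlen v),
          length_img hk0 hM (F i) hp0 (hFp0 i) (hFmin i) _ (hstrlen w), hlen]
      · -- leaf preserving
        intro v hv
        rw [hG]
        have hlenM : (str v).length = M := by
          have h1 := (leaf_iff_ht hTm).1 hv
          have h2 := hstr1 v
          omega
        rw [leaf_nd_iff hTn hrn (hlen_img i v),
          length_img hk0 hM (F i) hp0 (hFp0 i) (hFmin i) _ (hstrlen v), if_pos hlenM]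
        omega
    · -- strong sequence: meet heights agree
      intro i j x y hx hy
      rw [hmeetg i x y, hmeetg j x y]
      simp only [hG]
      rw [ht_nd hTn hrn _ (hlen_img i _), ht_nd hTn hrn _ (hlen_img j _),
        length_img hk0 hM (F i) hp0 (hFp0 i) (hFmin i) _ (hstrlen _),
        length_img hk0 hM (F j) hp0 (hFp0 j) (hFmin j) _ (hstrlen _)]
    · -- monochromatic
      refine ⟨c, ?_⟩
      intro p hp
      have hx := hmono fun i j => (str (p i)).getD j ⟨0, hk0⟩
      rw [hC'] at hx
      rw [← hx]
      congr 1
      funext i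
      rw [hG]
      congr 1
      have hlenM : (str (p i)).length = M := by
        have h1 := (leaf_iff_ht hTm).1 (hp i)
        have h2 := hstr1 (p i)
        omega
      rw [img, if_pos hlenM, List.take_of_length_le (le_of_eq (length_blockStr hM _))]
      congr 1
      funext pp j
      rw [pat]
      rcases hFi : F i pp with _ | av
      · have hidx : ℓ.idxFun (e.symm pp) = none := by
          rw [hF, Option.map_eq_none_iff] at hFi
          exact hFi
        simp only [hFi, hidx, Option.getD_none, Combinatorics.Line.coe_apply]
      · rw [hF] at hFi
        rcases hidx : ℓ.idxFun (e.symm pp) with _ | a0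
        · rw [hidx] at hFi
          simp at hFi
        · rw [hidx] at hFi
          simp only [Option.map_some] at hFi
          simp only [hFi, hidx, Option.getD_some, Combinatorics.Line.coe_apply]
          rw [Option.some_inj.1 hFi]
end
end

section
/- Halpern–Läuchli theorem for strong subtrees (level product version): Fix k ≥ 1 and let T^n denote the regular ordered tree of height n with branching number k. Given d > 0, t ≥ 1, and m, there exists n such that for every d-coloring of the set of t-tuples (w₁,...,w_t) of nodes of T^n all of the same height, there exists a strong sequence of embeddings g₁,...,g_t : T^m → T^n such that the set {(g₁(v₁),...,g_t(v_t)) : v₁,...,v_t ∈ T^m, ht(v_i) = ht(v_j) for all i, j} is monochromatic. -/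
noncomputable section
open scoped Classical

namespace HLaux

/-- An ordered combinatorial pattern of dimension `m` in length `N`. -/
structure Pat (σ : Type) (m N : ℕ) where
  wf : ℕ → Option ℕ
  ph : ℕ → σ
  lv : ℕ → ℕ
  lv_lt : ∀ r, r < m → lv r < N
  lv_mono : ∀ r r', r < r' → r' < m → lv r < lv r'
  wf_lv : ∀ r, r < m → wf (lv r) = some r
  wf_ge : ∀ q r, q < N → wf q = some r → r < m ∧ lv r ≤ q

namespace Pat

variable {σ : Type} {m N : ℕ}

/-- Evaluation of positions. -/
def E (P : Pat σ m N) (b : ℕ → σ) (q : ℕ) : σ := (P.wf q).elim (P.ph q) b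

/-- Node word at level `j` (for `j < m`). -/
def nodeW (P : Pat σ m N) (j : ℕ) (b : ℕ → σ) : List σ :=
  List.ofFn (fun q : Fin (P.lv j) => P.E b q)

theorem length_nodeW (P : Pat σ m N) (j : ℕ) (b : ℕ → σ) :
    (P.nodeW j b).length = P.lv j := by simp [nodeW]

theorem getElem_nodeW (P : Pat σ m N) (j : ℕ) (b : ℕ → σ) (q : ℕ)
    (h : q < (P.nodeW j b).length) :
    (P.nodeW j b)[q] = P.E b q := by
  simp only [nodeW] at h ⊢
  rw [List.getElem_ofFn]

end Pat

/-- Core combinatorial theorem: patterns with each level monochromatic. -/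
theorem core (σ : Type) [Fintype σ] [Nonempty σ] (d m : ℕ) :
    ∃ N, ∀ C : List σ → Fin d, ∃ P : Pat σ m N,
      ∀ j, j < m → ∃ c, ∀ b : ℕ → σ, C (P.nodeW j b) = c := by
  induction m with
  | zero =>
    refine ⟨0, fun C => ⟨⟨fun _ => none, fun _ => Classical.arbitrary σ, fun _ => 0,
      by omega, by omega, by omega, by omega⟩, by omega⟩⟩
  | succ m IH =>
    obtain ⟨R, hR⟩ := IH
    obtain ⟨D, hHJ⟩ := Combinatorics.Subspace.exists_mono_in_high_dimension_fin σ (Fin d) (Fin R)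
    refine ⟨D + 1, fun C => ?_⟩
    obtain ⟨l, ctop, hctop⟩ := hHJ (fun x => C (List.ofFn x))
    have he : ∀ e : Fin R, ∃ i : ℕ, ∃ h : i < D, l.idxFun ⟨i, h⟩ = Sum.inr e := by
      intro e
      obtain ⟨i, hi⟩ := l.proper e
      exact ⟨i.1, i.2, by simpa using hi⟩
    set μ : Fin R → ℕ := fun e => Nat.find (he e) with hμdef
    have hμD : ∀ e, μ e < D := fun e => (Nat.find_spec (he e)).1
    have hμspec : ∀ e, l.idxFun ⟨μ e, hμD e⟩ = Sum.inr e := fun e => (Nat.find_spec (he e)).2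
    have hμmin : ∀ (e : Fin R) (q : ℕ) (hq : q < D), l.idxFun ⟨q, hq⟩ = Sum.inr e → μ e ≤ q :=
      fun e q hq hfq => Nat.find_le ⟨hq, hfq⟩
    have hμinj : Function.Injective μ := by
      intro e e' hee
      have h1 := hμspec e
      have h2 := hμspec e'
      rw [show (⟨μ e, hμD e⟩ : Fin D) = ⟨μ e', hμD e'⟩ from Fin.ext hee] at h1
      rw [h1] at h2
      exact (Sum.inr.injEq _ _).mp h2
    set π : Equiv.Perm (Fin R) := Tuple.sort μ with hπdef
    have hmono : Monotone (μ ∘ π) := Tuple.monotone_sort μ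
    have hsm : StrictMono (μ ∘ π) :=
      hmono.strictMono_of_injective (hμinj.comp π.injective)
    -- total extension of idxFun
    set idx : ℕ → σ ⊕ Fin R := fun q =>
      if h : q < D then l.idxFun ⟨q, h⟩ else Sum.inl (Classical.arbitrary σ) with hidxdef
    have hidx : ∀ (q : ℕ) (h : q < D), idx q = l.idxFun ⟨q, h⟩ := by
      intro q h
      simp only [hidxdef, dif_pos h]
    have hidxμ : ∀ e, idx (μ e) = Sum.inr e := fun e => (hidx _ (hμD e)).trans (hμspec e)
    have hidxmin : ∀ (e : Fin R) (q : ℕ), q < D → idx q = Sum.inr e → μ e ≤ q := by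
      intro e q hq hfq
      rw [hidx q hq] at hfq
      exact hμmin e q hq hfq
    set yw : List σ → Fin R → σ :=
      fun w e => w.getD (π.symm e) (Classical.arbitrary σ) with hywdef
    set trunc : List σ → ℕ :=
      fun w => if h : w.length < R then μ (π ⟨w.length, h⟩) else D with htruncdef
    have htrunc_le : ∀ w, trunc w ≤ D := by
      intro w
      by_cases h : w.length < R
      · simp only [htruncdef, dif_pos h]
        exact le_of_lt (hμD _)
      · simp [htruncdef, dif_neg h]
    set C' : List σ → Fin d := fun w =>
      C (List.ofFn (fun i : Fin (trunc w) =>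
        l.toFun (yw w) ⟨i.1, lt_of_lt_of_le i.2 (htrunc_le w)⟩)) with hC'def
    obtain ⟨Pin, hPin⟩ := hR C'
    set wfP : ℕ → Option ℕ := fun q => if q < D then
        Sum.elim (fun _ => none) (fun e : Fin R => Pin.wf (π.symm e)) (idx q)
        else if q = D then some m else none with hwfPdef
    set phP : ℕ → σ := fun q => if q < D then
        Sum.elim id (fun e : Fin R => Pin.ph (π.symm e)) (idx q)
        else Classical.arbitrary σ with hphPdef
    set lvP : ℕ → ℕ := fun r => if h : r < m then μ (π ⟨Pin.lv r, Pin.lv_lt r h⟩) else D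
      with hlvPdef
    have hlv_lt : ∀ r, r < m + 1 → lvP r < D + 1 := by
      intro r hr
      by_cases h : r < m
      · simp only [hlvPdef, dif_pos h]; exact lt_trans (hμD _) (by omega)
      · simp [hlvPdef, dif_neg h]
    have hlv_mono : ∀ r r', r < r' → r' < m + 1 → lvP r < lvP r' := by
      intro r r' hrr hr'
      by_cases h' : r' < m
      · have h : r < m := lt_trans hrr h'
        simp only [hlvPdef, dif_pos h, dif_pos h']
        exact hsm (show (⟨Pin.lv r, _⟩ : Fin R) < ⟨Pin.lv r', _⟩ from
          Pin.lv_mono r r' hrr h')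
      · have h : r < m := by omega
        simp only [hlvPdef, dif_pos h, dif_neg h']
        exact hμD _
    have hwf_lv : ∀ r, r < m + 1 → wfP (lvP r) = some r := by
      intro r hr
      by_cases h : r < m
      · have h1 : lvP r = μ (π ⟨Pin.lv r, Pin.lv_lt r h⟩) := by
          simp only [hlvPdef, dif_pos h]
        rw [h1]
        simp only [hwfPdef, if_pos (hμD (π ⟨Pin.lv r, Pin.lv_lt r h⟩)), hidxμ, Sum.elim_inr]
        rw [Equiv.symm_apply_apply]
        exact_mod_cast Pin.wf_lv r h
      · have hrm : r = m := by omega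
        rw [hrm]
        have h1 : lvP m = D := by simp [hlvPdef]
        rw [h1]
        simp [hwfPdef]
    have hwf_ge : ∀ q r, q < D + 1 → wfP q = some r → r < m + 1 ∧ lvP r ≤ q := by
      intro q r hq hwf
      by_cases h : q < D
      · simp only [hwfPdef, if_pos h] at hwf
        rcases hfq : idx q with a | e
        · rw [hfq] at hwf; simp at hwf
        · rw [hfq] at hwf
          simp only [Sum.elim_inr] at hwf
          obtain ⟨hrm, hle⟩ := Pin.wf_ge (π.symm e) r (π.symm e).2 hwf
          refine ⟨by omega, ?_⟩
          have h1 : μ (π ⟨Pin.lv r, Pin.lv_lt r hrm⟩) ≤ μ (π (π.symm e)) := by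
            apply hmono
            exact hle
          rw [Equiv.apply_symm_apply] at h1
          have h2 : μ e ≤ q := hidxmin e q h hfq
          simp only [hlvPdef, dif_pos hrm]
          omega
      · have hqD : q = D := by omega
        have hmr : m = r := by
          rw [hqD] at hwf
          simpa [hwfPdef] using hwf
        refine ⟨by omega, ?_⟩
        rw [← hmr]
        simp [hlvPdef, hqD]
    refine ⟨⟨wfP, phP, lvP, hlv_lt, hlv_mono, hwf_lv, hwf_ge⟩, ?_⟩
    set P : Pat σ (m + 1) (D + 1) := ⟨wfP, phP, lvP, hlv_lt, hlv_mono, hwf_lv, hwf_ge⟩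
      with hPdef
    have hPwf : P.wf = wfP := rfl
    have hPph : P.ph = phP := rfl
    have hPlv : P.lv = lvP := rfl
    -- common computation of entries
    have hEntry : ∀ (b : ℕ → σ) (q : ℕ) (hq : q < D),
        P.E b q = l.toFun (fun e => Pin.E b (π.symm e)) ⟨q, hq⟩ := by
      intro b q hqD
      simp only [Pat.E, hPwf, hPph, hwfPdef, hphPdef, if_pos hqD]
      rcases hfq : idx q with a | e
      · simp only [Sum.elim_inl, Option.elim_none, Option.elim_some, Option.elim, id]
        have : l.idxFun ⟨q, hqD⟩ = Sum.inl a := by rw [← hidx q hqD]; exact hfq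
        exact (Combinatorics.Subspace.apply_inl this).symm
      · simp only [Sum.elim_inr]
        have : l.idxFun ⟨q, hqD⟩ = Sum.inr e := by rw [← hidx q hqD]; exact hfq
        rw [Combinatorics.Subspace.apply_inr this]
    intro j hj
    by_cases hjm : j < m
    · -- inner levels
      obtain ⟨c, hc⟩ := hPin j hjm
      refine ⟨c, fun b => ?_⟩
      have hw : (Pin.nodeW j b).length = Pin.lv j := Pin.length_nodeW j b
      have hwR : (Pin.nodeW j b).length < R := by rw [hw]; exact Pin.lv_lt j hjm
      have htr : trunc (Pin.nodeW j b) = μ (π ⟨Pin.lv j, Pin.lv_lt j hjm⟩) := by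
        simp only [htruncdef, dif_pos hwR]
        congr 2
        exact Fin.ext hw
      have hlvj : P.lv j = μ (π ⟨Pin.lv j, Pin.lv_lt j hjm⟩) := by
        rw [hPlv]; simp only [hlvPdef, dif_pos hjm]
      rw [← hc b]
      show C (P.nodeW j b) = C' (Pin.nodeW j b)
      simp only [hC'def]
      congr 1
      apply List.ext_getElem
      · simp only [Pat.length_nodeW, List.length_ofFn, htr, hlvj, hPlv, hlvPdef,
          dif_pos hjm]
      · intro q h1 h2
        rw [Pat.getElem_nodeW]
        rw [List.getElem_ofFn]
        have hqlt : q < μ (π ⟨Pin.lv j, Pin.lv_lt j hjm⟩) := by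
          rw [Pat.length_nodeW, hlvj] at h1; exact h1
        have hqD : q < D := lt_trans hqlt (hμD _)
        rw [hEntry b q hqD]
        -- now both sides are l.toFun applied; show the parameter functions agree where needed
        rcases hfq : idx q with a | e
        · have ha : l.idxFun ⟨q, hqD⟩ = Sum.inl a := by rw [← hidx q hqD]; exact hfq
          rw [Combinatorics.Subspace.apply_inl ha, Combinatorics.Subspace.apply_inl ha]
        · have ha : l.idxFun ⟨q, hqD⟩ = Sum.inr e := by rw [← hidx q hqD]; exact hfq
          rw [Combinatorics.Subspace.apply_inr ha, Combinatorics.Subspace.apply_inr ha]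
          have hμe : μ e ≤ q := hμmin e q hqD ha
          have hlt : (π.symm e : Fin R) < ⟨Pin.lv j, Pin.lv_lt j hjm⟩ := by
            by_contra hcon
            push_neg at hcon
            have := hmono hcon
            simp only [Function.comp] at this
            rw [Equiv.apply_symm_apply] at this
            omega
          have hltn : ((π.symm e : Fin R) : ℕ) < (Pin.nodeW j b).length := by
            rw [hw]; exact_mod_cast hlt
          simp only [hywdef]
          rw [List.getD_eq_getElem _ _ hltn]
          rw [Pin.getElem_nodeW j b _ hltn]
    · -- top level
      have hjm' : j = m := by omega
      refine ⟨ctop, fun b => ?_⟩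
      have hctb := hctop (fun e => Pin.E b (π.symm e))
      simp only at hctb
      rw [← hctb]
      congr 1
      apply List.ext_getElem
      · simp only [Pat.length_nodeW, List.length_ofFn, hPlv, hlvPdef, hjm',
          dif_neg (lt_irrefl m)]
      · intro q h1 h2
        rw [Pat.getElem_nodeW]
        rw [List.getElem_ofFn]
        have hqD : q < D := by
          rw [Pat.length_nodeW, hPlv] at h1
          simp only [hlvPdef, hjm', dif_neg (lt_irrefl m)] at h1
          exact h1
        rw [hEntry b q hqD]

/-- Strengthened core: one color for all levels, and `N` is positive. -/
theorem core' (σ : Type) [Fintype σ] [Nonempty σ] (d m : ℕ) (hd : 0 < d) (hm : 0 < m) :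
    ∃ N, 0 < N ∧ ∀ C : List σ → Fin d, ∃ P : Pat σ m N, ∃ c : Fin d,
      ∀ j, j < m → ∀ b : ℕ → σ, C (P.nodeW j b) = c := by
  set m' : ℕ := d * (m - 1) + 1 with hm'def
  obtain ⟨N, hN⟩ := core σ d m'
  have hNpos : 0 < N := by
    obtain ⟨P', _⟩ := hN (fun _ => ⟨0, hd⟩)
    have := P'.lv_lt 0 (by omega)
    omega
  refine ⟨N, hNpos, fun C => ?_⟩
  obtain ⟨P', hP'⟩ := hN C
  set col : ℕ → Fin d := fun j => if h : j < m' then (hP' j h).choose else ⟨0, hd⟩ with hcoldef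
  have hcol : ∀ j (h : j < m') (b : ℕ → σ), C (P'.nodeW j b) = col j := by
    intro j h b
    simp only [hcoldef, dif_pos h]
    exact (hP' j h).choose_spec b
  -- pigeonhole
  have hpig : ∃ c : Fin d, m - 1 <
      ((Finset.range m').filter (fun j => col j = c)).card := by
    have := Finset.exists_lt_card_fiber_of_mul_lt_card_of_maps_to
      (s := Finset.range m') (t := (Finset.univ : Finset (Fin d))) (f := col) (n := m - 1)
      (fun a _ => Finset.mem_univ _) (by
        simp only [Finset.card_range, Finset.card_univ, Fintype.card_fin]
        omega)
    obtain ⟨c, _, hc⟩ := this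
    exact ⟨c, hc⟩
  obtain ⟨c, hc⟩ := hpig
  set S : Finset ℕ := (Finset.range m').filter (fun j => col j = c) with hSdef
  set L : List ℕ := S.sort (· ≤ ·) with hLdef
  have hLlen : L.length = S.card := Finset.length_sort _
  have hLm : m ≤ L.length := by omega
  have hLsorted : L.Pairwise (· < ·) := (Finset.sortedLT_sort S).pairwise
  set e : ℕ → ℕ := fun j => L.getD j 0 with hedef
  have heS : ∀ j, j < m → e j ∈ S := by
    intro j hj
    have hjl : j < L.length := by omega
    simp only [hedef]
    rw [List.getD_eq_getElem _ _ hjl]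
    have : L[j] ∈ L := List.getElem_mem hjl
    rwa [Finset.mem_sort] at this
  have heM : ∀ j, j < m → e j < m' := by
    intro j hj
    have := heS j hj
    rw [hSdef, Finset.mem_filter, Finset.mem_range] at this
    exact this.1
  have heC : ∀ j, j < m → col (e j) = c := by
    intro j hj
    have := heS j hj
    rw [hSdef, Finset.mem_filter] at this
    exact this.2
  have heMono : ∀ j j', j < j' → j' < m → e j < e j' := by
    intro j j' hjj hj'
    have h1 : j < L.length := by omega
    have h2 : j' < L.length := by omega
    simp only [hedef]
    rw [List.getD_eq_getElem _ _ h1, List.getD_eq_getElem _ _ h2]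
    exact List.pairwise_iff_getElem.mp hLsorted j j' h1 h2 hjj
  -- inverse of e
  set einv : ℕ → Option ℕ := fun r =>
    if h : ∃ j, j < m ∧ e j = r then some (Nat.find h) else none with heinvdef
  have heinv : ∀ j, j < m → einv (e j) = some j := by
    intro j hj
    have hex : ∃ j', j' < m ∧ e j' = e j := ⟨j, hj, rfl⟩
    simp only [heinvdef, dif_pos hex]
    congr 1
    have hspec := Nat.find_spec hex
    rcases lt_trichotomy (Nat.find hex) j with h | h | h
    · exact absurd hspec.2 (Nat.ne_of_lt (heMono _ j h hj))
    · exact h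
    · exact absurd hspec.2.symm (Nat.ne_of_lt (heMono j _ h hspec.1))
  have hmain : ∀ (PP : Pat σ m N), PP.wf = (fun q => (P'.wf q).bind einv) →
      PP.ph = (fun q => (P'.wf q).elim (P'.ph q) (fun _ => Classical.arbitrary σ)) →
      PP.lv = (fun j => P'.lv (e j)) →
      ∀ j, j < m → ∀ b : ℕ → σ, C (PP.nodeW j b) = c := by
    intro PP hw hp hl j hj b
    set b' : ℕ → σ := fun r => (einv r).elim (Classical.arbitrary σ) b with hb'def
    have hlist : PP.nodeW j b = P'.nodeW (e j) b' := by
      apply List.ext_getElem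
      · simp only [Pat.length_nodeW, hl]
      · intro q h1 h2
        rw [Pat.getElem_nodeW, Pat.getElem_nodeW]
        simp only [Pat.E, hw, hp]
        rcases hq' : P'.wf q with _ | r'
        · simp
        · simp [hb'def]
    rw [hlist, hcol (e j) (heM j hj) b']
    exact heC j hj
  refine ⟨⟨fun q => (P'.wf q).bind einv,
    fun q => (P'.wf q).elim (P'.ph q) (fun _ => Classical.arbitrary σ),
    fun j => P'.lv (e j), ?_, ?_, ?_, ?_⟩, c, ?_⟩
  · intro r hr
    exact P'.lv_lt _ (heM r hr)
  · intro r r' hrr hr'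
    exact P'.lv_mono _ _ (heMono r r' hrr hr') (heM r' hr')
  · intro r hr
    show (P'.wf (P'.lv (e r))).bind einv = some r
    rw [P'.wf_lv (e r) (heM r hr)]
    simp only [Option.bind_some, Option.bind]
    exact heinv r hr
  · intro q r hq hwf
    replace hwf : (P'.wf q).bind einv = some r := hwf
    rcases hq' : P'.wf q with _ | r'
    · rw [hq'] at hwf; simp at hwf
    · rw [hq'] at hwf
      simp only [Option.bind_some, Option.bind] at hwf
      have heinvr : einv r' = some r := hwf
      have hex : ∃ j, j < m ∧ e j = r' := by
        by_contra hcon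
        simp only [heinvdef, dif_neg hcon] at heinvr
        cases heinvr
      have hfind := Nat.find_spec hex
      have hreq : r = Nat.find hex := by
        simp only [heinvdef, dif_pos hex, Option.some.injEq] at heinvr
        exact heinvr.symm
      obtain ⟨hq2, hq3⟩ := P'.wf_ge q r' hq hq'
      refine ⟨by omega, ?_⟩
      have : e r = r' := by rw [hreq]; exact hfind.2
      show P'.lv (e r) ≤ q
      rw [this]
      exact hq3
  · exact hmain _ rfl rfl rfl

end HLaux

namespace HLtree

open OTree

variable {T : OTree}

/-! ### basic partial order facts -/

theorem preds_subset {u v : Fin T.card} (h : T.le u v) :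
    (Finset.univ.filter (fun z => T.le z u)) ⊆ (Finset.univ.filter (fun z => T.le z v)) := by
  intro z hz
  simp only [Finset.mem_filter, Finset.mem_univ, true_and] at hz ⊢
  exact T.le_trans _ _ _ hz h

theorem ht_le_of_le {u v : Fin T.card} (h : T.le u v) : T.ht u ≤ T.ht v :=
  Finset.card_le_card (preds_subset h)

theorem ht_lt_of_lt {u v : Fin T.card} (h : T.le u v) (hne : u ≠ v) : T.ht u < T.ht v := by
  apply Finset.card_lt_card
  refine ⟨preds_subset h, ?_⟩
  intro hsub
  have := hsub (by simp [T.le_refl] : v ∈ Finset.univ.filter (fun z => T.le z v))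
  simp only [Finset.mem_filter, Finset.mem_univ, true_and] at this
  exact hne (T.le_antisymm _ _ h this)

theorem eq_of_le_of_ht_le {u v : Fin T.card} (h : T.le u v) (hh : T.ht v ≤ T.ht u) : u = v := by
  by_contra hne
  exact absurd hh (not_le.mpr (ht_lt_of_lt h hne))

theorem one_le_ht (v : Fin T.card) : 1 ≤ T.ht v := by
  have hm : v ∈ Finset.univ.filter (fun u => T.le u v) := by simp [T.le_refl]
  exact Finset.card_pos.mpr ⟨v, hm⟩

theorem not_le_of_ht_eq {u v : Fin T.card} (hne : u ≠ v) (hh : T.ht u = T.ht v) :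
    ¬ T.le u v := fun h => hne (eq_of_le_of_ht_le h hh.ge)

/-! ### meet -/

theorem meet_le_left (v w : Fin T.card) : T.le (T.meet v w) v :=
  (Classical.choose_spec (T.meet_exists v w)).1

theorem meet_le_right (v w : Fin T.card) : T.le (T.meet v w) w :=
  (Classical.choose_spec (T.meet_exists v w)).2.1

theorem le_meet {v w z : Fin T.card} (hv : T.le z v) (hw : T.le z w) : T.le z (T.meet v w) :=
  (Classical.choose_spec (T.meet_exists v w)).2.2 z hv hw

theorem meet_eq_left {v w : Fin T.card} (h : T.le v w) : T.meet v w = v :=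
  T.le_antisymm _ _ (meet_le_left v w) (le_meet (T.le_refl v) h)

theorem meet_eq_right {v w : Fin T.card} (h : T.le w v) : T.meet v w = w :=
  T.le_antisymm _ _ (meet_le_right v w) (le_meet h (T.le_refl w))

theorem meet_self (v : Fin T.card) : T.meet v v = v := meet_eq_left (T.le_refl v)

/-! ### root -/

theorem exists_bot (h0 : 0 < T.card) : ∃ r : Fin T.card, ∀ v, T.le r v := by
  obtain ⟨r, _, hr⟩ := Finset.exists_min_image
    (Finset.univ : Finset (Fin T.card)) (fun v => T.ht v) ⟨⟨0, h0⟩, Finset.mem_univ _⟩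
  refine ⟨r, fun v => ?_⟩
  have hmr : T.meet r v = r := by
    apply eq_of_le_of_ht_le (meet_le_left r v)
    exact hr _ (Finset.mem_univ _)
  rw [← hmr]
  exact meet_le_right r v

def root (h0 : 0 < T.card) : Fin T.card := Classical.choose (exists_bot h0)

theorem root_le (h0 : 0 < T.card) (v : Fin T.card) : T.le (root h0) v :=
  Classical.choose_spec (exists_bot h0) v

theorem ht_root (h0 : 0 < T.card) : T.ht (root (T := T) h0) = 1 := by
  have h1 : Finset.univ.filter (fun z => T.le z (root (T := T) h0)) = {root h0} := by
    ext z
    simp only [Finset.mem_filter, Finset.mem_univ, true_and, Finset.mem_singleton]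
    constructor
    · intro h
      exact T.le_antisymm _ _ h (root_le h0 z)
    · rintro rfl
      exact T.le_refl _
  rw [OTree.ht, h1, Finset.card_singleton]

theorem eq_root_of_ht_eq_one (h0 : 0 < T.card) {v : Fin T.card} (hv : T.ht v = 1) :
    v = root h0 :=
  (eq_of_le_of_ht_le (root_le h0 v) (by rw [hv, ht_root])).symm

/-! ### immediate successors -/

theorem imSucc_ht {u v : Fin T.card} (h : T.ImSucc u v) : T.ht v = T.ht u + 1 := by
  obtain ⟨hle, hne, hmax⟩ := h
  have h1 : Finset.univ.filter (fun z => T.le z v) =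
      insert v (Finset.univ.filter (fun z => T.le z u)) := by
    ext z
    simp only [Finset.mem_filter, Finset.mem_univ, true_and, Finset.mem_insert]
    constructor
    · intro hzv
      rcases T.pred_linear v z u hzv hle with h' | h'
      · exact Or.inr h'
      · rcases hmax z h' hzv with h'' | h''
        · exact Or.inr (h'' ▸ T.le_refl u)
        · exact Or.inl h''
    · rintro (rfl | hzu)
      · exact T.le_refl _
      · exact T.le_trans _ _ _ hzu hle
  have hnotmem : v ∉ Finset.univ.filter (fun z => T.le z u) := by
    simp only [Finset.mem_filter, Finset.mem_univ, true_and]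
    intro hvu
    exact hne (T.le_antisymm _ _ hle hvu)
  rw [OTree.ht, OTree.ht, h1, Finset.card_insert_of_notMem hnotmem]

theorem exists_parent (h0 : 0 < T.card) {v : Fin T.card} (hv : 1 < T.ht v) :
    ∃ u, T.ImSucc u v := by
  have hvroot : v ≠ root h0 := by
    intro h
    rw [h, ht_root] at hv
    omega
  have hne : ((Finset.univ.filter (fun z => T.le z v)).erase v).Nonempty := by
    refine ⟨root h0, ?_⟩
    simp only [Finset.mem_erase, Finset.mem_filter, Finset.mem_univ, true_and]
    exact ⟨fun h => hvroot h.symm, root_le h0 v⟩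
  obtain ⟨u, hu, hmax⟩ := Finset.exists_max_image _ (fun z => T.ht z) hne
  simp only [Finset.mem_erase, Finset.mem_filter, Finset.mem_univ, true_and] at hu
  refine ⟨u, hu.2, hu.1, ?_⟩
  intro z hz1 hz2
  by_cases hzv : z = v
  · exact Or.inr hzv
  · left
    have hzin : z ∈ (Finset.univ.filter (fun z => T.le z v)).erase v := by
      simp only [Finset.mem_erase, Finset.mem_filter, Finset.mem_univ, true_and]
      exact ⟨hzv, hz2⟩
    exact (eq_of_le_of_ht_le hz1 (hmax z hzin)).symm

/-! ### children, sorted by lex -/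

instance lexTrans : IsTrans (Fin T.card) T.lex := ⟨T.lex_trans⟩
instance lexAntisymm : IsAntisymm (Fin T.card) T.lex := ⟨T.lex_antisymm⟩
instance lexTotal : IsTotal (Fin T.card) T.lex := ⟨T.lex_total⟩

def childList (v : Fin T.card) : List (Fin T.card) :=
  (Finset.univ.filter (fun w => T.ImSucc v w)).sort T.lex

theorem length_childList (v : Fin T.card) : (childList v).length = T.imCard v :=
  Finset.length_sort _

theorem mem_childList {v w : Fin T.card} : w ∈ childList v ↔ T.ImSucc v w := by
  rw [childList, Finset.mem_sort, Finset.mem_filter]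
  simp

def child (v : Fin T.card) (c : ℕ) : Fin T.card := (childList v).getD c v

theorem child_imSucc {v : Fin T.card} {c : ℕ} (hc : c < T.imCard v) :
    T.ImSucc v (child v c) := by
  have hlen : c < (childList v).length := by rw [length_childList]; exact hc
  rw [child, List.getD_eq_getElem _ _ hlen]
  exact mem_childList.mp (List.getElem_mem hlen)

theorem child_lex {v : Fin T.card} {c c' : ℕ} (hcc : c < c') (hc' : c' < T.imCard v) :
    T.lex (child v c) (child v c') ∧ child v c ≠ child v c' := by
  have h1 : c < (childList v).length := by rw [length_childList]; omega
  have h2 : c' < (childList v).length := by rw [length_childList]; exact hc'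
  rw [child, child, List.getD_eq_getElem _ _ h1, List.getD_eq_getElem _ _ h2]
  constructor
  · have hsorted : (childList v).Pairwise T.lex := Finset.pairwise_sort _ _
    exact List.pairwise_iff_getElem.mp hsorted c c' h1 h2 hcc
  · have hnd : (childList v).Nodup := Finset.sort_nodup _ _
    intro h
    have := List.Nodup.getElem_inj_iff hnd |>.mp h
    omega

theorem child_surj {v w : Fin T.card} (h : T.ImSucc v w) :
    ∃ c, c < T.imCard v ∧ child v c = w := by
  have : w ∈ childList v := mem_childList.mpr h
  obtain ⟨c, hc, hw⟩ := List.mem_iff_getElem.mp this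
  refine ⟨c, by rw [← length_childList]; exact hc, ?_⟩
  rw [child, List.getD_eq_getElem _ _ hc, hw]

/-! ### divergence -/

theorem meet_of_imSucc_ne {u x y v w : Fin T.card} (hx : T.ImSucc u x) (hy : T.ImSucc u y)
    (hxy : x ≠ y) (hv : T.le x v) (hw : T.le y w) : T.meet v w = u := by
  have hxyht : T.ht x = T.ht y := by rw [imSucc_ht hx, imSucc_ht hy]
  have hxw : ¬ T.le x w → True := fun _ => trivial
  -- any common lower bound of v and w is ≤ u
  have key : ∀ z, T.le z v → T.le z w → T.le z u := by
    intro z hzv hzw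
    rcases T.pred_linear v z x hzv hv with hzx | hxz
    · rcases T.pred_linear x z u hzx hx.1 with hzu | huz
      · exact hzu
      · rcases hx.2.2 z huz hzx with rfl | rfl
        · exact T.le_refl _
        · -- z = x, so x ≤ w; but then x and y are comparable, contradiction
          exfalso
          rcases T.pred_linear w z y hzw hw with h' | h'
          · exact (not_le_of_ht_eq hxy hxyht) h'
          · exact (not_le_of_ht_eq (Ne.symm hxy) hxyht.symm) h'
    · exfalso
      have hxw' : T.le x w := T.le_trans _ _ _ hxz hzw
      rcases T.pred_linear w x y hxw' hw with h' | h'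
      · exact (not_le_of_ht_eq hxy hxyht) h'
      · exact (not_le_of_ht_eq (Ne.symm hxy) hxyht.symm) h'
  apply T.le_antisymm
  · exact key _ (meet_le_left v w) (meet_le_right v w)
  · exact le_meet (T.le_trans _ _ _ hx.1 hv) (T.le_trans _ _ _ hy.1 hw)

theorem lex_lift {u x y v w : Fin T.card} (hx : T.ImSucc u x) (hy : T.ImSucc u y)
    (hxy : x ≠ y) (hlex : T.lex x y) (hv : T.le x v) (hw : T.le y w) : T.lex v w := by
  have hxyht : T.ht x = T.ht y := by rw [imSucc_ht hx, imSucc_ht hy]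
  exact T.lex_compat x y v w (not_le_of_ht_eq hxy hxyht)
    (not_le_of_ht_eq (Ne.symm hxy) hxyht.symm) hlex hv hw

/-! ### leaves -/

theorem exists_leaf_above (v : Fin T.card) : ∃ w, T.le v w ∧ T.Leaf w := by
  have hne : (Finset.univ.filter (fun z => T.le v z)).Nonempty := ⟨v, by simp [T.le_refl]⟩
  obtain ⟨w, hw, hmax⟩ := Finset.exists_max_image _ (fun z => T.ht z) hne
  simp only [Finset.mem_filter, Finset.mem_univ, true_and] at hw
  refine ⟨w, hw, fun z hz => ?_⟩
  have hzin : z ∈ Finset.univ.filter (fun z => T.le v z) := by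
    simp only [Finset.mem_filter, Finset.mem_univ, true_and]
    exact T.le_trans _ _ _ hw hz
  exact (eq_of_le_of_ht_le hz (hmax z hzin)).symm

theorem lex_refl (v : Fin T.card) : T.lex v v := (T.lex_total v v).elim id id

theorem child_ne {v : Fin T.card} {c c' : ℕ} (hne : c ≠ c') (hc : c < T.imCard v)
    (hc' : c' < T.imCard v) : child v c ≠ child v c' := by
  rcases lt_or_gt_of_ne hne with h | h
  · exact (child_lex h hc').2
  · exact fun he => (child_lex h hc).2 he.symm

/-! ### longest common prefix -/

def lcp {α : Type*} [DecidableEq α] : List α → List α → List α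
  | [], _ => []
  | _ :: _, [] => []
  | a :: u, b :: v => if a = b then a :: lcp u v else []

theorem lcp_nil_left {α : Type*} [DecidableEq α] (v : List α) : lcp [] v = [] := by
  simp [lcp]

theorem lcp_nil_right {α : Type*} [DecidableEq α] (u : List α) : lcp u [] = [] := by
  cases u <;> simp [lcp]

theorem lcp_cons_eq {α : Type*} [DecidableEq α] (a : α) (u v : List α) :
    lcp (a :: u) (a :: v) = a :: lcp u v := by simp [lcp]

theorem lcp_cons_ne {α : Type*} [DecidableEq α] {a b : α} (h : a ≠ b) (u v : List α) :
    lcp (a :: u) (b :: v) = [] := by simp [lcp, h]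

theorem lcp_cases {α : Type*} [DecidableEq α] : ∀ (u v : List α),
    (u <+: v ∧ lcp u v = u) ∨ (v <+: u ∧ lcp u v = v) ∨
    (∃ a b u' v', a ≠ b ∧ u = lcp u v ++ a :: u' ∧ v = lcp u v ++ b :: v') := by
  intro u
  induction u with
  | nil => intro v; exact Or.inl ⟨List.nil_prefix, lcp_nil_left v⟩
  | cons a u ih =>
    intro v
    cases v with
    | nil => exact Or.inr (Or.inl ⟨List.nil_prefix, lcp_nil_right _⟩)
    | cons b v =>
      by_cases hab : a = b
      · subst hab
        rw [lcp_cons_eq]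
        rcases ih v with ⟨h1, h2⟩ | ⟨h1, h2⟩ | ⟨x, y, u', v', hxy, hu, hv⟩
        · exact Or.inl ⟨List.cons_prefix_cons.mpr ⟨rfl, h1⟩, by rw [h2]⟩
        · exact Or.inr (Or.inl ⟨List.cons_prefix_cons.mpr ⟨rfl, h1⟩, by rw [h2]⟩)
        · refine Or.inr (Or.inr ⟨x, y, u', v', hxy, ?_, ?_⟩)
          · rw [List.cons_append, ← hu]
          · rw [List.cons_append, ← hv]
      · refine Or.inr (Or.inr ⟨a, b, u, v, hab, ?_, ?_⟩) <;>
          rw [lcp_cons_ne hab] <;> simp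

theorem lcp_comm {α : Type*} [DecidableEq α] : ∀ (u v : List α), lcp u v = lcp v u := by
  intro u
  induction u with
  | nil => intro v; rw [lcp_nil_left, lcp_nil_right]
  | cons a u ih =>
    intro v
    cases v with
    | nil => rw [lcp_nil_left, lcp_nil_right]
    | cons b v =>
      by_cases hab : a = b
      · subst hab
        rw [lcp_cons_eq, lcp_cons_eq, ih]
      · rw [lcp_cons_ne hab, lcp_cons_ne (Ne.symm hab)]

theorem lcp_prefix_left {α : Type*} [DecidableEq α] (u v : List α) : lcp u v <+: u := by
  rcases lcp_cases u v with ⟨h1, h2⟩ | ⟨h1, h2⟩ | ⟨x, y, u', v', hxy, hu, hv⟩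
  · rw [h2]
  · rw [h2]; exact h1
  · exact ⟨x :: u', hu.symm⟩

theorem lcp_prefix_right {α : Type*} [DecidableEq α] (u v : List α) : lcp u v <+: v := by
  rcases lcp_cases u v with ⟨h1, h2⟩ | ⟨h1, h2⟩ | ⟨x, y, u', v', hxy, hu, hv⟩
  · rw [h2]; exact h1
  · rw [h2]
  · exact ⟨y :: v', hv.symm⟩

theorem getElem_append_cons {α : Type*} (p : List α) (a : α) (u : List α) :
    (p ++ a :: u)[p.length]'(by simp) = a := by
  rw [List.getElem_append_right (le_refl _)]
  simp

theorem lcp_of_prefix {α : Type*} [DecidableEq α] {u v : List α} (h : u <+: v) :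
    lcp u v = u := by
  rcases lcp_cases u v with ⟨h1, h2⟩ | ⟨h1, h2⟩ | ⟨x, y, u', v', hxy, hu, hv⟩
  · exact h2
  · rw [h2]; exact h1.eq_of_length (h1.length_le.antisymm h.length_le)
  · exfalso
    generalize hp : lcp u v = p at hu hv
    subst hu; subst hv
    have hlen : p.length < (p ++ x :: u').length := by simp
    have e3 := h.getElem hlen
    rw [getElem_append_cons, getElem_append_cons] at e3
    exact hxy e3

theorem lcp_eq_of {α : Type*} [DecidableEq α] : ∀ (x l l' : List α), x <+: l → x <+: l' →
    ∀ (h1 : x.length < l.length) (h2 : x.length < l'.length),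
    l[x.length] ≠ l'[x.length] → lcp l l' = x := by
  intro x
  induction x with
  | nil =>
    intro l l' _ _ h1 h2 hne
    cases l with
    | nil => simp at h1
    | cons a u =>
      cases l' with
      | nil => simp at h2
      | cons b v =>
        simp only [List.getElem_cons_zero, List.length_nil] at hne
        exact lcp_cons_ne hne u v
  | cons c x ih =>
    intro l l' hp1 hp2 h1 h2 hne
    cases l with
    | nil => simp at h1
    | cons a u =>
      cases l' with
      | nil => simp at h2
      | cons b v =>
        obtain ⟨hca, hxu⟩ := List.cons_prefix_cons.mp hp1
        obtain ⟨hcb, hxv⟩ := List.cons_prefix_cons.mp hp2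
        subst hca; subst hcb
        rw [lcp_cons_eq]
        congr 1
        apply ih u v hxu hxv (by simpa using h1) (by simpa using h2)
        simpa using hne

/-! ### descending along words in a regular tree -/

variable {k n : ℕ}

def go : Fin T.card → List (Fin k) → Fin T.card
  | v, [] => v
  | v, c :: w => go (child v c.1) w

@[simp] theorem go_nil (v : Fin T.card) : go v ([] : List (Fin k)) = v := rfl

@[simp] theorem go_cons (v : Fin T.card) (c : Fin k) (w : List (Fin k)) :
    go v (c :: w) = go (child v c.1) w := rfl

theorem go_append (v : Fin T.card) (w w' : List (Fin k)) :
    go v (w ++ w') = go (go v w) w' := by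
  induction w generalizing v with
  | nil => simp
  | cons c u ih => simp [ih]

section Reg

variable (hreg : Regular T k n) (hk : 1 ≤ k)
include hreg

theorem leaf_ht {v : Fin T.card} (h : T.Leaf v) : T.ht v = n := hreg.2.1 v h

theorem not_leaf_of_ht_lt {v : Fin T.card} (h : T.ht v < n) : ¬ T.Leaf v := by
  intro hl
  rw [leaf_ht hreg hl] at h
  omega

theorem ht_le {v : Fin T.card} : T.ht v ≤ n := by
  obtain ⟨w, hvw, hw⟩ := exists_leaf_above v
  calc T.ht v ≤ T.ht w := ht_le_of_le hvw
    _ = n := leaf_ht hreg hw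

theorem imCard_of_ht_lt {v : Fin T.card} (h : T.ht v < n) : T.imCard v = k :=
  hreg.1 v (not_leaf_of_ht_lt hreg h)

omit hreg in
theorem not_leaf_of_imSucc {u v : Fin T.card} (h : T.ImSucc u v) : ¬ T.Leaf u := by
  intro hl
  exact h.2.1 (hl v h.1).symm

theorem imCard_of_imSucc {u v : Fin T.card} (h : T.ImSucc u v) : T.imCard u = k :=
  hreg.1 u (not_leaf_of_imSucc h)

theorem child_imSucc_reg {v : Fin T.card} (h : T.ht v < n) (c : Fin k) :
    T.ImSucc v (child v c.1) := by
  apply child_imSucc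
  rw [imCard_of_ht_lt hreg h]
  exact c.2

theorem ht_child_reg {v : Fin T.card} (h : T.ht v < n) (c : Fin k) :
    T.ht (child v c.1) = T.ht v + 1 := imSucc_ht (child_imSucc_reg hreg h c)

theorem ht_go {w : List (Fin k)} : ∀ {v : Fin T.card}, T.ht v + w.length ≤ n →
    T.ht (go v w) = T.ht v + w.length := by
  induction w with
  | nil => intro v _; simp
  | cons c u ih =>
    intro v hle
    simp only [go_cons, List.length_cons]
    have hv : T.ht v < n := by simp only [List.length_cons] at hle; omega
    have hc := ht_child_reg hreg hv c
    rw [ih (by rw [hc]; simp only [List.length_cons] at hle; omega), hc]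
    omega

theorem le_go {w : List (Fin k)} : ∀ {v : Fin T.card}, T.ht v + w.length ≤ n →
    T.le v (go v w) := by
  induction w with
  | nil => intro v _; simp [T.le_refl]
  | cons c u ih =>
    intro v hle
    simp only [go_cons]
    have hv : T.ht v < n := by simp only [List.length_cons] at hle; omega
    refine T.le_trans _ _ _ (child_imSucc_reg hreg hv c).1 (ih ?_)
    rw [ht_child_reg hreg hv c]
    simp only [List.length_cons] at hle
    omega

theorem go_prefix_le {w w' : List (Fin k)} {v : Fin T.card} (hp : w <+: w')
    (hle : T.ht v + w'.length ≤ n) : T.le (go v w) (go v w') := by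
  obtain ⟨t, rfl⟩ := hp
  rw [go_append]
  apply le_go hreg
  rw [ht_go hreg (by simp at hle ⊢; omega)]
  simp at hle ⊢
  omega

theorem meet_go : ∀ (u w : List (Fin k)) {v : Fin T.card},
    T.ht v + u.length ≤ n → T.ht v + w.length ≤ n →
    T.meet (go v u) (go v w) = go v (lcp u w) := by
  intro u
  induction u with
  | nil =>
    intro w v hu hw
    rw [lcp_nil_left]
    exact meet_eq_left (le_go hreg hw)
  | cons a u' ih =>
    intro w v hu hw
    cases w with
    | nil =>
      rw [lcp_nil_right]
      exact meet_eq_right (le_go hreg hu)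
    | cons b w' =>
      simp only [List.length_cons] at hu hw
      have hv : T.ht v < n := by omega
      by_cases hab : a = b
      · subst hab
        rw [lcp_cons_eq, go_cons, go_cons, go_cons]
        apply ih
        · rw [ht_child_reg hreg hv a]; omega
        · rw [ht_child_reg hreg hv a]; omega
      · rw [lcp_cons_ne hab, go_nil, go_cons, go_cons]
        have hne : child v a.1 ≠ child v b.1 := by
          apply child_ne (fun h => hab (Fin.ext h)) <;>
            rw [imCard_of_ht_lt hreg hv] <;> [exact a.2; exact b.2]
        apply meet_of_imSucc_ne (child_imSucc_reg hreg hv a) (child_imSucc_reg hreg hv b) hne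
        · apply le_go hreg
          rw [ht_child_reg hreg hv a]; omega
        · apply le_go hreg
          rw [ht_child_reg hreg hv b]; omega

theorem lex_go {a b : Fin k} {u w : List (Fin k)} {v : Fin T.card}
    (hab : a.1 < b.1) (hu : T.ht v + (a :: u).length ≤ n) (hw : T.ht v + (b :: w).length ≤ n) :
    T.lex (go v (a :: u)) (go v (b :: w)) := by
  simp only [List.length_cons] at hu hw
  have hv : T.ht v < n := by omega
  have hlex := child_lex (v := v) (c := a.1) (c' := b.1) hab
    (by rw [imCard_of_ht_lt hreg hv]; exact b.2)
  have hne : child v a.1 ≠ child v b.1 := by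
    apply child_ne (by omega) <;> rw [imCard_of_ht_lt hreg hv] <;> [exact a.2; exact b.2]
  rw [go_cons, go_cons]
  apply lex_lift (child_imSucc_reg hreg hv a) (child_imSucc_reg hreg hv b) hne hlex.1
  · apply le_go hreg
    rw [ht_child_reg hreg hv a]; omega
  · apply le_go hreg
    rw [ht_child_reg hreg hv b]; omega

theorem go_root_inj (h0 : 0 < T.card) {w w' : List (Fin k)}
    (hw : 1 + w.length ≤ n) (hw' : 1 + w'.length ≤ n)
    (heq : go (root h0) w = go (root h0) w') : w = w' := by
  have hr : T.ht (root (T := T) h0) = 1 := ht_root h0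
  have h1 : T.ht (go (root h0) w) = 1 + w.length := by
    rw [ht_go hreg (by omega)]; omega
  have h2 : T.ht (go (root h0) w') = 1 + w'.length := by
    rw [ht_go hreg (by omega)]; omega
  have hlen : w.length = w'.length := by
    rw [heq] at h1; omega
  have hmeet := meet_go hreg w w' (v := root h0) (by omega) (by omega)
  rw [heq, meet_self] at hmeet
  have hlcp : T.ht (go (root h0) (lcp w w')) = 1 + (lcp w w').length := by
    rw [ht_go hreg ?_]
    · omega
    · have := (lcp_prefix_left w w').length_le
      omega
  rw [← hmeet, h2] at hlcp
  have hl1 : (lcp w w').length = w'.length := by omega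
  have := (lcp_prefix_right w w').eq_of_length hl1
  rw [← this]
  exact ((lcp_prefix_left w w').eq_of_length (by omega)).symm

theorem leaf_of_ht_eq {v : Fin T.card} (h : T.ht v = n) : T.Leaf v := by
  intro w hw
  refine (eq_of_le_of_ht_le hw ?_).symm
  rw [h]
  exact ht_le hreg

theorem ht_lt_of_not_leaf {v : Fin T.card} (h : ¬ T.Leaf v) : T.ht v < n :=
  lt_of_le_of_ne (ht_le hreg) (fun he => h (leaf_of_ht_eq hreg he))

theorem exists_addr (h0 : 0 < T.card) (v : Fin T.card) :
    ∃ w : List (Fin k), w.length + 1 = T.ht v ∧ go (root h0) w = v := by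
  have main : ∀ (h : ℕ) (v : Fin T.card), T.ht v = h →
      ∃ w : List (Fin k), w.length + 1 = T.ht v ∧ go (root h0) w = v := by
    intro h
    induction h using Nat.strong_induction_on with
    | _ h ih =>
      intro v hv
      by_cases h1 : T.ht v ≤ 1
      · have hv1 : T.ht v = 1 := le_antisymm h1 (one_le_ht v)
        refine ⟨[], by simpa using hv1.symm, ?_⟩
        rw [go_nil]
        exact (eq_root_of_ht_eq_one h0 hv1).symm
      · obtain ⟨u, hu⟩ := exists_parent h0 (by omega : 1 < T.ht v)
        have hhu : T.ht v = T.ht u + 1 := imSucc_ht hu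
        obtain ⟨w, hw1, hw2⟩ := ih (T.ht u) (by omega) u rfl
        obtain ⟨c, hc, hcv⟩ := child_surj hu
        have hck : c < k := by rwa [imCard_of_imSucc hreg hu] at hc
        refine ⟨w ++ [⟨c, hck⟩], by simp; omega, ?_⟩
        rw [go_append, hw2]
        simpa using hcv
  exact main (T.ht v) v rfl

end Reg

theorem snoc_prefix_of {α : Type*} {x l : List α} {c : α} (hx : x <+: l)
    (hlen : x.length < l.length) (hc : l[x.length] = c) : x ++ [c] <+: l := by
  have hkey : x ++ [c] = l.take (x.length + 1) := by
    apply List.ext_getElem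
    · simp [List.length_take]
      omega
    · intro q h1 h2
      rw [List.getElem_take]
      simp only [List.length_append, List.length_singleton] at h1
      rcases Nat.lt_or_ge q x.length with h | h
      · rw [List.getElem_append_left h]
        exact hx.getElem h
      · have hq : q = x.length := by omega
        subst hq
        rw [List.getElem_append_right (le_refl _)]
        simpa using hc.symm
  rw [hkey]
  exact List.take_prefix _ _

theorem getD_append_cons {α : Type*} (p : List α) (a : α) (u : List α) (dd : α) :
    (p ++ a :: u).getD p.length dd = a := by
  rw [List.getD_eq_getElem _ _ (by simp)]
  exact getElem_append_cons p a u

end HLtree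

end


/-- Halpern–Läuchli theorem for strong subtrees (level product version): for `k ≥ 1`,
`d > 0`, `t ≥ 1` and `m`, there is `n` such that for any regular ordered trees `Tm`, `Tn`
with branching `k` and heights `m`, `n`, every `d`-coloring of the `t`-tuples of nodes of
`Tn` of equal height admits a strong sequence of embeddings `g₁, …, g_t : Tm → Tn` such
that `{(g₁ v₁, …, g_t v_t) : v₁, …, v_t ∈ Tm of equal height}` is monochromatic. -/
theorem halpern_laeuchli_levels (k d t m : ℕ) (hk : 1 ≤ k) (hd : 0 < d) (ht : 1 ≤ t) :
    ∃ n : ℕ, ∀ Tm Tn : OTree, Regular Tm k m → Regular Tn k n →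
      ∀ C : (Fin t → Fin Tn.card) → Fin d,
        ∃ g : Fin t → (Fin Tm.card → Fin Tn.card),
          (∀ i, IsEmb Tm Tn (g i) ∧ Strong Tm Tn (g i)) ∧
          (∀ i j x y, Tn.ht (Tn.meet (g i x) (g i y)) = Tn.ht (Tn.meet (g j x) (g j y))) ∧
          ∃ c : Fin d, ∀ p : Fin t → Fin Tm.card, (∀ i j, Tm.ht (p i) = Tm.ht (p j)) →
            C (fun i => g i (p i)) = c := by
  classical
  rcases Nat.eq_zero_or_pos m with hm0 | hm1
  · -- degenerate case: Tm is empty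
    refine ⟨1, fun Tm Tn hTm hTn C => ?_⟩
    have hTm0 : Tm.card = 0 := hTm.2.2.mpr hm0
    have hemp : ∀ v : Fin Tm.card, False := fun v => absurd v.2 (by omega)
    refine ⟨fun _ v => (hemp v).elim, ?_, ?_, ⟨0, hd⟩, ?_⟩
    · intro i
      exact ⟨⟨fun v => (hemp v).elim, fun v => (hemp v).elim, fun v => (hemp v).elim,
        fun v => (hemp v).elim⟩, fun v => (hemp v).elim⟩
    · intro i j x y
      exact (hemp x).elim
    · intro p hp
      exact (hemp (p ⟨0, ht⟩)).elim
  · -- main case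
    haveI : Nonempty (Fin t → Fin k) := ⟨fun _ => ⟨0, hk⟩⟩
    obtain ⟨N, hN0, hcore⟩ := HLaux.core' (Fin t → Fin k) d m hd hm1
    refine ⟨N, fun Tm Tn hTm hTn C => ?_⟩
    have h0m : 0 < Tm.card := by
      rcases Nat.eq_zero_or_pos Tm.card with h | h
      · exact absurd (hTm.2.2.mp h) (by omega)
      · exact h
    have h0n : 0 < Tn.card := by
      rcases Nat.eq_zero_or_pos Tn.card with h | h
      · exact absurd (hTn.2.2.mp h) (by omega)
      · exact h
    set rm : Fin Tm.card := HLtree.root h0m with hrmdef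
    set rn : Fin Tn.card := HLtree.root h0n with hrndef
    set dflt : Fin k := ⟨0, hk⟩ with hdfltdef
    -- addresses in Tm
    set addr : Fin Tm.card → List (Fin k) :=
      fun v => Classical.choose (HLtree.exists_addr hTm h0m v) with haddrdef
    have haddr_len : ∀ v, (addr v).length + 1 = Tm.ht v :=
      fun v => (Classical.choose_spec (HLtree.exists_addr hTm h0m v)).1
    have haddr_go : ∀ v, HLtree.go rm (addr v) = v :=
      fun v => (Classical.choose_spec (HLtree.exists_addr hTm h0m v)).2
    have haddr_lt : ∀ v, (addr v).length < m := by
      intro v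
      have h1 := haddr_len v
      have h2 : Tm.ht v ≤ m := HLtree.ht_le hTm
      omega
    have hhtrm : Tm.ht rm = 1 := HLtree.ht_root h0m
    have hhtrn : Tn.ht rn = 1 := HLtree.ht_root h0n
    have haddr_eq : ∀ (w : List (Fin k)), w.length + 1 ≤ m → addr (HLtree.go rm w) = w := by
      intro w hw
      apply HLtree.go_root_inj hTm h0m ?_ (by omega) (haddr_go (HLtree.go rm w))
      have h1 := haddr_len (HLtree.go rm w)
      have h2 : Tm.ht (HLtree.go rm w) ≤ m := HLtree.ht_le hTm
      omega
    have haddr_inj : ∀ v w, addr v = addr w → v = w := by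
      intro v w h
      rw [← haddr_go v, ← haddr_go w, h]
    -- the coloring on words
    set C' : List (Fin t → Fin k) → Fin d :=
      fun u => C (fun i => HLtree.go rn (u.map (fun s => s i))) with hC'def
    obtain ⟨P, c, hmono⟩ := hcore C'
    set bW : List (Fin k) → ℕ → (Fin t → Fin k) :=
      fun w r _ => w.getD r dflt with hbWdef
    set GW : Fin t → List (Fin k) → List (Fin k) :=
      fun i w => (P.nodeW w.length (bW w)).map (fun s => s i) with hGWdef
    set g : Fin t → Fin Tm.card → Fin Tn.card :=
      fun i v => HLtree.go rn (GW i (addr v)) with hgdef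
    -- length and entry lemmas for GW
    have hGWlen : ∀ i w, (GW i w).length = P.lv w.length := by
      intro i w
      simp [hGWdef, HLaux.Pat.length_nodeW]
    have hGWget : ∀ (i : Fin t) (w : List (Fin k)) (q : ℕ) (hq : q < (GW i w).length),
        (GW i w)[q] = (P.wf q).elim (P.ph q i) (fun r => w.getD r dflt) := by
      intro i w q hq
      simp only [hGWdef] at hq ⊢
      rw [List.getElem_map, HLaux.Pat.getElem_nodeW]
      simp only [HLaux.Pat.E, hbWdef]
      rcases hwf : P.wf q with _ | r <;> simp
    have hwfr_lt : ∀ (jl q r : ℕ), jl < m → q < P.lv jl → P.wf q = some r → r < jl := by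
      intro jl q r hjl hq hwf
      have hqN : q < N := lt_trans hq (P.lv_lt jl hjl)
      obtain ⟨hrm', hlvr⟩ := P.wf_ge q r hqN hwf
      by_contra hge
      push_neg at hge
      rcases Nat.eq_or_lt_of_le hge with h | h
      · rw [← h] at hlvr; omega
      · have := P.lv_mono jl r h hrm'
        omega
    -- prefix lemma
    have hGWprefix : ∀ (i : Fin t) (w w' : List (Fin k)), w <+: w' → w'.length < m →
        GW i w <+: GW i w' := by
      intro i w w' hp hm'
      have hlw : w.length ≤ w'.length := hp.length_le
      have hwm : w.length < m := lt_of_le_of_lt hlw hm'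
      have hlv : P.lv w.length ≤ P.lv w'.length := by
        rcases Nat.eq_or_lt_of_le hlw with h | h
        · rw [h]
        · exact le_of_lt (P.lv_mono _ _ h hm')
      have hkey : GW i w = (GW i w').take (P.lv w.length) := by
        apply List.ext_getElem
        · simp only [List.length_take, hGWlen]
          omega
        · intro q h1 h2
          rw [List.getElem_take]
          have hq2 : q < (GW i w').length := by
            rw [hGWlen]
            rw [hGWlen] at h1
            omega
          rw [hGWget i w q h1, hGWget i w' q hq2]
          rcases hwf : P.wf q with _ | r
          · simp
          · simp only [Option.elim_some]
            have hql : q < P.lv w.length := by rw [hGWlen] at h1; exact h1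
            have hr : r < w.length := hwfr_lt w.length q r hwm hql hwf
            have hr' : r < w'.length := by omega
            rw [List.getD_eq_getElem _ _ hr, List.getD_eq_getElem _ _ hr']
            exact hp.getElem hr
      rw [hkey]
      exact List.take_prefix _ _
    -- letter lemma
    have hGWletter : ∀ (i : Fin t) (w : List (Fin k)) (r : ℕ), r < w.length → w.length < m →
        ∀ (hlt : P.lv r < (GW i w).length), (GW i w)[P.lv r] = w.getD r dflt := by
      intro i w r hr hm' hlt
      rw [hGWget]
      rw [P.wf_lv r (by omega)]
      simp
    have hlv_lt_len : ∀ (i : Fin t) (w : List (Fin k)) (r : ℕ), r < w.length → w.length < m →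
        P.lv r < (GW i w).length := by
      intro i w r hr hm'
      rw [hGWlen]
      exact P.lv_mono r w.length hr hm'
    -- injectivity of GW
    have hGWinj : ∀ (i : Fin t) (w w' : List (Fin k)), w.length < m → w'.length < m →
        GW i w = GW i w' → w = w' := by
      intro i w w' h1 h2 he
      have hlen : P.lv w.length = P.lv w'.length := by rw [← hGWlen i w, ← hGWlen i w', he]
      have hlw : w.length = w'.length := by
        by_contra hne
        rcases lt_or_gt_of_ne hne with h | h
        · have := P.lv_mono _ _ h h2; omega
        · have := P.lv_mono _ _ h h1; omega
      apply List.ext_getElem hlw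
      intro q hq1 hq2
      have hlvq : P.lv q < (GW i w).length := hlv_lt_len i w q hq1 h1
      have hlvq' : P.lv q < (GW i w').length := hlv_lt_len i w' q hq2 h2
      have e1 := hGWletter i w q hq1 h1 hlvq
      have e2 := hGWletter i w' q hq2 h2 hlvq'
      rw [List.getD_eq_getElem _ _ hq1] at e1
      rw [List.getD_eq_getElem _ _ hq2] at e2
      rw [← e1, ← e2]
      exact List.getElem_of_eq he hlvq
    -- lcp commutes with GW
    have hGWlcp : ∀ (i : Fin t) (u w : List (Fin k)), u.length < m → w.length < m →
        HLtree.lcp (GW i u) (GW i w) = GW i (HLtree.lcp u w) := by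
      intro i u w hu hw
      rcases HLtree.lcp_cases u w with ⟨h1, h2⟩ | ⟨h1, h2⟩ | ⟨a, b, u', w', hab, hdu, hdw⟩
      · rw [h2]
        exact HLtree.lcp_of_prefix (hGWprefix i u w h1 hw)
      · rw [h2, HLtree.lcp_comm]
        exact HLtree.lcp_of_prefix (hGWprefix i w u h1 hu)
      · generalize hpdef : HLtree.lcp u w = p at hdu hdw ⊢
        have hpu : p <+: u := ⟨a :: u', hdu.symm⟩
        have hpw : p <+: w := ⟨b :: w', hdw.symm⟩
        have hplen_u : p.length < u.length := by rw [hdu]; simp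
        have hplen_w : p.length < w.length := by rw [hdw]; simp
        have hpm : p.length < m := by omega
        have hx1 : GW i p <+: GW i u := hGWprefix i p u hpu hu
        have hx2 : GW i p <+: GW i w := hGWprefix i p w hpw hw
        have hl1 : (GW i p).length < (GW i u).length := by
          rw [hGWlen, hGWlen]
          exact P.lv_mono _ _ hplen_u hu
        have hl2 : (GW i p).length < (GW i w).length := by
          rw [hGWlen, hGWlen]
          exact P.lv_mono _ _ hplen_w hw
        apply HLtree.lcp_eq_of (GW i p) (GW i u) (GW i w) hx1 hx2 hl1 hl2
        have e1 : (GW i u)[(GW i p).length]'hl1 = a := by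
          have hlt := hlv_lt_len i u p.length hplen_u hu
          have : (GW i u)[(GW i p).length]'hl1 = (GW i u)[P.lv p.length]'hlt := by
            congr 1
            exact hGWlen i p
          rw [this, hGWletter i u p.length hplen_u hu hlt, hdu,
            HLtree.getD_append_cons]
        have e2 : (GW i w)[(GW i p).length]'hl2 = b := by
          have hlt := hlv_lt_len i w p.length hplen_w hw
          have : (GW i w)[(GW i p).length]'hl2 = (GW i w)[P.lv p.length]'hlt := by
            congr 1
            exact hGWlen i p
          rw [this, hGWletter i w p.length hplen_w hw hlt, hdw,
            HLtree.getD_append_cons]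
        rw [e1, e2]
        exact hab
    -- validity of lengths for Tn
    have hGWvalid : ∀ (i : Fin t) (w : List (Fin k)), w.length < m →
        Tn.ht rn + (GW i w).length ≤ N := by
      intro i w h
      rw [hhtrn, hGWlen]
      have := P.lv_lt w.length h
      omega
    have hg_ht : ∀ i v, Tn.ht (g i v) = P.lv (addr v).length + 1 := by
      intro i v
      simp only [hgdef]
      rw [HLtree.ht_go hTn (hGWvalid i _ (haddr_lt v)), hhtrn, hGWlen]
      omega
    -- meet preservation
    have hmeetpres : ∀ (i : Fin t) v w, g i (Tm.meet v w) = Tn.meet (g i v) (g i w) := by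
      intro i v w
      have e1 : Tm.meet v w = HLtree.go rm (HLtree.lcp (addr v) (addr w)) := by
        conv_lhs => rw [← haddr_go v, ← haddr_go w]
        exact HLtree.meet_go hTm (addr v) (addr w)
          (by rw [hhtrm]; have := haddr_lt v; omega)
          (by rw [hhtrm]; have := haddr_lt w; omega)
      have e2 : Tn.meet (g i v) (g i w) = HLtree.go rn (GW i (HLtree.lcp (addr v) (addr w))) := by
        simp only [hgdef]
        rw [HLtree.meet_go hTn _ _ (hGWvalid i _ (haddr_lt v)) (hGWvalid i _ (haddr_lt w)),
          hGWlcp i _ _ (haddr_lt v) (haddr_lt w)]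
      have e3 : addr (Tm.meet v w) = HLtree.lcp (addr v) (addr w) := by
        rw [e1, haddr_eq]
        have h1 := (HLtree.lcp_prefix_left (addr v) (addr w)).length_le
        have := haddr_lt v
        omega
      rw [e2]
      simp only [hgdef, e3]
    -- lex: divergence helper on the Tn side
    have hTn_div : ∀ (i : Fin t) (u u' pp : List (Fin k)),
        pp <+: u → pp <+: u' → u.length < m → u'.length < m →
        ∀ (hl1 : pp.length < u.length) (hl2 : pp.length < u'.length),
        (u[pp.length]'hl1).1 < (u'[pp.length]'hl2).1 →
        Tn.lex (HLtree.go rn (GW i u)) (HLtree.go rn (GW i u')) := by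
      intro i u u' pp hppu hppu' hu hu' hl1 hl2 hletters
      have hx1 : GW i pp <+: GW i u := hGWprefix i pp u hppu hu
      have hx2 : GW i pp <+: GW i u' := hGWprefix i pp u' hppu' hu'
      have hgl1 : (GW i pp).length < (GW i u).length := by
        rw [hGWlen, hGWlen]; exact P.lv_mono _ _ hl1 hu
      have hgl2 : (GW i pp).length < (GW i u').length := by
        rw [hGWlen, hGWlen]; exact P.lv_mono _ _ hl2 hu'
      obtain ⟨s1, hs1⟩ := hx1
      obtain ⟨s2, hs2⟩ := hx2
      cases s1 with
      | nil => exfalso; rw [← hs1] at hgl1; simp at hgl1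
      | cons a1 s1' =>
        cases s2 with
        | nil => exfalso; rw [← hs2] at hgl2; simp at hgl2
        | cons b1 s2' =>
          have hppl : (GW i pp).length = P.lv pp.length := hGWlen i pp
          have ha1 : a1 = u[pp.length]'hl1 := by
            have hlt := hlv_lt_len i u pp.length hl1 hu
            have e3 := hGWletter i u pp.length hl1 hu hlt
            have e4 : (GW i u)[P.lv pp.length]'hlt = a1 := by
              calc (GW i u)[P.lv pp.length]'hlt
                  = (GW i pp ++ a1 :: s1')[P.lv pp.length]'(by rw [hs1]; exact hlt) :=
                    List.getElem_of_eq hs1.symm hlt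
                _ = (GW i pp ++ a1 :: s1')[(GW i pp).length]'(by simp) := by
                    congr 1
                    exact hppl.symm
                _ = a1 := HLtree.getElem_append_cons _ _ _
            rw [← e4, e3, List.getD_eq_getElem _ _ hl1]
          have hb1 : b1 = u'[pp.length]'hl2 := by
            have hlt := hlv_lt_len i u' pp.length hl2 hu'
            have e3 := hGWletter i u' pp.length hl2 hu' hlt
            have e4 : (GW i u')[P.lv pp.length]'hlt = b1 := by
              calc (GW i u')[P.lv pp.length]'hlt
                  = (GW i pp ++ b1 :: s2')[P.lv pp.length]'(by rw [hs2]; exact hlt) :=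
                    List.getElem_of_eq hs2.symm hlt
                _ = (GW i pp ++ b1 :: s2')[(GW i pp).length]'(by simp) := by
                    congr 1
                    exact hppl.symm
                _ = b1 := HLtree.getElem_append_cons _ _ _
            rw [← e4, e3, List.getD_eq_getElem _ _ hl2]
          rw [← hs1, ← hs2, HLtree.go_append, HLtree.go_append]
          apply HLtree.lex_go hTn
          · rw [ha1, hb1]
            exact hletters
          · have hval := hGWvalid i u hu
            have hlencalc : (GW i pp).length + (a1 :: s1').length = (GW i u).length := by
              rw [← hs1]; simp
            simp only [List.length_cons] at hlencalc
            have hcond : Tn.ht rn + (GW i pp).length ≤ N := by omega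
            rw [HLtree.ht_go hTn hcond]
            simp only [List.length_cons]
            omega
          · have hval := hGWvalid i u' hu'
            have hlencalc : (GW i pp).length + (b1 :: s2').length = (GW i u').length := by
              rw [← hs2]; simp
            simp only [List.length_cons] at hlencalc
            have hcond : Tn.ht rn + (GW i pp).length ≤ N := by omega
            rw [HLtree.ht_go hTn hcond]
            simp only [List.length_cons]
            omega
    -- divergence helper on the Tm side
    have hTm_div : ∀ (v w : Fin Tm.card) (pp : List (Fin k)),
        pp <+: addr v → pp <+: addr w →
        ∀ (h1 : pp.length < (addr v).length) (h2 : pp.length < (addr w).length),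
        ((addr v)[pp.length]'h1).1 < ((addr w)[pp.length]'h2).1 →
        Tm.lex v w := by
      intro v w pp hppu hppw h1 h2 hl
      obtain ⟨s1, hs1⟩ := hppu
      obtain ⟨s2, hs2⟩ := hppw
      cases s1 with
      | nil => exfalso; rw [← hs1] at h1; simp at h1
      | cons a1 s1' =>
        cases s2 with
        | nil => exfalso; rw [← hs2] at h2; simp at h2
        | cons b1 s2' =>
          have ha1 : a1 = (addr v)[pp.length]'h1 := by
            calc a1 = (pp ++ a1 :: s1')[pp.length]'(by simp) :=
                  (HLtree.getElem_append_cons _ _ _).symm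
              _ = (addr v)[pp.length]'h1 := List.getElem_of_eq hs1 (by simp)
          have hb1 : b1 = (addr w)[pp.length]'h2 := by
            calc b1 = (pp ++ b1 :: s2')[pp.length]'(by simp) :=
                  (HLtree.getElem_append_cons _ _ _).symm
              _ = (addr w)[pp.length]'h2 := List.getElem_of_eq hs2 (by simp)
          have hv : v = HLtree.go rm (pp ++ a1 :: s1') := by rw [hs1, haddr_go]
          have hw : w = HLtree.go rm (pp ++ b1 :: s2') := by rw [hs2, haddr_go]
          rw [hv, hw, HLtree.go_append, HLtree.go_append]
          apply HLtree.lex_go hTm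
          · rw [ha1, hb1]; exact hl
          · have hav := haddr_lt v
            have hlencalc : pp.length + (a1 :: s1').length = (addr v).length := by
              rw [← hs1]; simp
            simp only [List.length_cons] at hlencalc
            have hcond : Tm.ht rm + pp.length ≤ m := by rw [hhtrm]; omega
            rw [HLtree.ht_go hTm hcond, hhtrm]
            simp only [List.length_cons]
            omega
          · have haw := haddr_lt w
            have hlencalc : pp.length + (b1 :: s2').length = (addr w).length := by
              rw [← hs2]; simp
            simp only [List.length_cons] at hlencalc
            have hcond : Tm.ht rm + pp.length ≤ m := by rw [hhtrm]; omega
            rw [HLtree.ht_go hTm hcond, hhtrm]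
            simp only [List.length_cons]
            omega
    -- injectivity
    have hinj : ∀ i, Function.Injective (g i) := by
      intro i v w he
      simp only [hgdef] at he
      have h1 := hGWvalid i (addr v) (haddr_lt v)
      have h2 := hGWvalid i (addr w) (haddr_lt w)
      rw [hhtrn] at h1 h2
      have := HLtree.go_root_inj hTn h0n (by omega) (by omega) he
      exact haddr_inj _ _ (hGWinj i _ _ (haddr_lt v) (haddr_lt w) this)
    -- lex preservation
    have hlex : ∀ (i : Fin t) v w, Tm.lex v w → Tn.lex (g i v) (g i w) := by
      intro i v w hvw
      by_cases hvw' : v = w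
      · subst hvw'
        exact HLtree.lex_refl _
      · rcases HLtree.lcp_cases (addr v) (addr w) with ⟨h1, _⟩ | ⟨h1, _⟩ |
          ⟨a, b, s, s', hab, hdu, hdw⟩
        · apply Tn.le_lex
          simp only [hgdef]
          exact HLtree.go_prefix_le hTn (hGWprefix i _ _ h1 (haddr_lt w))
            (hGWvalid i _ (haddr_lt w))
        · exfalso
          have hle : Tm.le w v := by
            conv_rhs => rw [← haddr_go v]
            conv_lhs => rw [← haddr_go w]
            apply HLtree.go_prefix_le hTm h1
            rw [hhtrm]
            have := haddr_lt v
            omega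
          exact hvw' (Tm.lex_antisymm _ _ hvw (Tm.le_lex _ _ hle))
        · -- divergence
          have hppv : HLtree.lcp (addr v) (addr w) <+: addr v := HLtree.lcp_prefix_left _ _
          have hppw : HLtree.lcp (addr v) (addr w) <+: addr w := HLtree.lcp_prefix_right _ _
          generalize hq : HLtree.lcp (addr v) (addr w) = pp at hdu hdw hppv hppw
          have hpl1 : pp.length < (addr v).length := by
            conv_rhs => rw [hdu]
            simp
          have hpl2 : pp.length < (addr w).length := by
            conv_rhs => rw [hdw]
            simp
          have hga : (addr v)[pp.length]'hpl1 = a := by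
            calc (addr v)[pp.length]'hpl1
                = (pp ++ a :: s)[pp.length]'(by simp) := List.getElem_of_eq hdu hpl1
              _ = a := HLtree.getElem_append_cons _ _ _
          have hgb : (addr w)[pp.length]'hpl2 = b := by
            calc (addr w)[pp.length]'hpl2
                = (pp ++ b :: s')[pp.length]'(by simp) := List.getElem_of_eq hdw hpl2
              _ = b := HLtree.getElem_append_cons _ _ _
          rcases lt_trichotomy a.1 b.1 with hl | heq | hl
          · simp only [hgdef]
            apply hTn_div i (addr v) (addr w) _ hppv hppw (haddr_lt v) (haddr_lt w) hpl1 hpl2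
            rw [hga, hgb]
            exact hl
          · exact absurd (Fin.ext heq) hab
          · exfalso
            have hwv : Tm.lex w v := by
              apply hTm_div w v pp hppw hppv hpl2 hpl1
              rw [hga, hgb]
              exact hl
            exact hvw' (Tm.lex_antisymm _ _ hvw hwv)
    -- fourth embedding condition (children are covered)
    have hchild : ∀ (i : Fin t) (v : Fin Tm.card) (w₁ : Fin Tn.card),
        Tn.ImSucc (g i v) w₁ → Tm.ht v < m →
        ∃ v', Tm.ImSucc v v' ∧ Tn.le w₁ (g i v') := by
      intro i v w₁ h1 hvm
      obtain ⟨cc, hcc, hw₁⟩ := HLtree.child_surj h1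
      have hgivlt : Tn.ht (g i v) < N :=
        HLtree.ht_lt_of_not_leaf hTn (HLtree.not_leaf_of_imSucc h1)
      have hcck : cc < k := by rwa [HLtree.imCard_of_ht_lt hTn hgivlt] at hcc
      set c' : Fin k := ⟨cc, hcck⟩ with hc'def
      set v' : Fin Tm.card := HLtree.child v cc with hv'def
      have himv' : Tm.ImSucc v v' := HLtree.child_imSucc_reg hTm hvm c'
      refine ⟨v', himv', ?_⟩
      have hlenv : (addr v).length + 1 = Tm.ht v := haddr_len v
      have haddrv' : addr v' = addr v ++ [c'] := by
        have hxgo : HLtree.go rm (addr v ++ [c']) = v' := by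
          rw [HLtree.go_append, haddr_go]
          simp [HLtree.go, hv'def]
          rfl
        rw [← hxgo, haddr_eq]
        simp only [List.length_append, List.length_singleton]
        omega
      have hlv' : (addr v').length < m := haddr_lt v'
      have hbase : GW i (addr v) <+: GW i (addr v') := by
        apply hGWprefix i _ _ _ hlv'
        rw [haddrv']
        exact List.prefix_append _ _
      have hlenlt : (GW i (addr v)).length < (GW i (addr v')).length := by
        rw [hGWlen, hGWlen, haddrv']
        apply P.lv_mono
        · simp
        · rw [haddrv'] at hlv'
          simpa using hlv'
      have hlet : (GW i (addr v'))[(GW i (addr v)).length]'hlenlt = c' := by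
        have hrlt : (addr v).length < (addr v').length := by rw [haddrv']; simp
        have hlt := hlv_lt_len i (addr v') (addr v).length hrlt hlv'
        have e2 : (GW i (addr v'))[(GW i (addr v)).length]'hlenlt =
            (GW i (addr v'))[P.lv (addr v).length]'hlt := by
          congr 1
          exact hGWlen i (addr v)
        rw [e2, hGWletter i (addr v') (addr v).length hrlt hlv' hlt, haddrv',
          HLtree.getD_append_cons]
      have hpre : GW i (addr v) ++ [c'] <+: GW i (addr v') :=
        HLtree.snoc_prefix_of hbase hlenlt hlet
      have hle1 : Tn.le (HLtree.go rn (GW i (addr v) ++ [c'])) (g i v') := by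
        simp only [hgdef]
        exact HLtree.go_prefix_le hTn hpre (hGWvalid i _ hlv')
      have hw₁go : w₁ = HLtree.go rn (GW i (addr v) ++ [c']) := by
        rw [HLtree.go_append]
        simp only [hgdef] at hw₁ ⊢
        rw [← hw₁]
        simp [HLtree.go]
        rfl
      rw [hw₁go]
      exact hle1
    -- not-leaf transfer
    have hnotleaf : ∀ (v : Fin Tm.card), (∃ v', Tm.ImSucc v v') → Tm.ht v < m := by
      intro v ⟨v', hv'⟩
      exact HLtree.ht_lt_of_not_leaf hTm (HLtree.not_leaf_of_imSucc hv')
    -- strong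
    have hstrong : ∀ i, Strong Tm Tn (g i) := by
      intro i v w hvw
      rw [hg_ht, hg_ht]
      have e1 := haddr_len v
      have e2 := haddr_len w
      have : (addr v).length = (addr w).length := by omega
      rw [this]
    -- final assembly
    refine ⟨g, ?_, ?_, c, ?_⟩
    · intro i
      refine ⟨⟨hinj i, fun v w => hmeetpres i v w, hlex i, ?_⟩, hstrong i⟩
      intro v w₁ w₂ himm1 _ _ hex
      obtain ⟨v'', hv'', _⟩ := hex
      exact hchild i v w₁ himm1 (hnotleaf v ⟨v'', hv''⟩)
    · intro i j x y
      rw [← hmeetpres i x y, ← hmeetpres j x y, hg_ht, hg_ht]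
    · intro p hp
      set i0 : Fin t := ⟨0, ht⟩ with hi0def
      set jl : ℕ := (addr (p i0)).length with hjldef
      have hlen_all : ∀ i, (addr (p i)).length = jl := by
        intro i
        have h1 := hp i i0
        have e1 := haddr_len (p i)
        have e2 := haddr_len (p i0)
        omega
      set bb : ℕ → (Fin t → Fin k) := fun r i => (addr (p i)).getD r dflt with hbbdef
      have hlist : ∀ i, GW i (addr (p i)) = (P.nodeW jl bb).map (fun s => s i) := by
        intro i
        apply List.ext_getElem
        · simp only [hGWlen, List.length_map, HLaux.Pat.length_nodeW, hlen_all i]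
        · intro q h1 h2
          rw [hGWget i _ q h1, List.getElem_map, HLaux.Pat.getElem_nodeW]
          simp only [HLaux.Pat.E, hbbdef]
          rcases hwf : P.wf q with _ | r <;> simp
      have hjlm : jl < m := by rw [hjldef]; exact haddr_lt (p i0)
      have := hmono jl hjlm bb
      calc C (fun i => g i (p i)) = C' (P.nodeW jl bb) := by
            simp only [hC'def]
            congr 1
            funext i
            simp only [hgdef]
            rw [hlist i]
        _ = c := this
end

section
/- Hales–Jewett theorem (substitution form): Let B be a finite nonempty set disjoint from ℕ. Given d > 0 and m, there exists n such that for every d-coloring of the functions from [n] to B, there is a function w₀ : [n] → B ∪ [m] such that [m] is included in the image of w₀ and w₀([l]) ∩ [m] is an initial segment of [m] for every l ≤ n, and such that the set {v ∘ w₀ : v : B ∪ [m] → B with v restricted to B equal to the identity} is monochromatic. -/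
/-- Hales–Jewett theorem (substitution form): for a finite nonempty alphabet `B`,
`d > 0` and `m`, there is `n` such that for every `d`-coloring of the words
`[n] → B` there is a variable word `w₀ : [n] → B ⊕ [m]` such that every variable of
`[m]` occurs in `w₀`, the variables occurring among the first `l` letters form an
initial segment of `[m]` for each `l ≤ n`, and the set of substitution instances
`{v ∘ w₀ : v : B ⊕ [m] → B, v = id on B}` is monochromatic. -/
theorem hales_jewett_substitution (B : Type) [Fintype B] [Nonempty B] (d m : ℕ)
    (hd : 0 < d) :
    ∃ n : ℕ, ∀ C : (Fin n → B) → Fin d,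
      ∃ w₀ : Fin n → B ⊕ Fin m,
        (∀ j : Fin m, ∃ i : Fin n, w₀ i = Sum.inr j) ∧
        (∀ l : ℕ, ∀ j j' : Fin m, j' ≤ j →
          (∃ i : Fin n, (i : ℕ) < l ∧ w₀ i = Sum.inr j) →
          ∃ i : Fin n, (i : ℕ) < l ∧ w₀ i = Sum.inr j') ∧
        ∃ c : Fin d, ∀ v : B ⊕ Fin m → B, (∀ b : B, v (Sum.inl b) = b) →
          C (v ∘ w₀) = c := by
  classical
  obtain ⟨ι, _ιfin, hι⟩ :=
    Combinatorics.Line.exists_mono_in_high_dimension (Fin m → B) (Fin d)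
  set N := Fintype.card ι with hN
  let e : ι ≃ Fin N := Fintype.equivFin ι
  refine ⟨N * m, fun C => ?_⟩
  -- block and position within block
  have hm : ∀ i : Fin (N * m), (0 : ℕ) < m := fun i =>
    Nat.pos_of_ne_zero (by rintro rfl; exact absurd i.isLt (by simp))
  let q : Fin (N * m) → Fin N := fun i =>
    ⟨(i : ℕ) / m, Nat.div_lt_of_lt_mul (Nat.lt_of_lt_of_eq i.isLt (Nat.mul_comm N m))⟩
  let r : Fin (N * m) → Fin m := fun i => ⟨(i : ℕ) % m, Nat.mod_lt _ (hm i)⟩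
  -- the induced coloring on (ι → (Fin m → B))
  let C' : (ι → (Fin m → B)) → Fin d := fun g => C fun i => g (e.symm (q i)) (r i)
  obtain ⟨l, c, hl⟩ := hι C'
  -- define the variable word
  refine ⟨fun i =>
    match l.idxFun (e.symm (q i)) with
    | some a => Sum.inl (a (r i))
    | none => Sum.inr (r i), ?_, ?_, ?_⟩
  · -- every variable occurs
    intro j
    obtain ⟨io, hio⟩ := l.proper
    have hNm : m * (e io : ℕ) + (j : ℕ) < N * m := by
      have h1 : (e io : ℕ) < N := (e io).isLt
      calc m * (e io : ℕ) + (j : ℕ) < m * (e io : ℕ) + m := by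
            exact Nat.add_lt_add_left j.isLt _
        _ = m * ((e io : ℕ) + 1) := by ring
        _ ≤ m * N := Nat.mul_le_mul_left _ h1
        _ = N * m := Nat.mul_comm _ _
    refine ⟨⟨m * (e io : ℕ) + (j : ℕ), hNm⟩, ?_⟩
    have hq : q ⟨m * (e io : ℕ) + (j : ℕ), hNm⟩ = e io := by
      have hj : (j : ℕ) < m := j.isLt
      have hm0 : 0 < m := Nat.lt_of_le_of_lt (Nat.zero_le _) hj
      simp only [q]
      ext
      simp only
      rw [Nat.mul_add_div hm0, Nat.div_eq_of_lt hj, Nat.add_zero]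
    have hr : r ⟨m * (e io : ℕ) + (j : ℕ), hNm⟩ = j := by
      simp only [r]
      ext
      simp [Nat.mul_add_mod, Nat.mod_eq_of_lt j.isLt]
    simp only [hq, hr, Equiv.symm_apply_apply, hio]
  · -- initial segment condition
    intro L j j' hjj' ⟨i, hiL, hi⟩
    -- from hi, the block at position i is a wildcard and r i = j
    have hnone : l.idxFun (e.symm (q i)) = none ∧ r i = j := by
      rcases h : l.idxFun (e.symm (q i)) with _ | a
      · simp only [h] at hi
        exact ⟨rfl, by injection hi⟩
      · simp only [h] at hi; exact absurd hi (by simp)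
    obtain ⟨hn, hrj⟩ := hnone
    have hidec : (i : ℕ) = m * ((i : ℕ) / m) + (i : ℕ) % m :=
      (Nat.div_add_mod _ _).symm ▸ by omega
    have hrj' : (i : ℕ) % m = (j : ℕ) := congrArg Fin.val hrj
    have hj'j : (j' : ℕ) ≤ (j : ℕ) := hjj'
    have hi'lt : m * ((i : ℕ) / m) + (j' : ℕ) < N * m := by
      have : m * ((i : ℕ) / m) + (j' : ℕ) ≤ (i : ℕ) := by omega
      exact lt_of_le_of_lt this i.isLt
    refine ⟨⟨m * ((i : ℕ) / m) + (j' : ℕ), hi'lt⟩, by show m * ((i : ℕ) / m) + (j' : ℕ) < L; omega, ?_⟩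
    have hq : q ⟨m * ((i : ℕ) / m) + (j' : ℕ), hi'lt⟩ = q i := by
      simp only [q]
      ext
      simp only
      rw [Nat.mul_add_div (hm i), Nat.div_eq_of_lt j'.isLt, Nat.add_zero]
    have hr : r ⟨m * ((i : ℕ) / m) + (j' : ℕ), hi'lt⟩ = j' := by
      simp only [r]
      ext
      simp [Nat.mul_add_mod, Nat.mod_eq_of_lt j'.isLt]
    simp only [hq, hr, hn]
  · -- monochromaticity
    refine ⟨c, fun v hv => ?_⟩
    have := hl fun k => v (Sum.inr k)
    rw [← this]
    simp only [C']
    congr 1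
    funext i
    rcases h : l.idxFun (e.symm (q i)) with _ | a
    · simp only [Function.comp, h, Combinatorics.Line.apply_def, Option.getD_none]
    · simp only [Function.comp, h, Combinatorics.Line.apply_def, Option.getD_some, hv]
end
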